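/- arXiv:2103.05830 — 13 statements merged into one kernel-verified Lean document; each statement's English description precedes it below -/
import Mathlib

section
/- For all positive integers n, the sum over k from 0 to n-1 of (2k+1)·A_k(x) equals n times the sum over k from 0 to n-1 of C(n-1,k)·C(n+k,k)·C(n+k,2k+1)·C(2k,k)·x^k, where A_k(x) is the Apéry polynomial. -/
open Finset

/-- The Apéry polynomial `A_n(x) = ∑_{k=0}^n C(n,k)^2 C(n+k,k)^2 x^k`. -/
def aperyPoly (n : ℕ) (x : ℚ) : ℚ :=
  ∑ k ∈ Finset.range (n + 1),
    ((n.choose k : ℚ)) ^ 2 * (((n + k).choose k : ℚ)) ^ 2 * x ^ k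

/-- `(n+1-j) C(n+1,j) = (n+1) C(n,j)` over ℚ. -/
lemma q1 (n j : ℕ) : ((n : ℚ) + 1 - j) * ((n+1).choose j : ℚ) = ((n : ℚ) + 1) * (n.choose j : ℚ) := by
  rcases le_or_gt j (n+1) with h | h
  · have := Nat.choose_mul_succ_eq n j
    have hc : (((n+1) - j : ℕ) : ℚ) = (n : ℚ) + 1 - j := by
      rw [Nat.cast_sub h]; push_cast; ring
    have := congrArg (fun m : ℕ => (m : ℚ)) this
    push_cast at this
    rw [← hc]
    push_cast
    linarith [this]
  · rw [Nat.choose_eq_zero_of_lt h, Nat.choose_eq_zero_of_lt (by omega)]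
    push_cast; ring

/-- `(n+1) C(n+1+j,j) = (n+1+j) C(n+j,j)` over ℚ. -/
lemma q2 (n j : ℕ) : ((n : ℚ) + 1) * ((n+1+j).choose j : ℚ) = ((n : ℚ) + 1 + j) * ((n+j).choose j : ℚ) := by
  have h1 := Nat.add_one_mul_choose_eq (n+j) n
  have hs1 : (n+j).choose n = (n+j).choose j := by
    rw [← Nat.choose_symm (by omega : n ≤ n + j)]
    congr 1; omega
  have hs2 : (n+j+1).choose (n+1) = (n+1+j).choose j := by
    rw [show n+j+1 = n+1+j by ring, ← Nat.choose_symm (by omega : j ≤ n + 1 + j)]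
    congr 1; omega
  rw [hs1, hs2] at h1
  have := congrArg (fun m : ℕ => (m : ℚ)) h1
  push_cast at this
  linarith [this]

lemma lemA (j : ℕ) : ∀ n : ℕ,
    (2*(j:ℚ)+1) * ∑ k ∈ range n, (2*(k:ℚ)+1) * ((k.choose j : ℚ))^2 * (((k+j).choose j : ℚ))^2
      = ((n:ℚ) - j)^2 * ((n.choose j : ℚ))^2 * (((n+j).choose j : ℚ))^2 := by
  intro n
  induction n with
  | zero =>
    simp only [range_zero, sum_empty, mul_zero]
    rcases j with _ | j
    · norm_num
    · rw [Nat.choose_eq_zero_of_lt (by omega)]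
      push_cast; ring
  | succ n ih =>
    rw [sum_range_succ, mul_add, ih]
    have e1 : (((n:ℚ) + 1 - j) * ((n+1).choose j : ℚ))^2
        = (((n:ℚ) + 1) * (n.choose j : ℚ))^2 := by rw [q1]
    have e2 : (((n:ℚ) + 1) * ((n+1+j).choose j : ℚ))^2
        = (((n:ℚ) + 1 + j) * ((n+j).choose j : ℚ))^2 := by rw [q2]
    have hne : ((n:ℚ) + 1)^2 ≠ 0 := by positivity
    apply mul_left_cancel₀ hne
    push_cast
    linear_combination (-(((n:ℚ) + 1) * ((n+1+j).choose j : ℚ))^2) * e1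
      - (((n:ℚ) + 1) * (n.choose j : ℚ))^2 * e2

/-- coefficient identity for `j < n`. -/
lemma lemB (n j : ℕ) (hj : j < n) :
    ((n:ℚ) - j)^2 * ((n.choose j : ℚ))^2 * (((n+j).choose j : ℚ))^2
      = (2*(j:ℚ)+1) * n * (((n-1).choose j : ℚ) * ((n+j).choose j : ℚ)
          * ((n+j).choose (2*j+1) : ℚ) * ((2*j).choose j : ℚ)) := by
  obtain ⟨m, rfl⟩ : ∃ m, n = m + 1 := ⟨n - 1, by omega⟩
  have hjm : j ≤ m := by omega
  -- (i) (n - j) C(n,j) = n C(n-1,j)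
  have i1 : ((m:ℚ) + 1 - j) * ((m+1).choose j : ℚ) = ((m:ℚ)+1) * (m.choose j : ℚ) := q1 m j
  -- (ii) (2j+1) C(n+j,2j+1) = (n-j) C(n+j,2j)
  have i2n := Nat.choose_succ_right_eq (m+1+j) (2*j)
  have hsub : m+1+j - 2*j = m+1-j := by omega
  rw [hsub] at i2n
  have i2 : ((m+1+j).choose (2*j+1) : ℚ) * (2*(j:ℚ)+1)
      = ((m+1+j).choose (2*j) : ℚ) * ((m:ℚ)+1-j) := by
    have := congrArg (fun t : ℕ => (t : ℚ)) i2n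
    push_cast [Nat.cast_sub (by omega : j ≤ m+1)] at this ⊢
    linarith [this]
  -- (iii) C(n+j,2j) C(2j,j) = C(n+j,j) C(n,j)
  have i3n := Nat.choose_mul (n := m+1+j) (show j ≤ 2*j by omega)
  have h1 : m+1+j - j = m+1 := by omega
  have h2 : 2*j - j = j := by omega
  rw [h1, h2] at i3n
  have i3 : ((m+1+j).choose (2*j) : ℚ) * ((2*j).choose j : ℚ)
      = ((m+1+j).choose j : ℚ) * ((m+1).choose j : ℚ) := by exact_mod_cast i3n
  have hsimp : (m + 1 - 1 : ℕ) = m := by omega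
  rw [hsimp]
  push_cast
  linear_combination (((m:ℚ)+1-j) * ((m+1).choose j : ℚ) * ((m+1+j).choose j : ℚ)^2) * i1
    - (((m:ℚ)+1) * (m.choose j:ℚ) * ((m+1+j).choose j : ℚ) * ((2*j).choose j : ℚ)) * i2
    - (((m:ℚ)+1-j) * ((m:ℚ)+1) * (m.choose j:ℚ) * ((m+1+j).choose j : ℚ)) * i3

theorem sum_two_k_add_one_aperyPoly (n : ℕ) (hn : 0 < n) (x : ℚ) :
    ∑ k ∈ Finset.range n, (2 * (k : ℚ) + 1) * aperyPoly k x =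
      (n : ℚ) * ∑ k ∈ Finset.range n,
        ((n - 1).choose k : ℚ) * ((n + k).choose k : ℚ) *
          ((n + k).choose (2 * k + 1) : ℚ) * ((2 * k).choose k : ℚ) * x ^ k := by
  -- rewrite LHS as a double sum over range n × range n
  have hLHS : ∑ k ∈ Finset.range n, (2 * (k : ℚ) + 1) * aperyPoly k x
      = ∑ j ∈ Finset.range n, (∑ k ∈ Finset.range n,
          (2*(k:ℚ)+1) * ((k.choose j : ℚ))^2 * (((k+j).choose j : ℚ))^2) * x ^ j := by
    have step1 : ∑ k ∈ Finset.range n, (2 * (k : ℚ) + 1) * aperyPoly k x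
        = ∑ k ∈ Finset.range n, ∑ j ∈ Finset.range n,
            (2*(k:ℚ)+1) * ((k.choose j : ℚ))^2 * (((k+j).choose j : ℚ))^2 * x ^ j := by
      refine Finset.sum_congr rfl fun k hk => ?_
      rw [mem_range] at hk
      unfold aperyPoly
      rw [Finset.mul_sum,
        ← Finset.sum_subset (Finset.range_subset_range.2 (by omega : k + 1 ≤ n))]
      · exact Finset.sum_congr rfl fun j _ => by ring
      · intro j _ hj
        rw [mem_range, not_lt] at hj
        rw [Nat.choose_eq_zero_of_lt (by omega : k < j)]
        push_cast; ring
    rw [step1, Finset.sum_comm]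
    exact Finset.sum_congr rfl fun j _ => by rw [Finset.sum_mul]
  rw [hLHS, Finset.mul_sum]
  refine Finset.sum_congr rfl fun j hj => ?_
  rw [mem_range] at hj
  have key := lemA j n
  have h2j : (2*(j:ℚ)+1) ≠ 0 := by positivity
  have := lemB n j hj
  rw [this] at key
  have hc : ∑ k ∈ range n, (2*(k:ℚ)+1) * ((k.choose j : ℚ))^2 * (((k+j).choose j : ℚ))^2
      = (n:ℚ) * (((n-1).choose j : ℚ) * ((n+j).choose j : ℚ)
          * ((n+j).choose (2*j+1) : ℚ) * ((2*j).choose j : ℚ)) := by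
    apply mul_left_cancel₀ h2j
    linear_combination key
  rw [hc]; ring
end

section
/- For all positive integers n, \sum_{k=0}^{n-1}(2k+1)A_k(x) = \sum_{k=0}^{n-1} \frac{n^2}{2k+1} \binom{n-1}{k}^2 \binom{n+k}{k}^2 x^k. -/
open Finset

lemma apery_h1 (n k : ℕ) :
    (((n + 1 + k).choose k : ℚ)) * (n + 1) = ((n + k).choose k : ℚ) * (n + 1 + k) := by
  have := Nat.choose_mul_succ_eq (n + k) k
  have hsub : n + k + 1 - k = n + 1 := by omega
  rw [hsub] at this
  have : ((n + k).choose k * (n + k + 1) : ℕ) = ((n + k + 1).choose k * (n + 1) : ℕ) := this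
  have := congrArg (fun m : ℕ => (m : ℚ)) this
  push_cast at this
  rw [show n + 1 + k = n + k + 1 by ring]
  linarith

lemma apery_h2 (n k : ℕ) (hk : k ≤ n) :
    (((n - 1).choose k : ℚ)) * n = ((n).choose k : ℚ) * ((n : ℚ) - k) := by
  rcases Nat.eq_zero_or_pos n with rfl | hn
  · interval_cases k; simp
  · obtain ⟨m, rfl⟩ := Nat.exists_eq_succ_of_ne_zero hn.ne'
    have := Nat.choose_mul_succ_eq m k
    have := congrArg (fun t : ℕ => (t : ℚ)) this
    push_cast [Nat.succ_sub_one] at this ⊢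
    have hcast : ((m + 1 - k : ℕ) : ℚ) = (m : ℚ) + 1 - k := by
      have : k ≤ m + 1 := hk
      push_cast [Nat.cast_sub this]
      ring
    rw [hcast] at this
    linarith

lemma apery_key (n k : ℕ) (hk : k ≤ n) :
    ((n : ℚ) + 1) ^ 2 / (2 * k + 1) * ((n).choose k : ℚ) ^ 2 *
        (((n + 1 + k).choose k : ℚ)) ^ 2 =
      (n : ℚ) ^ 2 / (2 * k + 1) * (((n - 1).choose k : ℚ)) ^ 2 *
          ((n + k).choose k : ℚ) ^ 2 +
        (2 * n + 1) * ((n).choose k : ℚ) ^ 2 * ((n + k).choose k : ℚ) ^ 2 := by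
  have h1 := apery_h1 n k
  have h2 := apery_h2 n k hk
  have hd : (2 * (k : ℚ) + 1) ≠ 0 := by positivity
  field_simp
  linear_combination ((n.choose k : ℚ))^2 * (((n+1+k).choose k : ℚ) * ((n:ℚ)+1) + ((n+k).choose k : ℚ) * ((n:ℚ)+1+k)) * h1 - (((n+k).choose k : ℚ))^2 * (((n-1).choose k : ℚ) * n + (n.choose k : ℚ) * ((n:ℚ)-k)) * h2

lemma apery_aux (n : ℕ) (x : ℚ) :
    ∑ k ∈ Finset.range n, (2 * (k : ℚ) + 1) * aperyPoly k x =
      ∑ k ∈ Finset.range n,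
        (n : ℚ) ^ 2 / (2 * (k : ℚ) + 1) * ((n - 1).choose k : ℚ) ^ 2 *
          ((n + k).choose k : ℚ) ^ 2 * x ^ k := by
  induction n with
  | zero => simp
  | succ m ih =>
    rw [Finset.sum_range_succ, ih]
    have hext : ∑ k ∈ Finset.range m,
        (m : ℚ) ^ 2 / (2 * (k : ℚ) + 1) * ((m - 1).choose k : ℚ) ^ 2 *
          ((m + k).choose k : ℚ) ^ 2 * x ^ k
        = ∑ k ∈ Finset.range (m + 1),
        (m : ℚ) ^ 2 / (2 * (k : ℚ) + 1) * ((m - 1).choose k : ℚ) ^ 2 *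
          ((m + k).choose k : ℚ) ^ 2 * x ^ k := by
      rw [Finset.sum_range_succ]
      rcases Nat.eq_zero_or_pos m with rfl | hm
      · norm_num
      · have : (m - 1).choose m = 0 := Nat.choose_eq_zero_of_lt (by omega)
        rw [this]; push_cast; ring
    rw [hext, aperyPoly, Finset.mul_sum, ← Finset.sum_add_distrib]
    apply Finset.sum_congr rfl
    intro k hk
    have hk' : k ≤ m := by simpa using Nat.lt_succ_iff.mp (Finset.mem_range.mp hk)
    have := apery_key m k hk'
    push_cast [Nat.add_sub_cancel]
    linear_combination (-x ^ k) * this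

theorem sum_two_k_add_one_aperyPoly_eq (n : ℕ) (hn : 0 < n) (x : ℚ) :
    ∑ k ∈ Finset.range n, (2 * (k : ℚ) + 1) * aperyPoly k x =
      ∑ k ∈ Finset.range n,
        (n : ℚ) ^ 2 / (2 * (k : ℚ) + 1) * ((n - 1).choose k : ℚ) ^ 2 *
          ((n + k).choose k : ℚ) ^ 2 * x ^ k := by
  exact apery_aux n x
end

section
/- For all positive integers n, \sum_{k=0}^{n-1}(2k+1)^3 A_k = n^2 \sum_{k=0}^{n-1} \binom{n+k}{k}^2 \binom{n-1}{k}^2 \left(\frac{2n^2}{k+1} - 1\right), where A_k is the k-th Apéry number. -/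
open Finset

/-- The Apéry numbers `A_n = ∑_{k=0}^n C(n,k)^2 C(n+k,k)^2`. -/
def apery (n : ℕ) : ℕ :=
  ∑ k ∈ Finset.range (n + 1), (n.choose k) ^ 2 * ((n + k).choose k) ^ 2

lemma key (n j : ℕ) (hj : j ≤ n) :
    (n : ℚ) ^ 2 * (((n + j).choose j : ℚ) ^ 2 * ((n - 1).choose j : ℚ) ^ 2 *
        (2 * (n : ℚ) ^ 2 / ((j : ℚ) + 1) - 1))
      + (2 * (n : ℚ) + 1) ^ 3 * ((n.choose j : ℚ) ^ 2 * ((n + j).choose j : ℚ) ^ 2)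
    = ((n : ℚ) + 1) ^ 2 * (((n + 1 + j).choose j : ℚ) ^ 2 * (n.choose j : ℚ) ^ 2 *
        (2 * ((n : ℚ) + 1) ^ 2 / ((j : ℚ) + 1) - 1)) := by
  have h1 : ((n + j).choose j : ℚ) * ((n : ℚ) + (j : ℚ) + 1) =
      ((n + 1 + j).choose j : ℚ) * ((n : ℚ) + 1) := by
    have h := Nat.choose_mul_succ_eq (n + j) j
    have h' : n + j + 1 - j = n + 1 := by omega
    rw [h'] at h
    have h2 := congrArg (Nat.cast : ℕ → ℚ) h
    push_cast at h2
    have e : n + 1 + j = n + j + 1 := by omega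
    rw [e]
    linarith [h2]
  have h2 : ((n : ℚ)) * (((n - 1).choose j : ℚ)) = ((n : ℚ) - (j : ℚ)) * (n.choose j : ℚ) := by
    rcases Nat.eq_zero_or_pos n with h | h
    · subst h
      interval_cases j
      simp
    · have h0 := Nat.choose_mul_succ_eq (n - 1) j
      have e1 : n - 1 + 1 = n := by omega
      rw [e1] at h0
      have h3 := congrArg (Nat.cast : ℕ → ℚ) h0
      push_cast [Nat.cast_sub hj] at h3
      linarith [h3]
  have H1 : ((n : ℚ) + 1) ^ 2 * ((n + 1 + j).choose j : ℚ) ^ 2 =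
      ((n : ℚ) + (j : ℚ) + 1) ^ 2 * ((n + j).choose j : ℚ) ^ 2 := by
    linear_combination -(((n + j).choose j : ℚ) * ((n:ℚ) + (j:ℚ) + 1) +
      ((n + 1 + j).choose j : ℚ) * ((n:ℚ) + 1)) * h1
  have H2 : (n : ℚ) ^ 2 * ((n - 1).choose j : ℚ) ^ 2 =
      ((n : ℚ) - (j : ℚ)) ^ 2 * (n.choose j : ℚ) ^ 2 := by
    linear_combination ((n:ℚ) * ((n - 1).choose j : ℚ) + ((n:ℚ) - (j:ℚ)) * (n.choose j : ℚ)) * h2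
  have hd : ((j : ℚ) + 1) ≠ 0 := by positivity
  field_simp
  linear_combination (2 * (n:ℚ) ^ 2 - ((j:ℚ) + 1)) * ((n + j).choose j : ℚ) ^ 2 * H2
    - (2 * ((n:ℚ) + 1) ^ 2 - ((j:ℚ) + 1)) * (n.choose j : ℚ) ^ 2 * H1

theorem sum_two_k_add_one_cube_apery (n : ℕ) (hn : 0 < n) :
    ∑ k ∈ Finset.range n, (2 * (k : ℚ) + 1) ^ 3 * (apery k : ℚ) =
      (n : ℚ) ^ 2 * ∑ k ∈ Finset.range n,
        ((n + k).choose k : ℚ) ^ 2 * ((n - 1).choose k : ℚ) ^ 2 *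
          (2 * (n : ℚ) ^ 2 / ((k : ℚ) + 1) - 1) := by
  clear hn
  induction n with
  | zero => simp
  | succ n ih =>
    rw [Finset.sum_range_succ, ih]
    have hap : (apery n : ℚ) =
        ∑ j ∈ Finset.range (n + 1), (n.choose j : ℚ) ^ 2 * ((n + j).choose j : ℚ) ^ 2 := by
      rw [apery]; push_cast; rfl
    rw [hap, Finset.mul_sum, Finset.mul_sum, Finset.mul_sum]
    have hzero : (n : ℚ) ^ 2 * (((n + n).choose n : ℚ) ^ 2 * ((n - 1).choose n : ℚ) ^ 2 *
        (2 * (n : ℚ) ^ 2 / ((n : ℚ) + 1) - 1)) = 0 := by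
      rcases Nat.eq_zero_or_pos n with h | h
      · subst h; norm_num
      · have h0 : (n - 1).choose n = 0 := Nat.choose_eq_zero_of_lt (by omega)
        rw [h0]; push_cast; ring
    have hext : (∑ k ∈ Finset.range n, (n : ℚ) ^ 2 *
          (((n + k).choose k : ℚ) ^ 2 * ((n - 1).choose k : ℚ) ^ 2 *
            (2 * (n : ℚ) ^ 2 / ((k : ℚ) + 1) - 1)))
        = ∑ k ∈ Finset.range (n + 1), (n : ℚ) ^ 2 *
          (((n + k).choose k : ℚ) ^ 2 * ((n - 1).choose k : ℚ) ^ 2 *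
            (2 * (n : ℚ) ^ 2 / ((k : ℚ) + 1) - 1)) := by
      rw [Finset.sum_range_succ, hzero, add_zero]
    rw [hext, ← Finset.sum_add_distrib]
    refine Finset.sum_congr rfl fun j hj => ?_
    have hjn : j ≤ n := Nat.lt_succ_iff.mp (Finset.mem_range.mp hj)
    have hk := key n j hjn
    simp only [Nat.add_sub_cancel]
    push_cast
    linear_combination hk
end

section
/- For all positive integers n, \frac{(-1)^n}{n^2} \sum_{k=0}^{n-1}(3k+2)(-1)^k f_k = n \sum_{k=1}^{n} \binom{n-1}{k-1}^3 \frac{n^2-4k^2}{k^3} + 1, where f_k is the k-th Franel number. -/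
open Finset

/-- The Franel numbers `f_n = ∑_{k=0}^n C(n,k)^3`. -/
def franel (n : ℕ) : ℕ := ∑ k ∈ Finset.range (n + 1), (n.choose k) ^ 3

noncomputable def Pq (x y : ℚ) : ℚ :=
  4*y^3 - (18*x+30)*y^2 + (27*x^2+93*x+78)*y - (14*x^3+74*x^2+128*x+72)

noncomputable def Gq (n k : ℕ) : ℚ :=
  ((n+2).choose k : ℚ)^3 * (k:ℚ)^3 * Pq (n:ℚ) (k:ℚ) / (((n:ℚ)+1)*((n:ℚ)+2)^3)

lemma wz (n k : ℕ) :
    ((n:ℚ)+2)^2 * (((n+2).choose k : ℕ) : ℚ)^3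
      - (7*(n:ℚ)^2+21*(n:ℚ)+16) * (((n+1).choose k : ℕ) : ℚ)^3
      - 8*((n:ℚ)+1)^2 * ((n.choose k : ℕ) : ℚ)^3
    = Gq n (k+1) - Gq n k := by
  rcases le_or_gt k n with hk | hk
  · -- generic case k ≤ n
    obtain ⟨d, rfl⟩ : ∃ d, n = k + d := ⟨n - k, by omega⟩
    have e1 := Nat.choose_mul_succ_eq (k+d) k
    rw [(by omega : k + d + 1 - k = d + 1)] at e1
    have e2 := Nat.choose_mul_succ_eq (k+d+1) k
    rw [(by omega : k + d + 1 + 1 - k = d + 2),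
        (by omega : k + d + 1 + 1 = k + d + 2)] at e2
    have e3 := Nat.add_one_mul_choose_eq (k+d+1) k
    rw [(by omega : k + d + 1 + 1 = k + d + 2)] at e3
    have q1 := congrArg (fun x : ℕ => (x:ℚ)) e1
    have q2 := congrArg (fun x : ℕ => (x:ℚ)) e2
    have q3 := congrArg (fun x : ℕ => (x:ℚ)) e3
    push_cast at q1 q2 q3
    have hd1 : (d:ℚ)+1 ≠ 0 := by positivity
    have hd2 : (d:ℚ)+2 ≠ 0 := by positivity
    have hk1 : (k:ℚ)+1 ≠ 0 := by positivity
    have hb : ((k+d+1).choose k : ℚ)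
        = ((k+d).choose k : ℚ) * ((k:ℚ)+(d:ℚ)+1) / ((d:ℚ)+1) := by
      field_simp; linarith [q1]
    have he : ((k+d+2).choose k : ℚ)
        = ((k+d+1).choose k : ℚ) * ((k:ℚ)+(d:ℚ)+2) / ((d:ℚ)+2) := by
      field_simp; linarith [q2]
    have hv : ((k+d+2).choose (k+1) : ℚ)
        = ((k+d+1).choose k : ℚ) * ((k:ℚ)+(d:ℚ)+2) / ((k:ℚ)+1) := by
      field_simp; linarith [q3]
    rw [Gq, Gq, Pq, Pq]
    push_cast
    rw [he, hv, hb]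
    field_simp
    ring
  · -- k > n
    rcases (by omega : k = n+1 ∨ k = n+2 ∨ n+3 ≤ k) with rfl | h
    · have c0 : n.choose (n+1) = 0 := Nat.choose_eq_zero_of_lt (by omega)
      have c1 : (n+1).choose (n+1) = 1 := Nat.choose_self _
      have c2 : (n+2).choose (n+1) = n+2 := Nat.choose_succ_self_right _
      have c3 : (n+2).choose (n+1+1) = 1 := by
        rw [(by omega : n+1+1 = n+2)]; exact Nat.choose_self _
      rw [Gq, Gq, Pq, Pq, c0, c1, c2, c3]
      have h1 : (n:ℚ)+1 ≠ 0 := by positivity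
      have h2 : (n:ℚ)+2 ≠ 0 := by positivity
      push_cast
      field_simp
      ring
    · rcases h with rfl | h
      · have c0 : n.choose (n+2) = 0 := Nat.choose_eq_zero_of_lt (by omega)
        have c1 : (n+1).choose (n+2) = 0 := Nat.choose_eq_zero_of_lt (by omega)
        have c2 : (n+2).choose (n+2) = 1 := Nat.choose_self _
        have c3 : (n+2).choose (n+2+1) = 0 := Nat.choose_eq_zero_of_lt (by omega)
        rw [Gq, Gq, Pq, Pq, c0, c1, c2, c3]
        have h1 : (n:ℚ)+1 ≠ 0 := by positivity
        have h2 : (n:ℚ)+2 ≠ 0 := by positivity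
        push_cast
        field_simp
        ring
      · have c0 : n.choose k = 0 := Nat.choose_eq_zero_of_lt (by omega)
        have c1 : (n+1).choose k = 0 := Nat.choose_eq_zero_of_lt (by omega)
        have c2 : (n+2).choose k = 0 := Nat.choose_eq_zero_of_lt (by omega)
        have c3 : (n+2).choose (k+1) = 0 := Nat.choose_eq_zero_of_lt (by omega)
        rw [Gq, Gq, Pq, Pq, c0, c1, c2, c3]
        push_cast
        ring

noncomputable def fq (n : ℕ) : ℚ := ∑ k ∈ Finset.range (n+1), ((n.choose k : ℕ) : ℚ)^3

lemma franel_rec (n : ℕ) :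
    ((n:ℚ)+2)^2 * fq (n+2)
      = (7*(n:ℚ)^2+21*(n:ℚ)+16) * fq (n+1) + 8*((n:ℚ)+1)^2 * fq n := by
  have T := Finset.sum_range_sub (fun k => Gq n k) (n+3)
  have hG0 : Gq n 0 = 0 := by simp [Gq]
  have hGtop : Gq n (n+3) = 0 := by
    simp [Gq, Nat.choose_eq_zero_of_lt (by omega : n+2 < n+3)]
  rw [hG0, hGtop] at T
  have T2 : ∑ k ∈ Finset.range (n+3),
      (((n:ℚ)+2)^2 * (((n+2).choose k : ℕ) : ℚ)^3
      - (7*(n:ℚ)^2+21*(n:ℚ)+16) * (((n+1).choose k : ℕ) : ℚ)^3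
      - 8*((n:ℚ)+1)^2 * ((n.choose k : ℕ) : ℚ)^3) = 0 := by
    rw [Finset.sum_congr rfl (fun k _ => wz n k)]; simpa using T
  have s2 : ∑ k ∈ Finset.range (n+3), (((n+2).choose k : ℕ) : ℚ)^3 = fq (n+2) := rfl
  have s1 : ∑ k ∈ Finset.range (n+3), (((n+1).choose k : ℕ) : ℚ)^3 = fq (n+1) := by
    rw [Finset.sum_range_succ, Nat.choose_eq_zero_of_lt (by omega : n+1 < n+2)]
    simp [fq]
  have s0 : ∑ k ∈ Finset.range (n+3), ((n.choose k : ℕ) : ℚ)^3 = fq n := by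
    rw [Finset.sum_range_succ, Finset.sum_range_succ,
      Nat.choose_eq_zero_of_lt (by omega : n < n+2),
      Nat.choose_eq_zero_of_lt (by omega : n < n+1)]
    simp [fq]
  simp only [Finset.sum_sub_distrib, ← Finset.mul_sum, s0, s1, s2] at T2
  linarith

noncomputable def Aq (s : ℕ) : ℚ :=
  ∑ j ∈ Finset.range (s+1), ((s.choose j : ℕ) : ℚ)^2 * ((s.choose (j+1) : ℕ) : ℚ)

lemma Aq_symm (s : ℕ) :
    ∑ j ∈ Finset.range (s+1), ((s.choose j : ℕ) : ℚ) * ((s.choose (j+1) : ℕ) : ℚ)^2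
      = Aq s := by
  rw [Finset.sum_range_succ, Nat.choose_eq_zero_of_lt (by omega : s < s+1)]
  rw [Aq, Finset.sum_range_succ, Nat.choose_eq_zero_of_lt (by omega : s < s+1)]
  simp only [Nat.cast_zero, mul_zero, zero_pow, add_zero, ne_eq, OfNat.ofNat_ne_zero,
    not_false_eq_true, mul_zero, zero_mul]
  rw [← Finset.sum_range_reflect]
  refine Finset.sum_congr rfl (fun j hj => ?_)
  simp only [Finset.mem_range] at hj
  have h1 : s.choose (s - 1 - j) = s.choose (j+1) := by
    rw [(by omega : s - 1 - j = s - (j+1))]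
    exact Nat.choose_symm (by omega)
  have h2 : s.choose (s - 1 - j + 1) = s.choose j := by
    rw [(by omega : s - 1 - j + 1 = s - j)]
    exact Nat.choose_symm (by omega)
  rw [h1, h2]; ring

lemma cube_expand (s : ℕ) : fq (s+1) = 2 * fq s + 6 * Aq s := by
  have expand : ∀ j ∈ Finset.range (s+1),
      (((s+1).choose (j+1) : ℕ) : ℚ)^3
        = ((s.choose j : ℕ) : ℚ)^3 + ((s.choose (j+1) : ℕ) : ℚ)^3
          + 3 * (((s.choose j : ℕ) : ℚ)^2 * ((s.choose (j+1) : ℕ) : ℚ))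
          + 3 * (((s.choose j : ℕ) : ℚ) * ((s.choose (j+1) : ℕ) : ℚ)^2) := by
    intro j _
    have := Nat.choose_succ_succ s j
    have q := congrArg (fun x : ℕ => (x:ℚ)) this
    push_cast at q
    rw [q]; ring
  have h1 : fq (s+1) = (∑ j ∈ Finset.range (s+1), (((s+1).choose (j+1) : ℕ) : ℚ)^3) + 1 := by
    rw [fq, Finset.sum_range_succ']; simp
  rw [h1, Finset.sum_congr rfl expand]
  simp only [Finset.sum_add_distrib, ← Finset.mul_sum]
  have h2 : ∑ j ∈ Finset.range (s+1), ((s.choose (j+1) : ℕ) : ℚ)^3 = fq s - 1 := by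
    have := Finset.sum_range_succ' (fun j => ((s.choose j : ℕ) : ℚ)^3) (s+1)
    have htop : ∑ k ∈ Finset.range (s+1+1), ((s.choose k : ℕ) : ℚ)^3 = fq s := by
      rw [Finset.sum_range_succ, Nat.choose_eq_zero_of_lt (by omega : s < s+1)]
      simp [fq]
    rw [htop] at this
    simp only [Nat.choose_zero_right, Nat.cast_one, one_pow] at this
    linarith
  rw [h2, Aq_symm]
  show fq s + (fq s - 1) + 3 * Aq s + 3 * Aq s + 1 = 2 * fq s + 6 * Aq s
  ring

lemma M2_formula (s : ℕ) :
    ∑ i ∈ Finset.range (s+2), (((s+1).choose i : ℕ) : ℚ)^3 * (i:ℚ)^2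
      = ((s:ℚ)+1)^2 * (fq (s+1) + 4 * fq s) / 6 := by
  rw [Finset.sum_range_succ']
  simp only [Nat.cast_zero, zero_pow, mul_zero, add_zero, ne_eq, OfNat.ofNat_ne_zero,
    not_false_eq_true]
  have key : ∀ i ∈ Finset.range (s+1),
      (((s+1).choose (i+1) : ℕ) : ℚ)^3 * ((i:ℚ)+1)^2
        = ((s:ℚ)+1)^2 * (((s.choose i : ℕ) : ℚ)^2 * (((s+1).choose (i+1) : ℕ) : ℚ)) := by
    intro i _
    have := Nat.add_one_mul_choose_eq s i
    have q := congrArg (fun x : ℕ => (x:ℚ)) this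
    push_cast at q
    calc (((s+1).choose (i+1) : ℕ) : ℚ)^3 * ((i:ℚ)+1)^2
        = ((((i:ℚ)+1) * (((s+1).choose (i+1) : ℕ) : ℚ))^2) * (((s+1).choose (i+1) : ℕ) : ℚ) := by
          ring
      _ = ((((s:ℚ)+1) * ((s.choose i : ℕ) : ℚ))^2) * (((s+1).choose (i+1) : ℕ) : ℚ) := by
          rw [(by linarith [q] : ((i:ℚ)+1) * (((s+1).choose (i+1) : ℕ) : ℚ)
            = ((s:ℚ)+1) * ((s.choose i : ℕ) : ℚ))]
      _ = ((s:ℚ)+1)^2 * (((s.choose i : ℕ) : ℚ)^2 * (((s+1).choose (i+1) : ℕ) : ℚ)) := by ring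
  have congr1 : ∑ i ∈ Finset.range (s+1), (((s+1).choose (i+1) : ℕ) : ℚ)^3 * (((i:ℕ):ℚ)+1)^2
      = ((s:ℚ)+1)^2 * ∑ i ∈ Finset.range (s+1),
          ((s.choose i : ℕ) : ℚ)^2 * (((s+1).choose (i+1) : ℕ) : ℚ) := by
    rw [Finset.mul_sum]; exact Finset.sum_congr rfl key
  have expand2 : ∀ i ∈ Finset.range (s+1),
      ((s.choose i : ℕ) : ℚ)^2 * (((s+1).choose (i+1) : ℕ) : ℚ)
        = ((s.choose i : ℕ) : ℚ)^3 + ((s.choose i : ℕ) : ℚ)^2 * ((s.choose (i+1) : ℕ) : ℚ) := by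
    intro i _
    have q := congrArg (fun x : ℕ => (x:ℚ)) (Nat.choose_succ_succ s i)
    push_cast at q
    rw [q]; ring
  have push1 : ∀ i : ℕ, ((i:ℚ)+1)^2 = (((i+1 : ℕ)):ℚ)^2 := by intro i; push_cast; ring
  simp only [← push1] at *
  rw [congr1, Finset.sum_congr rfl expand2, Finset.sum_add_distrib]
  have : ∑ i ∈ Finset.range (s+1), ((s.choose i : ℕ) : ℚ)^3 = fq s := rfl
  rw [this]
  have hA : ∑ i ∈ Finset.range (s+1),
      ((s.choose i : ℕ) : ℚ)^2 * ((s.choose (i+1) : ℕ) : ℚ) = Aq s := rfl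
  rw [hA]
  have hc := cube_expand s
  linear_combination (-((s:ℚ)+1)^2/6) * hc

noncomputable def Wq (m : ℕ) : ℚ :=
  ∑ k ∈ Finset.range (m+1), ((m.choose k : ℕ) : ℚ)^3 * ((m:ℚ)^2 - 4*(k:ℚ)^2)

lemma Wq_formula (s : ℕ) : Wq (s+1) = ((s:ℚ)+1)^2 * (fq (s+1) - 8 * fq s) / 3 := by
  have split : Wq (s+1) = ((s:ℚ)+1)^2 * fq (s+1)
      - 4 * ∑ i ∈ Finset.range (s+2), (((s+1).choose i : ℕ) : ℚ)^3 * (i:ℚ)^2 := by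
    rw [Wq, fq]
    rw [Finset.sum_congr rfl (fun k (_ : k ∈ Finset.range (s+1+1)) =>
      (by push_cast; ring :
        (((s+1).choose k : ℕ) : ℚ)^3 * (((s+1:ℕ):ℚ)^2 - 4*(k:ℚ)^2)
          = ((s:ℚ)+1)^2 * (((s+1).choose k : ℕ) : ℚ)^3
            - 4 * ((((s+1).choose k : ℕ) : ℚ)^3 * (k:ℚ)^2)))]
    rw [Finset.sum_sub_distrib, ← Finset.mul_sum, ← Finset.mul_sum]
  rw [split, M2_formula]
  ring

lemma key_identity (n : ℕ) :
    Wq (n+1) + Wq n + (3*(n:ℚ)+2) * fq n = 0 := by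
  rcases n with _ | s
  · norm_num [Wq, fq, Finset.sum_range_succ]
  · rw [Wq_formula, Wq_formula]
    have hr := franel_rec s
    push_cast
    linarith

lemma franel_cast (k : ℕ) : ((franel k : ℕ) : ℚ) = fq k := by
  rw [franel, fq]; push_cast; rfl

lemma Lsum (n : ℕ) :
    ∑ k ∈ Finset.range n, (3*(k:ℚ)+2) * (-1:ℚ)^k * ((franel k : ℕ) : ℚ)
      = (-1:ℚ)^n * Wq n := by
  induction n with
  | zero => simp [Wq]
  | succ m ih =>
    rw [Finset.sum_range_succ, ih, franel_cast, pow_succ]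
    linear_combination ((-1:ℚ))^m * key_identity m

theorem franel_sum_identity (n : ℕ) (hn : 0 < n) :
    (-1 : ℚ) ^ n / (n : ℚ) ^ 2 *
        ∑ k ∈ Finset.range n, (3 * (k : ℚ) + 2) * (-1 : ℚ) ^ k * (franel k : ℚ) =
      (n : ℚ) * ∑ k ∈ Finset.Icc 1 n,
          ((n - 1).choose (k - 1) : ℚ) ^ 3 * (((n : ℚ) ^ 2 - 4 * (k : ℚ) ^ 2) / (k : ℚ) ^ 3)
        + 1 := by
  obtain ⟨m, rfl⟩ : ∃ m, n = m + 1 := ⟨n - 1, by omega⟩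
  rw [Lsum]
  have hm1 : ((m:ℚ)+1) ≠ 0 := by positivity
  -- rewrite the RHS sum
  have hIcc : Finset.Icc 1 (m+1) = Finset.Ico 1 (m+2) := rfl
  have hS : ∑ k ∈ Finset.Icc 1 (m+1),
      (((m+1-1).choose (k-1) : ℕ) : ℚ)^3 * (((((m+1:ℕ)):ℚ)^2 - 4*(k:ℚ)^2) / (k:ℚ)^3)
      = ∑ i ∈ Finset.range (m+1),
        ((m.choose i : ℕ) : ℚ)^3 * ((((m:ℚ)+1)^2 - 4*((i:ℚ)+1)^2) / ((i:ℚ)+1)^3) := by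
    rw [hIcc, Finset.sum_Ico_eq_sum_range]
    refine Finset.sum_congr (by norm_num) (fun i _ => ?_)
    rw [(by omega : 1 + i - 1 = i), (by omega : m + 1 - 1 = m)]
    push_cast
    ring
  have hW : Wq (m+1) = ((m:ℚ)+1)^2
      + ∑ i ∈ Finset.range (m+1),
        (((m+1).choose (i+1) : ℕ) : ℚ)^3 * (((m:ℚ)+1)^2 - 4*((i:ℚ)+1)^2) := by
    rw [Wq, Finset.sum_range_succ']
    simp only [Nat.choose_zero_right, Nat.cast_one, Nat.cast_zero, Nat.cast_ofNat]
    push_cast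
    ring
  have hterm : ∀ i ∈ Finset.range (m+1),
      ((m:ℚ)+1)^3 * (((m.choose i : ℕ) : ℚ)^3 * ((((m:ℚ)+1)^2 - 4*((i:ℚ)+1)^2) / ((i:ℚ)+1)^3))
        = (((m+1).choose (i+1) : ℕ) : ℚ)^3 * (((m:ℚ)+1)^2 - 4*((i:ℚ)+1)^2) := by
    intro i _
    have q := congrArg (fun x : ℕ => (x:ℚ)) (Nat.add_one_mul_choose_eq m i)
    push_cast at q
    have hi1 : ((i:ℚ)+1) ≠ 0 := by positivity
    field_simp
    linear_combination (((m:ℚ)+1)^2 - 4*((i:ℚ)+1)^2)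
      * (((m:ℚ)+1)^2 * ((m.choose i : ℕ):ℚ)^2
        + ((m:ℚ)+1) * ((m.choose i : ℕ):ℚ) * (((m+1).choose (i+1) : ℕ):ℚ) * ((i:ℚ)+1)
        + (((m+1).choose (i+1) : ℕ):ℚ)^2 * ((i:ℚ)+1)^2) * q
  have hSW : ((m:ℚ)+1)^3 * (∑ i ∈ Finset.range (m+1),
        ((m.choose i : ℕ) : ℚ)^3 * ((((m:ℚ)+1)^2 - 4*((i:ℚ)+1)^2) / ((i:ℚ)+1)^3))
      = Wq (m+1) - ((m:ℚ)+1)^2 := by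
    rw [Finset.mul_sum, Finset.sum_congr rfl hterm, hW]
    ring
  have goal_sum : ∑ k ∈ Finset.Icc 1 (m+1),
      (((m+1-1).choose (k-1) : ℕ) : ℚ)^3 * (((((m+1:ℕ)):ℚ)^2 - 4*(k:ℚ)^2) / (k:ℚ)^3)
      = (Wq (m+1) - ((m:ℚ)+1)^2) / ((m:ℚ)+1)^3 := by
    rw [hS, eq_div_iff (by positivity : ((m:ℚ)+1)^3 ≠ 0)]
    linear_combination hSW
  rw [goal_sum]
  have hpow : (-1:ℚ)^(m+1) / ((m+1:ℕ):ℚ)^2 * ((-1:ℚ)^(m+1) * Wq (m+1))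
      = Wq (m+1) / ((m:ℚ)+1)^2 := by
    push_cast
    rw [div_mul_eq_mul_div, ← mul_assoc, ← mul_pow]
    norm_num
  rw [hpow]
  push_cast
  field_simp
  ring
end

section
/- Let p be a prime, and let n, k, r be positive integers. Then \binom{p^r n - 1}{k} \equiv \binom{p^{r-1} n - 1}{\lfloor k/p \rfloor} (-1)^{k - \lfloor k/p \rfloor} \left(1 - n p^r \sum_{j=1, p \nmid j}^{k} \frac{1}{j}\right) \pmod{p^{2r}}. -/
open Finset

private lemma choose_cast_mul {K : Type*} [Field K] [CharZero K] (N : ℕ) (hN : 1 ≤ N) (k : ℕ) :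
    (((N - 1).choose k : ℕ) : K) * ∏ j ∈ Icc 1 k, (j : K) = ∏ j ∈ Icc 1 k, ((N : K) - j) := by
  induction k with
  | zero => simp
  | succ k ih =>
    rw [Finset.prod_Icc_succ_top (by omega) (fun j => (j : K)),
        Finset.prod_Icc_succ_top (by omega) (fun j => ((N : K) - j))]
    by_cases hkN : k < N
    · have h1 : (((N - 1).choose (k + 1) : ℕ) : K) * ((k : K) + 1) =
          (((N - 1).choose k : ℕ) : K) * ((N : K) - ((k : K) + 1)) := by
        have h := Nat.choose_succ_right_eq (N - 1) k
        have hcast : (((N - 1).choose (k + 1) : ℕ) : K) * (((k + 1 : ℕ)) : K) =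
            (((N - 1).choose k : ℕ) : K) * ((((N - 1) - k : ℕ)) : K) := by
          rw [← Nat.cast_mul, ← Nat.cast_mul, h]
        rw [Nat.cast_sub (by omega : k ≤ N - 1), Nat.cast_sub hN] at hcast
        push_cast at hcast ⊢
        linear_combination hcast
      push_cast
      calc (((N - 1).choose (k + 1) : ℕ) : K) * ((∏ j ∈ Icc 1 k, (j : K)) * ((k : K) + 1))
          = ((((N - 1).choose (k + 1) : ℕ) : K) * ((k : K) + 1)) * ∏ j ∈ Icc 1 k, (j : K) := by
            ring
        _ = ((((N - 1).choose k : ℕ) : K) * ∏ j ∈ Icc 1 k, (j : K)) *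
              ((N : K) - ((k : K) + 1)) := by rw [h1]; ring
        _ = (∏ j ∈ Icc 1 k, ((N : K) - j)) * ((N : K) - ((k : K) + 1)) := by rw [ih]
    · have h0 : (∏ j ∈ Icc 1 k, ((N : K) - j)) = 0 := by
        rw [← ih, Nat.choose_eq_zero_of_lt (by omega)]; simp
      rw [Nat.choose_eq_zero_of_lt (by omega), h0]; simp

private lemma choose_eq_prod_div {K : Type*} [Field K] [CharZero K] (N : ℕ) (hN : 1 ≤ N)
    (k : ℕ) : (((N - 1).choose k : ℕ) : K) = ∏ j ∈ Icc 1 k, ((N : K) - j) / j := by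
  have hne : (∏ j ∈ Icc 1 k, (j : K)) ≠ 0 := by
    rw [Finset.prod_ne_zero_iff]
    intro j hj
    have : 1 ≤ j := (Finset.mem_Icc.mp hj).1
    exact_mod_cast Nat.cast_ne_zero.mpr (by omega)
  rw [Finset.prod_div_distrib, eq_div_iff hne, choose_cast_mul N hN k]

private lemma key_identity_s4 (p : ℕ) [Fact p.Prime] (n k r : ℕ) (hn : 0 < n) (hr : 0 < r) :
    ((p ^ r * n - 1).choose k : ℚ_[p]) =
      ((p ^ (r - 1) * n - 1).choose (k / p) : ℚ_[p]) *
        ∏ j ∈ (Icc 1 k).filter (fun j => ¬ p ∣ j),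
          (((p ^ r * n : ℕ) : ℚ_[p]) - j) / j := by
  have hp : p.Prime := Fact.out
  have hppos : 0 < p := hp.pos
  have hpK : (p : ℚ_[p]) ≠ 0 := Nat.cast_ne_zero.mpr hppos.ne'
  have hN : 1 ≤ p ^ r * n := Nat.mul_pos (pow_pos hppos r) hn
  have hM : 1 ≤ p ^ (r - 1) * n := Nat.mul_pos (pow_pos hppos (r - 1)) hn
  have hNpM : p ^ r * n = p * (p ^ (r - 1) * n) := by
    have h : r - 1 + 1 = r := by omega
    calc p ^ r * n = p ^ (r - 1 + 1) * n := by rw [h]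
      _ = p * (p ^ (r - 1) * n) := by rw [pow_succ]; ring
  rw [choose_eq_prod_div (p ^ r * n) hN k, choose_eq_prod_div (p ^ (r - 1) * n) hM (k / p)]
  rw [← Finset.prod_filter_mul_prod_filter_not (Icc 1 k) (fun j => p ∣ j)
    (fun j => (((p ^ r * n : ℕ) : ℚ_[p]) - j) / j)]
  congr 1
  refine Finset.prod_nbij' (fun j => j / p) (fun m => p * m) ?_ ?_ ?_ ?_ ?_
  · intro a ha
    rw [Finset.mem_filter, Finset.mem_Icc] at ha
    obtain ⟨⟨h1, h2⟩, m, rfl⟩ := ha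
    simp only [Nat.mul_div_cancel_left _ hppos, Finset.mem_Icc]
    have hm0 : m ≠ 0 := by rintro rfl; simp at h1
    refine ⟨by omega, (Nat.le_div_iff_mul_le hppos).mpr (by rwa [mul_comm])⟩
  · intro m hm
    rw [Finset.mem_Icc] at hm
    rw [Finset.mem_filter, Finset.mem_Icc]
    have hmk : m * p ≤ k := (Nat.le_div_iff_mul_le hppos).mp hm.2
    refine ⟨⟨Nat.mul_pos hppos hm.1, by rwa [mul_comm] at hmk⟩, ⟨m, rfl⟩⟩
  · intro a ha
    rw [Finset.mem_filter] at ha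
    obtain ⟨m, rfl⟩ := ha.2
    simp only [Nat.mul_div_cancel_left _ hppos]
  · intro m _; simp only [Nat.mul_div_cancel_left _ hppos]
  · intro a ha
    rw [Finset.mem_filter] at ha
    obtain ⟨m, rfl⟩ := ha.2
    simp only [Nat.mul_div_cancel_left _ hppos]
    rw [hNpM]
    push_cast
    rw [show (p : ℚ_[p]) * ((p : ℚ_[p]) ^ (r - 1) * n) - (p : ℚ_[p]) * m
        = (p : ℚ_[p]) * ((p : ℚ_[p]) ^ (r - 1) * n - m) by ring]
    rw [mul_div_mul_left _ _ hpK]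

private lemma prod_one_sub_norm_le (p : ℕ) [Fact p.Prime] (S : Finset ℕ) (x : ℕ → ℚ_[p])
    (ε : ℝ) (hε0 : 0 ≤ ε) (hε1 : ε ≤ 1) (hx : ∀ j ∈ S, ‖x j‖ ≤ ε) :
    ‖(∏ j ∈ S, (1 - x j)) - 1‖ ≤ ε := by
  classical
  revert hx
  induction S using Finset.cons_induction with
  | empty => intro _; simpa using hε0
  | cons a s ha ih =>
    intro hx
    rw [Finset.prod_cons]
    have hP1 : ‖(∏ j ∈ s, (1 - x j)) - 1‖ ≤ ε := ih (fun j hj => hx j (Finset.mem_cons_of_mem hj))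
    have hP : ‖∏ j ∈ s, (1 - x j)‖ ≤ 1 := by
      have := Padic.nonarchimedean ((∏ j ∈ s, (1 - x j)) - 1) 1
      rw [sub_add_cancel] at this
      exact this.trans (max_le (hP1.trans hε1) norm_one.le)
    have hxa : ‖x a‖ ≤ ε := hx a (Finset.mem_cons_self a s)
    have e1 : (1 - x a) * (∏ j ∈ s, (1 - x j)) - 1 =
        ((∏ j ∈ s, (1 - x j)) - 1) + (-(x a * ∏ j ∈ s, (1 - x j))) := by ring
    rw [e1]
    refine (Padic.nonarchimedean _ _).trans (max_le hP1 ?_)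
    rw [norm_neg, norm_mul]
    calc ‖x a‖ * ‖∏ j ∈ s, (1 - x j)‖ ≤ ε * 1 :=
      mul_le_mul hxa hP (norm_nonneg _) hε0
      _ = ε := mul_one ε

private lemma prod_one_sub_norm_le_sq (p : ℕ) [Fact p.Prime] (S : Finset ℕ) (x : ℕ → ℚ_[p])
    (ε : ℝ) (hε0 : 0 ≤ ε) (hε1 : ε ≤ 1) (hx : ∀ j ∈ S, ‖x j‖ ≤ ε) :
    ‖(∏ j ∈ S, (1 - x j)) - (1 - ∑ j ∈ S, x j)‖ ≤ ε ^ 2 := by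
  classical
  revert hx
  induction S using Finset.cons_induction with
  | empty => intro _; simpa using sq_nonneg ε
  | cons a s ha ih =>
    intro hx
    rw [Finset.prod_cons, Finset.sum_cons]
    have hx' : ∀ j ∈ s, ‖x j‖ ≤ ε := fun j hj => hx j (Finset.mem_cons_of_mem hj)
    have hIH : ‖(∏ j ∈ s, (1 - x j)) - (1 - ∑ j ∈ s, x j)‖ ≤ ε ^ 2 := ih hx'
    have hP1 : ‖(∏ j ∈ s, (1 - x j)) - 1‖ ≤ ε := prod_one_sub_norm_le p s x ε hε0 hε1 hx'
    have hxa : ‖x a‖ ≤ ε := hx a (Finset.mem_cons_self a s)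
    have e1 : (1 - x a) * (∏ j ∈ s, (1 - x j)) - (1 - (x a + ∑ j ∈ s, x j)) =
        ((∏ j ∈ s, (1 - x j)) - (1 - ∑ j ∈ s, x j)) +
          (-(x a * ((∏ j ∈ s, (1 - x j)) - 1))) := by ring
    rw [e1]
    refine (Padic.nonarchimedean _ _).trans (max_le hIH ?_)
    rw [norm_neg, norm_mul]
    calc ‖x a‖ * ‖(∏ j ∈ s, (1 - x j)) - 1‖ ≤ ε * ε :=
      mul_le_mul hxa hP1 (norm_nonneg _) hε0
      _ = ε ^ 2 := (sq ε).symm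

/-- Beukers' lemma: `C(p^r n - 1, k) ≡ C(p^{r-1} n - 1, ⌊k/p⌋) (-1)^{k-⌊k/p⌋}
(1 - n p^r ∑_{1≤j≤k, p∤j} 1/j)  (mod p^{2r})`, as a congruence in `ℚ_p` among
`p`-integral numbers. -/
theorem beukers_binom_congruence (p : ℕ) [Fact p.Prime] (n k r : ℕ)
    (hn : 0 < n) (hk : 0 < k) (hr : 0 < r) :
    ‖(((p ^ r * n - 1).choose k : ℚ_[p]) -
        ((p ^ (r - 1) * n - 1).choose (k / p) : ℚ_[p]) * (-1) ^ (k - k / p) *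
          (1 - (n : ℚ_[p]) * (p : ℚ_[p]) ^ r *
            ∑ j ∈ (Finset.Icc 1 k).filter (fun j => ¬ p ∣ j), ((j : ℚ_[p]))⁻¹))‖ ≤
      (p : ℝ) ^ (-(2 * (r : ℤ))) := by
  classical
  have hp : p.Prime := Fact.out
  have hppos : 0 < p := hp.pos
  have hpR : (0 : ℝ) < p := by exact_mod_cast hppos
  set S : Finset ℕ := (Finset.Icc 1 k).filter (fun j => ¬ p ∣ j) with hSdef
  set ε : ℝ := (p : ℝ) ^ (-(r : ℤ)) with hεdef
  have hε0 : 0 ≤ ε := by positivity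
  have hε1 : ε ≤ 1 := by
    rw [hεdef, zpow_neg, zpow_natCast]
    rw [inv_le_one_iff₀]
    right
    exact one_le_pow₀ (by exact_mod_cast hp.one_lt.le)
  set x : ℕ → ℚ_[p] := fun j => (n : ℚ_[p]) * (p : ℚ_[p]) ^ r * (j : ℚ_[p])⁻¹ with hxdef
  have hx : ∀ j ∈ S, ‖x j‖ ≤ ε := by
    intro j hj
    rw [hSdef, Finset.mem_filter, Finset.mem_Icc] at hj
    obtain ⟨⟨hj1, _⟩, hjnd⟩ := hj
    have hjnorm : ‖(j : ℚ_[p])‖ = 1 := by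
      have hle : ‖((j : ℤ) : ℚ_[p])‖ ≤ 1 := Padic.norm_int_le_one _
      have hnlt : ¬ ‖((j : ℤ) : ℚ_[p])‖ < 1 := by
        rw [Padic.norm_intCast_lt_one_iff]
        exact_mod_cast hjnd
      push_cast at hle hnlt
      linarith
    have hn1 : ‖(n : ℚ_[p])‖ ≤ 1 := by
      have := Padic.norm_int_le_one (p := p) (n : ℤ)
      push_cast at this
      exact this
    have hpr : ‖(p : ℚ_[p]) ^ r‖ = ε := by
      rw [norm_pow, Padic.norm_p, hεdef, zpow_neg, zpow_natCast, inv_pow]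
    rw [hxdef]
    simp only
    rw [norm_mul, norm_mul, hpr, norm_inv, hjnorm, inv_one, mul_one]
    calc ‖(n : ℚ_[p])‖ * ε ≤ 1 * ε := mul_le_mul_of_nonneg_right hn1 hε0
      _ = ε := one_mul ε
  -- rewrite the choose via the key identity
  have hkey := key_identity_s4 p n k r hn hr
  have hSprod : ∀ j ∈ S, (((p ^ r * n : ℕ) : ℚ_[p]) - j) / j = (-1) * (1 - x j) := by
    intro j hj
    rw [hSdef, Finset.mem_filter, Finset.mem_Icc] at hj
    have hj0 : (j : ℚ_[p]) ≠ 0 := Nat.cast_ne_zero.mpr (by omega)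
    rw [hxdef]
    push_cast
    field_simp
    ring
  have hcard : S.card = k - k / p := by
    have h1 : ((Finset.Icc 1 k).filter (fun j => p ∣ j)).card = k / p := by
      have : Finset.Icc 1 k = Finset.Ioc 0 k := by rw [← Finset.Icc_add_one_left_eq_Ioc, zero_add]
      rw [this]
      exact Nat.Ioc_filter_dvd_card_eq_div k p
    have h3 : (Finset.Icc 1 k).card = k := by rw [Nat.card_Icc]; omega
    rw [hSdef, Finset.filter_not, Finset.card_sdiff_of_subset (Finset.filter_subset _ _), h1, h3]
  have hprod_eq : (∏ j ∈ S, (((p ^ r * n : ℕ) : ℚ_[p]) - j) / j) =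
      (-1) ^ (k - k / p) * ∏ j ∈ S, (1 - x j) := by
    rw [Finset.prod_congr rfl hSprod, Finset.prod_mul_distrib, Finset.prod_const, hcard]
  have hdecomp : (((p ^ r * n - 1).choose k : ℚ_[p]) -
      ((p ^ (r - 1) * n - 1).choose (k / p) : ℚ_[p]) * (-1) ^ (k - k / p) *
        (1 - (n : ℚ_[p]) * (p : ℚ_[p]) ^ r * ∑ j ∈ S, (j : ℚ_[p])⁻¹)) =
      ((p ^ (r - 1) * n - 1).choose (k / p) : ℚ_[p]) * (-1) ^ (k - k / p) *
        ((∏ j ∈ S, (1 - x j)) - (1 - ∑ j ∈ S, x j)) := by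
    rw [hkey, hprod_eq]
    have : ∑ j ∈ S, x j = (n : ℚ_[p]) * (p : ℚ_[p]) ^ r * ∑ j ∈ S, (j : ℚ_[p])⁻¹ := by
      rw [Finset.mul_sum]
    rw [this]
    ring
  rw [hdecomp]
  have hA : ‖((p ^ (r - 1) * n - 1).choose (k / p) : ℚ_[p])‖ ≤ 1 := by
    have := Padic.norm_int_le_one (p := p) (((p ^ (r - 1) * n - 1).choose (k / p) : ℤ))
    push_cast at this
    exact this
  have hB : ‖((-1 : ℚ_[p])) ^ (k - k / p)‖ = 1 := by
    rw [norm_pow, norm_neg, norm_one, one_pow]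
  have hC : ‖(∏ j ∈ S, (1 - x j)) - (1 - ∑ j ∈ S, x j)‖ ≤ ε ^ 2 :=
    prod_one_sub_norm_le_sq p S x ε hε0 hε1 hx
  have hε2 : ε ^ 2 = (p : ℝ) ^ (-(2 * (r : ℤ))) := by
    rw [hεdef, ← zpow_natCast ((p : ℝ) ^ (-(r : ℤ))) 2, ← zpow_mul]
    congr 1
    push_cast
    ring
  rw [norm_mul, norm_mul, hB, mul_one]
  calc ‖((p ^ (r - 1) * n - 1).choose (k / p) : ℚ_[p])‖ *
        ‖(∏ j ∈ S, (1 - x j)) - (1 - ∑ j ∈ S, x j)‖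
      ≤ 1 * (ε ^ 2) := mul_le_mul hA hC (norm_nonneg _) zero_le_one
    _ = ε ^ 2 := one_mul _
    _ = (p : ℝ) ^ (-(2 * (r : ℤ))) := hε2
end

section
/- Let p be a prime and let n be an integer not divisible by p-1. Then for all integers r ≥ 0, \sum_{k=1, p \nmid k}^{p^r - 1} k^n \equiv 0 \pmod{p^r}, where for negative n the terms k^n are p-integral rationals. -/
open Finset

private lemma my_norm_nat_eq_one {p : ℕ} [Fact p.Prime] {k : ℕ} (hk : ¬ p ∣ k) :
    ‖(k : ℚ_[p])‖ = 1 := by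
  have h1 : ‖((k : ℤ) : ℚ_[p])‖ ≤ 1 := Padic.norm_int_le_one _
  have h2 : ¬ ‖((k : ℤ) : ℚ_[p])‖ < 1 := by
    rw [Padic.norm_intCast_lt_one_iff]
    exact_mod_cast hk
  push_cast at h1 h2 ⊢
  linarith [lt_or_eq_of_le h1]

private lemma my_pow_sub_pow_norm_le {p : ℕ} [Fact p.Prime] (x y : ℚ_[p]) (ε : ℝ)
    (h : ‖x - y‖ ≤ ε) (hx : ‖x‖ ≤ 1) (hy : ‖y‖ ≤ 1) (m : ℕ) :
    ‖x ^ m - y ^ m‖ ≤ ε := by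
  have hε : 0 ≤ ε := le_trans (norm_nonneg _) h
  induction m with
  | zero => simpa
  | succ m ih =>
    have hrw : x ^ (m + 1) - y ^ (m + 1) = x * (x ^ m - y ^ m) + (x - y) * y ^ m := by ring
    rw [hrw]
    refine le_trans (Padic.nonarchimedean _ _) (max_le ?_ ?_)
    · calc ‖x * (x ^ m - y ^ m)‖ = ‖x‖ * ‖x ^ m - y ^ m‖ := norm_mul _ _
        _ ≤ 1 * ε := mul_le_mul hx ih (norm_nonneg _) zero_le_one
        _ = ε := one_mul ε
    · calc ‖(x - y) * y ^ m‖ = ‖x - y‖ * ‖y ^ m‖ := norm_mul _ _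
        _ ≤ ε * 1 := mul_le_mul h
            (by simpa [norm_pow] using pow_le_one₀ (norm_nonneg y) hy) (norm_nonneg _) hε
        _ = ε := mul_one ε

private lemma my_zpow_sub_zpow_norm_le {p : ℕ} [Fact p.Prime] (x y : ℚ_[p]) (ε : ℝ)
    (h : ‖x - y‖ ≤ ε) (hx : ‖x‖ = 1) (hy : ‖y‖ = 1) (n : ℤ) :
    ‖x ^ n - y ^ n‖ ≤ ε := by
  obtain ⟨m, rfl | rfl⟩ := n.eq_nat_or_neg
  · rw [zpow_natCast, zpow_natCast]
    exact my_pow_sub_pow_norm_le x y ε h hx.le hy.le m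
  · have hx0 : x ≠ 0 := by intro h0; rw [h0] at hx; simp at hx
    have hy0 : y ≠ 0 := by intro h0; rw [h0] at hy; simp at hy
    rw [zpow_neg, zpow_neg, zpow_natCast, zpow_natCast]
    have key : (x ^ m)⁻¹ - (y ^ m)⁻¹ = (y ^ m - x ^ m) * ((x ^ m)⁻¹ * (y ^ m)⁻¹) := by
      field_simp
    rw [key, norm_mul, norm_mul, norm_inv, norm_inv, norm_pow, norm_pow, hx, hy]
    simpa using my_pow_sub_pow_norm_le y x ε (by rwa [norm_sub_rev]) hy.le hx.le m

private lemma my_norm_sum_le {p : ℕ} [Fact p.Prime] {ι : Type*} (s : Finset ι)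
    (f : ι → ℚ_[p]) (ε : ℝ) (hε : 0 ≤ ε) (h : ∀ i ∈ s, ‖f i‖ ≤ ε) :
    ‖∑ i ∈ s, f i‖ ≤ ε := by
  classical
  induction s using Finset.induction with
  | empty => simpa
  | insert _ _ hi ih =>
    rw [Finset.sum_insert hi]
    refine le_trans (Padic.nonarchimedean _ _) (max_le ?_ ?_)
    · exact h _ (Finset.mem_insert_self _ _)
    · exact ih fun i hi' => h i (Finset.mem_insert_of_mem hi')

theorem sum_zpow_congruence (p : ℕ) [Fact p.Prime] (n : ℤ)
    (hn : ¬ ((p : ℤ) - 1) ∣ n) (r : ℕ) :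
    ‖∑ k ∈ (Finset.Icc 1 (p ^ r - 1)).filter (fun k => ¬ p ∣ k), ((k : ℚ_[p])) ^ n‖ ≤
      (p : ℝ) ^ (-(r : ℤ)) := by
  have hp := (Fact.out : p.Prime)
  rcases Nat.eq_zero_or_pos r with rfl | hr
  · simp
  -- setup: m = |n|, not divisible by p - 1
  set m := n.natAbs with hm
  have hp1 : ¬ (p - 1) ∣ m := by
    intro hdvd
    apply hn
    have : ((p - 1 : ℕ) : ℤ) ∣ (m : ℤ) := Int.natCast_dvd_natCast.mpr hdvd
    rw [Nat.cast_sub hp.one_le] at this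
    exact Int.dvd_natAbs.mp this
  -- a generator of (ZMod p)ˣ whose m-th power is not 1
  obtain ⟨u, hu⟩ := IsCyclic.exists_generator (α := (ZMod p)ˣ)
  have horder : orderOf u = p - 1 := by
    rw [orderOf_eq_card_of_forall_mem_zpowers hu, Nat.card_eq_fintype_card,
      ZMod.card_units_eq_totient, Nat.totient_prime hp]
  have hum : u ^ m ≠ 1 := fun h => hp1 (horder ▸ orderOf_dvd_of_pow_eq_one h)
  set g := (u : ZMod p).val with hg
  have hgcast : ((g : ℕ) : ZMod p) = (u : ZMod p) := by
    rw [hg, ZMod.natCast_val, ZMod.cast_id]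
  have hgp : ¬ p ∣ g := by
    intro hdvd
    have hlt : g < p := ZMod.val_lt _
    have h0 : g = 0 := Nat.eq_zero_of_dvd_of_lt hdvd hlt
    have : (u : ZMod p) = 0 := by
      rw [← hgcast, h0, Nat.cast_zero]
    exact u.ne_zero this
  have hgnorm : ‖(g : ℚ_[p])‖ = 1 := my_norm_nat_eq_one hgp
  -- ‖g^m - 1‖ = 1
  have hgm : ‖(g : ℚ_[p]) ^ m - 1‖ = 1 := by
    have hrw : (g : ℚ_[p]) ^ m - 1 = (((g ^ m : ℤ) - 1 : ℤ) : ℚ_[p]) := by push_cast; ring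
    rw [hrw]
    refine le_antisymm (Padic.norm_int_le_one _) (not_lt.mp ?_)
    rw [Padic.norm_intCast_lt_one_iff]
    intro hdvd
    have : (((g ^ m : ℤ) - 1 : ℤ) : ZMod p) = 0 :=
      (ZMod.intCast_zmod_eq_zero_iff_dvd _ _).mpr hdvd
    push_cast at this
    have hu1 : (u : ZMod p) ^ m = 1 := by
      rw [← hgcast]
      linear_combination this
    exact hum (Units.ext (by simpa using hu1))
  -- ‖g^n - 1‖ = 1
  have hgn : ‖(g : ℚ_[p]) ^ n - 1‖ = 1 := by
    have hg0 : (g : ℚ_[p]) ≠ 0 := by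
      intro h0; rw [h0] at hgnorm; simp at hgnorm
    obtain ⟨m', hrfl | hrfl⟩ := n.eq_nat_or_neg
    · have : m = m' := by rw [hm, hrfl, Int.natAbs_natCast]
      rw [hrfl, zpow_natCast, ← this]
      exact hgm
    · have hmm : m = m' := by rw [hm, hrfl]; simp
      rw [hrfl, zpow_neg, zpow_natCast, ← hmm]
      have hne : (g : ℚ_[p]) ^ m ≠ 0 := pow_ne_zero _ hg0
      have key : ((g : ℚ_[p]) ^ m)⁻¹ - 1 = (1 - (g : ℚ_[p]) ^ m) * ((g : ℚ_[p]) ^ m)⁻¹ := by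
        field_simp
      rw [key, norm_mul, norm_inv, norm_pow, hgnorm, norm_sub_rev]
      simpa using hgm
  -- the index set and the permutation
  set N := p ^ r with hN
  have hN0 : 0 < N := Nat.pow_pos hp.pos  -- may need rename
  set F := (Finset.Icc 1 (N - 1)).filter (fun k => ¬ p ∣ k) with hF
  have hmemF : ∀ k, k ∈ F ↔ (¬ p ∣ k ∧ k < N) := by
    intro k
    rw [hF, Finset.mem_filter, Finset.mem_Icc]
    constructor
    · rintro ⟨⟨h1, h2⟩, h3⟩
      exact ⟨h3, lt_of_le_of_lt h2 (Nat.sub_lt hN0 one_pos)⟩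
    · rintro ⟨h1, h2⟩
      have hk0 : k ≠ 0 := by rintro rfl; exact h1 (dvd_zero p)
      exact ⟨⟨Nat.one_le_iff_ne_zero.mpr hk0, Nat.le_sub_one_of_lt h2⟩, h1⟩
  set σ : ℕ → ℕ := fun k => (g * k) % N with hσ
  have hgN : Nat.gcd N g = 1 := by
    rw [hN]
    exact Nat.Coprime.pow_left _ ((Nat.Prime.coprime_iff_not_dvd hp).mpr hgp)
  have hσmem : ∀ k ∈ F, σ k ∈ F := by
    intro k hk
    rw [hmemF] at hk ⊢
    constructor
    · have h1 : σ k % p = (g * k) % p := by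
        rw [hσ, hN, Nat.mod_mod_of_dvd _ (dvd_pow_self p hr.ne')]
      rw [Nat.dvd_iff_mod_eq_zero, h1, ← Nat.dvd_iff_mod_eq_zero]
      exact hp.not_dvd_mul hgp hk.1  -- may need fix
    · exact Nat.mod_lt _ hN0
  have hσinj : ∀ x ∈ F, ∀ y ∈ F, σ x = σ y → x = y := by
    intro x hx y hy hxy
    rw [hmemF] at hx hy
    have : g * x ≡ g * y [MOD N] := by
      rw [Nat.ModEq]
      exact hxy
    have := Nat.ModEq.cancel_left_of_coprime hgN this
    rw [Nat.ModEq, Nat.mod_eq_of_lt hx.2, Nat.mod_eq_of_lt hy.2] at this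
    exact this
  have himage : F.image σ = F := by
    apply Finset.eq_of_subset_of_card_le
    · intro j hj
      obtain ⟨k, hk, rfl⟩ := Finset.mem_image.mp hj
      exact hσmem k hk
    · rw [Finset.card_image_of_injOn hσinj]
  -- congruences
  have hσcong : ∀ k ∈ F, ‖((g * k : ℕ) : ℚ_[p]) - ((σ k : ℕ) : ℚ_[p])‖ ≤ (p : ℝ) ^ (-(r : ℤ)) := by
    intro k hk
    have hd : ((p : ℤ)) ^ r ∣ ((g * k : ℕ) : ℤ) - ((σ k : ℕ) : ℤ) := by
      have hle : σ k ≤ g * k := Nat.mod_le _ _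
      have hdN : N ∣ g * k - σ k := Nat.dvd_sub_mod _
      have h2 : ((N : ℕ) : ℤ) ∣ ((g * k - σ k : ℕ) : ℤ) := Int.natCast_dvd_natCast.mpr hdN
      rw [Nat.cast_sub hle, hN] at h2
      exact_mod_cast h2
    have hrw : ((g * k : ℕ) : ℚ_[p]) - ((σ k : ℕ) : ℚ_[p])
        = ((((g * k : ℕ) : ℤ) - ((σ k : ℕ) : ℤ) : ℤ) : ℚ_[p]) := by push_cast; ring
    rw [hrw]
    exact (Padic.norm_int_le_pow_iff_dvd _ _).mpr hd
  -- sums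
  set S := ∑ k ∈ F, ((k : ℚ_[p])) ^ n with hS
  have hT : ∑ k ∈ F, (((g * k : ℕ) : ℚ_[p])) ^ n = (g : ℚ_[p]) ^ n * S := by
    rw [hS, Finset.mul_sum]
    apply Finset.sum_congr rfl
    intro k hk
    rw [Nat.cast_mul, mul_zpow]
  have hfix : ∑ k ∈ F, (((σ k : ℕ) : ℚ_[p])) ^ n = S := by
    calc ∑ k ∈ F, (((σ k : ℕ) : ℚ_[p])) ^ n
        = ∑ j ∈ F.image σ, ((j : ℚ_[p])) ^ n := (Finset.sum_image (f := fun j : ℕ => ((j : ℚ_[p])) ^ n) hσinj).symm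
      _ = S := by rw [himage, hS]
  have hTS : ‖(g : ℚ_[p]) ^ n * S - S‖ ≤ (p : ℝ) ^ (-(r : ℤ)) := by
    rw [← hT]
    have : ∑ k ∈ F, (((g * k : ℕ) : ℚ_[p])) ^ n - S
        = ∑ k ∈ F, ((((g * k : ℕ) : ℚ_[p])) ^ n - (((σ k : ℕ) : ℚ_[p])) ^ n) := by
      rw [Finset.sum_sub_distrib, hfix]
    rw [this]
    apply my_norm_sum_le _ _ _ (by positivity)
    intro k hk
    have hk' := (hmemF k).mp hk
    have hσk' := (hmemF _).mp (hσmem k hk)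
    apply my_zpow_sub_zpow_norm_le _ _ _ (hσcong k hk)
    · exact my_norm_nat_eq_one (hp.not_dvd_mul hgp hk'.1) -- may need fix
    · exact my_norm_nat_eq_one hσk'.1
  calc ‖S‖ = ‖(g : ℚ_[p]) ^ n - 1‖ * ‖S‖ := by rw [hgn, one_mul]
    _ = ‖((g : ℚ_[p]) ^ n - 1) * S‖ := (norm_mul _ _).symm
    _ = ‖(g : ℚ_[p]) ^ n * S - S‖ := by ring_nf
    _ ≤ (p : ℝ) ^ (-(r : ℤ)) := hTS
end

section
/- Let p ≥ 5 be a prime and n an even integer with (p-1) ∤ n. Then for all integers r ≥ 0, \sum_{k=1, p \nmid k}^{(p^r-1)/2} \frac{1}{k^n} \equiv 0 \pmod{p^r}. -/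
open Finset

private lemma isUnit_of_castHom (p : ℕ) [Fact p.Prime] (r : ℕ) (hr : r ≠ 0) (x : ZMod (p^r))
    (h : IsUnit (ZMod.castHom (dvd_pow_self p hr) (ZMod p) x)) : IsUnit x := by
  have hp := (Fact.out : p.Prime)
  have : NeZero (p ^ r) := ⟨pow_ne_zero _ hp.ne_zero⟩
  have hx : ((x.val : ZMod (p^r))) = x := by
    rw [ZMod.natCast_val, ZMod.cast_id]
  rw [← hx] at h ⊢; rw [map_natCast] at h
  rw [ZMod.isUnit_iff_coprime x.val p] at h
  rw [ZMod.isUnit_iff_coprime x.val (p^r)]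
  exact Nat.Coprime.pow_right _ h

private lemma sum_units_zpow (p : ℕ) [Fact p.Prime] (n : ℤ) (hn : ¬ ((p : ℤ) - 1) ∣ n) (r : ℕ) (hr : r ≠ 0)
    (hIsU : ∀ x : ZMod (p^r), IsUnit (ZMod.castHom (dvd_pow_self p hr) (ZMod p) x) → IsUnit x) :
    ∑ u : (ZMod (p^r))ˣ, ((u ^ (-n) : (ZMod (p^r))ˣ) : ZMod (p^r)) = 0 := by
  have hp := (Fact.out : p.Prime)
  haveI : NeZero (p ^ r) := ⟨pow_ne_zero _ hp.ne_zero⟩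
  obtain ⟨g0, hg0⟩ := IsCyclic.exists_generator (α := (ZMod p)ˣ)
  obtain ⟨w, hw⟩ := ZMod.unitsMap_surjective (dvd_pow_self p hr) g0
  set S := ∑ u : (ZMod (p^r))ˣ, ((u ^ (-n) : (ZMod (p^r))ˣ) : ZMod (p^r)) with hS
  set c := (w ^ (-n) : (ZMod (p^r))ˣ) with hc
  have key : ((c : ZMod (p^r)) - 1) * S = 0 := by
    have h1 : ∑ u : (ZMod (p^r))ˣ, (((w * u) ^ (-n) : (ZMod (p^r))ˣ) : ZMod (p^r)) = S := by
      rw [hS]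
      exact Equiv.sum_comp (Equiv.mulLeft w) (fun u => ((u ^ (-n) : (ZMod (p^r))ˣ) : ZMod (p^r)))
    have h2 : ∀ u : (ZMod (p^r))ˣ, (((w * u) ^ (-n) : (ZMod (p^r))ˣ) : ZMod (p^r))
        = (c : ZMod (p^r)) * ((u ^ (-n) : (ZMod (p^r))ˣ) : ZMod (p^r)) := by
      intro u; rw [mul_zpow, Units.val_mul]
    rw [sub_mul, one_mul, sub_eq_zero]
    calc (c : ZMod (p^r)) * S = ∑ u : (ZMod (p^r))ˣ, (c : ZMod (p^r)) * ((u ^ (-n) : (ZMod (p^r))ˣ) : ZMod (p^r)) := by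
          rw [hS, Finset.mul_sum]
      _ = ∑ u : (ZMod (p^r))ˣ, (((w * u) ^ (-n) : (ZMod (p^r))ˣ) : ZMod (p^r)) :=
          Finset.sum_congr rfl (fun u _ => (h2 u).symm)
      _ = S := h1
  have hne1 : (g0 ^ (-n) : (ZMod p)ˣ) ≠ 1 := by
    intro h
    rw [← orderOf_dvd_iff_zpow_eq_one] at h
    rw [orderOf_eq_card_of_forall_mem_zpowers hg0, Nat.card_eq_fintype_card, ZMod.card_units] at h
    apply hn
    rw [← dvd_neg]
    have : ((p - 1 : ℕ) : ℤ) = (p : ℤ) - 1 := by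
      push_cast [Nat.one_le_iff_ne_zero.mpr hp.ne_zero]; ring
    rwa [this] at h
  have hcu : IsUnit ((c : ZMod (p^r)) - 1) := by
    apply hIsU
    have : (ZMod.castHom (dvd_pow_self p hr) (ZMod p)) ((c : ZMod (p^r)) - 1)
        = ((g0 ^ (-n) : (ZMod p)ˣ) : ZMod p) - 1 := by
      rw [map_sub, map_one]
      have : (ZMod.castHom (dvd_pow_self p hr) (ZMod p)) (c : ZMod (p^r))
          = ((ZMod.unitsMap (dvd_pow_self p hr) c : (ZMod p)ˣ) : ZMod p) := rfl
      rw [this, hc, map_zpow, hw]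
    rw [this, isUnit_iff_ne_zero, sub_ne_zero]
    intro h
    exact hne1 (Units.ext h)
  obtain ⟨v, hv⟩ := hcu
  rw [← hv, Units.mul_right_eq_zero] at key
  exact key

private noncomputable def F (p r : ℕ) (n : ℤ) (k : ℕ) : ZMod (p ^ r) :=
  if h : Nat.Coprime k (p ^ r) then
    ((ZMod.unitOfCoprime k h ^ (-n) : (ZMod (p ^ r))ˣ) : ZMod (p ^ r)) else 0

lemma F_eq_zero_of_not_coprime {p r : ℕ} {n : ℤ} {k : ℕ} (h : ¬ Nat.Coprime k (p ^ r)) :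
    F p r n k = 0 := dif_neg h

lemma F_eq_of_coprime {p r : ℕ} {n : ℤ} {k : ℕ} (h : Nat.Coprime k (p ^ r)) :
    F p r n k = ((ZMod.unitOfCoprime k h ^ (-n) : (ZMod (p ^ r))ˣ) : ZMod (p ^ r)) := dif_pos h

-- full sum over Icc equals sum over units
lemma sum_F_Icc (p : ℕ) [Fact p.Prime] (n : ℤ) (r : ℕ) (hr : r ≠ 0) :
    ∑ k ∈ Finset.Icc 1 (p ^ r - 1), F p r n k
      = ∑ u : (ZMod (p ^ r))ˣ, ((u ^ (-n) : (ZMod (p ^ r))ˣ) : ZMod (p ^ r)) := by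
  have hp := (Fact.out : p.Prime)
  haveI : NeZero (p ^ r) := ⟨pow_ne_zero _ hp.ne_zero⟩
  haveI : Fact (1 < p ^ r) := ⟨Nat.one_lt_pow hr hp.one_lt⟩
  rw [← Finset.sum_filter_of_ne (p := fun k => Nat.Coprime k (p ^ r))
      (fun k _ hk => by by_contra h; exact hk (F_eq_zero_of_not_coprime h))]
  refine Finset.sum_bij (fun k hk => ZMod.unitOfCoprime k (Finset.mem_filter.mp hk).2)
    (fun _ _ => Finset.mem_univ _) ?_ ?_ ?_
  · intro a ha b hb h
    have ha' := (Finset.mem_Icc.mp (Finset.mem_filter.mp ha).1)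
    have hb' := (Finset.mem_Icc.mp (Finset.mem_filter.mp hb).1)
    have h2 : ((a : ℕ) : ZMod (p ^ r)) = ((b : ℕ) : ZMod (p ^ r)) := by
      rw [← ZMod.coe_unitOfCoprime a (Finset.mem_filter.mp ha).2,
        ← ZMod.coe_unitOfCoprime b (Finset.mem_filter.mp hb).2, h]
    have hlt : 1 ≤ p ^ r := Nat.one_le_iff_ne_zero.mpr (pow_ne_zero _ hp.ne_zero)
    have := congrArg ZMod.val h2
    rwa [ZMod.val_cast_of_lt (by omega), ZMod.val_cast_of_lt (by omega)] at this
  · intro u _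
    refine ⟨(u : ZMod (p ^ r)).val, ?_, ?_⟩
    · rw [Finset.mem_filter, Finset.mem_Icc]
      refine ⟨⟨?_, ?_⟩, ZMod.val_coe_unit_coprime u⟩
      · have : (u : ZMod (p ^ r)) ≠ 0 := Units.ne_zero u
        have h0 : (u : ZMod (p ^ r)).val ≠ 0 := fun hv => this ((ZMod.val_eq_zero _).mp hv)
        omega
      · have := ZMod.val_lt (u : ZMod (p ^ r)); omega
    · apply Units.ext
      rw [ZMod.coe_unitOfCoprime, ZMod.natCast_val, ZMod.cast_id]
  · intro k hk
    rw [F_eq_of_coprime (Finset.mem_filter.mp hk).2]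

lemma F_pair (p : ℕ) [Fact p.Prime] (n : ℤ) (hne : Even n) (r : ℕ) (hr : r ≠ 0)
    {k : ℕ} (hk : k ≤ p ^ r) : F p r n (p ^ r - k) = F p r n k := by
  have hp := (Fact.out : p.Prime)
  haveI : NeZero (p ^ r) := ⟨pow_ne_zero _ hp.ne_zero⟩
  have hcast : ((p ^ r - k : ℕ) : ZMod (p ^ r)) = -(k : ZMod (p ^ r)) := by
    rw [Nat.cast_sub hk, ZMod.natCast_self, zero_sub]
  have hcop : Nat.Coprime (p ^ r - k) (p ^ r) ↔ Nat.Coprime k (p ^ r) := by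
    rw [← ZMod.isUnit_iff_coprime, ← ZMod.isUnit_iff_coprime, hcast, IsUnit.neg_iff]
  by_cases h : Nat.Coprime k (p ^ r)
  · rw [F_eq_of_coprime h, F_eq_of_coprime (hcop.mpr h)]
    have hu : ZMod.unitOfCoprime (p ^ r - k) (hcop.mpr h) = - ZMod.unitOfCoprime k h := by
      apply Units.ext
      rw [ZMod.coe_unitOfCoprime, Units.val_neg, ZMod.coe_unitOfCoprime, hcast]
    rw [hu, Even.neg_zpow hne.neg]
  · rw [F_eq_zero_of_not_coprime h, F_eq_zero_of_not_coprime (fun hc => h (hcop.mp hc))]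

lemma sum_F_half (p : ℕ) [Fact p.Prime] (hp5 : 5 ≤ p) (n : ℤ) (hne : Even n)
    (hn : ¬ ((p : ℤ) - 1) ∣ n) (r : ℕ) (hr : r ≠ 0) :
    ∑ k ∈ Finset.Icc 1 ((p ^ r - 1) / 2), F p r n k = 0 := by
  have hp := (Fact.out : p.Prime)
  haveI : NeZero (p ^ r) := ⟨pow_ne_zero _ hp.ne_zero⟩
  have hodd : Odd (p ^ r) := (hp.odd_of_ne_two (by omega)).pow
  have hple : 5 ≤ p ^ r := le_trans hp5 (Nat.le_self_pow hr p)
  have hNM : p ^ r = 2 * ((p ^ r - 1) / 2) + 1 := by obtain ⟨m, hm⟩ := hodd; omega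
  -- full sum is zero
  have hfull : ∑ k ∈ Finset.Icc 1 (p ^ r - 1), F p r n k = 0 := by
    rw [sum_F_Icc p n r hr]
    exact sum_units_zpow p n hn r hr (fun x => isUnit_of_castHom p r hr x)
  -- split
  set M := (p ^ r - 1) / 2 with hM
  have hsplit : ∑ k ∈ Finset.Ioc 0 M, F p r n k + ∑ k ∈ Finset.Ioc M (p ^ r - 1), F p r n k
      = ∑ k ∈ Finset.Ioc 0 (p ^ r - 1), F p r n k :=
    Finset.sum_Ioc_consecutive _ (Nat.zero_le M) (by omega)
  have hIcc : ∀ x : ℕ, Finset.Icc 1 x = Finset.Ioc 0 x := fun x => by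
    rw [← Finset.Icc_add_one_left_eq_Ioc, zero_add]
  have hpair : ∑ k ∈ Finset.Ioc M (p ^ r - 1), F p r n k = ∑ k ∈ Finset.Ioc 0 M, F p r n k := by
    refine Finset.sum_nbij' (fun k => p ^ r - k) (fun k => p ^ r - k) ?_ ?_ ?_ ?_ ?_
    · intro a ha; simp only [Finset.mem_Ioc] at ha ⊢; omega
    · intro a ha; simp only [Finset.mem_Ioc] at ha ⊢; omega
    · intro a ha; simp only [Finset.mem_Ioc] at ha
      show p ^ r - (p ^ r - a) = a; omega
    · intro a ha; simp only [Finset.mem_Ioc] at ha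
      show p ^ r - (p ^ r - a) = a; omega
    · intro a ha; simp only [Finset.mem_Ioc] at ha
      exact (F_pair p n hne r hr (by omega)).symm
  have h2 : (2 : ZMod (p ^ r)) * ∑ k ∈ Finset.Icc 1 ((p ^ r - 1) / 2), F p r n k = 0 := by
    rw [two_mul]
    rw [hIcc] at hfull ⊢
    rw [← hfull, ← hsplit, hpair]
  have h2u : IsUnit (2 : ZMod (p ^ r)) := by
    have : ((2 : ℕ) : ZMod (p ^ r)) = (2 : ZMod (p ^ r)) := by norm_num
    rw [← this, ZMod.isUnit_iff_coprime]
    exact Nat.Coprime.pow_right _ ((Nat.coprime_primes Nat.prime_two hp).mpr (by omega))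
  obtain ⟨v, hv⟩ := h2u
  rwa [← hv, Units.mul_right_eq_zero] at h2

open Classical in
private noncomputable def G (p : ℕ) [Fact p.Prime] (n : ℤ) (k : ℕ) : ℤ_[p] :=
  if h : IsUnit ((k : ℕ) : ℤ_[p]) then ((h.unit ^ (-n) : ℤ_[p]ˣ) : ℤ_[p]) else 0

private lemma isUnit_natCast_padic {p : ℕ} [Fact p.Prime] {k : ℕ} (h : ¬ p ∣ k) :
    IsUnit ((k : ℕ) : ℤ_[p]) := by
  rw [PadicInt.isUnit_iff]
  refine le_antisymm (PadicInt.norm_le_one _) ?_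
  by_contra hlt
  push_neg at hlt
  have : ‖((k : ℤ) : ℤ_[p])‖ < 1 := by push_cast; exact hlt
  rw [PadicInt.norm_int_lt_one_iff_dvd] at this
  exact h (Int.natCast_dvd_natCast.mp this)

private lemma not_dvd_of_isUnit {p : ℕ} [Fact p.Prime] {k : ℕ} (h : IsUnit ((k : ℕ) : ℤ_[p])) :
    ¬ p ∣ k := by
  intro hdvd
  rw [PadicInt.isUnit_iff] at h
  have : ‖((k : ℤ) : ℤ_[p])‖ < 1 :=
    (PadicInt.norm_int_lt_one_iff_dvd _).mpr (Int.natCast_dvd_natCast.mpr hdvd)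
  rw [show ((k : ℤ) : ℤ_[p]) = ((k : ℕ) : ℤ_[p]) by push_cast; ring, h] at this
  exact lt_irrefl _ this

-- coercion of G to ℚ_[p]
private lemma coe_G {p : ℕ} [Fact p.Prime] (n : ℤ) {k : ℕ} (h : ¬ p ∣ k) :
    ((G p n k : ℤ_[p]) : ℚ_[p]) = 1 / ((k : ℚ_[p])) ^ n := by
  have hu := isUnit_natCast_padic (p := p) h
  rw [G]; rw [dif_pos hu]
  have h1 : ((hu.unit ^ (-n) : ℤ_[p]ˣ) : ℤ_[p]) = ((hu.unit ^ (-n) : ℤ_[p]ˣ) : ℤ_[p]) := rfl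
  have h2 : (((hu.unit ^ (-n) : ℤ_[p]ˣ) : ℤ_[p]) : ℚ_[p])
      = ((Units.map (PadicInt.Coe.ringHom (p := p)).toMonoidHom (hu.unit ^ (-n)) : ℚ_[p]ˣ) : ℚ_[p]) := rfl
  rw [h2, map_zpow, Units.val_zpow_eq_zpow_val]
  have h3 : ((Units.map (PadicInt.Coe.ringHom (p := p)).toMonoidHom hu.unit : ℚ_[p]ˣ) : ℚ_[p])
      = ((k : ℕ) : ℚ_[p]) := by
    rw [Units.coe_map]
    simp [hu.unit_spec]
  rw [h3, zpow_neg, one_div]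

private lemma toZModPow_G {p : ℕ} [Fact p.Prime] (n : ℤ) (r : ℕ) (hr : r ≠ 0) (k : ℕ) :
    PadicInt.toZModPow r (G p n k) = F p r n k := by
  have hp := (Fact.out : p.Prime)
  by_cases hu : IsUnit ((k : ℕ) : ℤ_[p])
  · have hnd : ¬ p ∣ k := not_dvd_of_isUnit hu
    have hcop : Nat.Coprime k (p ^ r) :=
      Nat.Coprime.pow_right _ ((hp.coprime_iff_not_dvd.mpr hnd).symm)
    rw [G]; rw [dif_pos hu, F_eq_of_coprime hcop]
    have h2 : PadicInt.toZModPow r (((hu.unit ^ (-n) : ℤ_[p]ˣ) : ℤ_[p]))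
        = ((Units.map (PadicInt.toZModPow (p := p) r).toMonoidHom (hu.unit ^ (-n))
            : (ZMod (p ^ r))ˣ) : ZMod (p ^ r)) := rfl
    rw [h2, map_zpow]
    congr 2
    apply Units.ext
    rw [Units.coe_map, ZMod.coe_unitOfCoprime]
    simp [hu.unit_spec]
  · have hnc : ¬ Nat.Coprime k (p ^ r) := by
      intro hc
      have hkp : Nat.Coprime p k :=
        (((Nat.coprime_pow_right_iff (Nat.pos_of_ne_zero hr)) k p).mp hc).symm
      exact hu (isUnit_natCast_padic (hp.coprime_iff_not_dvd.mp hkp))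
    rw [G]; rw [dif_neg hu, F_eq_zero_of_not_coprime hnc, map_zero]

theorem sum_inv_pow_half_range_congruence (p : ℕ) [Fact p.Prime] (hp5 : 5 ≤ p)
    (n : ℤ) (hne : Even n) (hn : ¬ ((p : ℤ) - 1) ∣ n) (r : ℕ) :
    ‖∑ k ∈ (Finset.Icc 1 ((p ^ r - 1) / 2)).filter (fun k => ¬ p ∣ k),
        (1 : ℚ_[p]) / ((k : ℚ_[p])) ^ n‖ ≤
      (p : ℝ) ^ (-(r : ℤ)) := by
  rcases eq_or_ne r 0 with rfl | hr
  · simp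
  -- rewrite sum as coercion of padic integer sum
  set s := (Finset.Icc 1 ((p ^ r - 1) / 2)).filter (fun k => ¬ p ∣ k) with hs
  have hcoe : ∑ k ∈ s, (1 : ℚ_[p]) / ((k : ℚ_[p])) ^ n
      = ((∑ k ∈ s, G p n k : ℤ_[p]) : ℚ_[p]) := by
    have h0 : ((∑ k ∈ s, G p n k : ℤ_[p]) : ℚ_[p])
        = PadicInt.Coe.ringHom (p := p) (∑ k ∈ s, G p n k) := rfl
    rw [h0, map_sum (PadicInt.Coe.ringHom (p := p)) _ s]
    refine Finset.sum_congr rfl (fun k hk => ?_)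
    have hk' : ¬ p ∣ k := (Finset.mem_filter.mp hk).2
    exact (coe_G n hk').symm
  rw [hcoe, ← PadicInt.norm_def, PadicInt.norm_le_pow_iff_mem_span_pow,
    ← PadicInt.ker_toZModPow, RingHom.mem_ker, map_sum]
  have : ∀ k ∈ s, PadicInt.toZModPow r (G p n k) = F p r n k :=
    fun k _ => toZModPow_G n r hr k
  rw [Finset.sum_congr rfl this, hs,
    Finset.sum_filter_of_ne (fun k _ hk => ?_)]
  · exact sum_F_half p hp5 n hne hn r hr
  · -- F k ≠ 0 → ¬ p ∣ k
    intro hdvd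
    apply hk
    apply F_eq_zero_of_not_coprime
    intro hc
    have hp := (Fact.out : p.Prime)
    have hkp : Nat.Coprime p k :=
      (((Nat.coprime_pow_right_iff (Nat.pos_of_ne_zero hr)) k p).mp hc).symm
    exact hp.coprime_iff_not_dvd.mp hkp hdvd
end

section
/- Let p ≥ 5 be a prime, r a positive integer, and l a nonnegative integer. Then \sum_{k : \lfloor k/p^r \rfloor = l, \ p \nmid (2k+1)} \frac{1}{2k+1} \equiv 0 \pmod{p^{2r}}. -/
open Finset

private lemma invUnique {M : Type*} [CommMonoid M] {a b c : M}
    (hb : b * a = 1) (hc : c * a = 1) : b = c := by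
  calc b = b * (c * a) := by rw [hc, mul_one]
    _ = c * (b * a) := mul_left_comm b c a
    _ = c := by rw [hb, mul_one]

private lemma sum_units_sq (n : ℕ) [NeZero n] (h2 : IsUnit (2 : ZMod n))
    (h3 : IsUnit (3 : ZMod n)) :
    ∑ u : (ZMod n)ˣ, ((u : ZMod n))^2 = 0 := by
  classical
  obtain ⟨g, hg⟩ := h2
  have key : (∑ u : (ZMod n)ˣ, (((g * u : (ZMod n)ˣ) : ZMod n))^2)
      = ∑ u : (ZMod n)ˣ, ((u : ZMod n))^2 :=
    Fintype.sum_equiv (Equiv.mulLeft g) _ _ (fun u => rfl)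
  have key2 : (4 : ZMod n) * (∑ u : (ZMod n)ˣ, ((u : ZMod n))^2)
      = ∑ u : (ZMod n)ˣ, ((u : ZMod n))^2 := by
    conv_rhs => rw [← key]
    rw [Finset.mul_sum]
    refine Finset.sum_congr rfl fun u _ => ?_
    rw [Units.val_mul, hg]; ring
  have h3' : (3 : ZMod n) * (∑ u : (ZMod n)ˣ, ((u : ZMod n))^2) = 0 := by
    linear_combination key2
  obtain ⟨t, ht⟩ := h3
  have hti : ((t⁻¹ : (ZMod n)ˣ) : ZMod n) * (3 : ZMod n) = 1 := by
    rw [← ht]; exact_mod_cast t.inv_mul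
  calc (∑ u : (ZMod n)ˣ, ((u : ZMod n))^2)
      = ((t⁻¹ : (ZMod n)ˣ) : ZMod n) * (3 : ZMod n) * (∑ u : (ZMod n)ˣ, ((u : ZMod n))^2) := by
        rw [hti, one_mul]
    _ = ((t⁻¹ : (ZMod n)ˣ) : ZMod n) * ((3 : ZMod n) * ∑ u : (ZMod n)ˣ, ((u : ZMod n))^2) :=
        mul_assoc _ _ _
    _ = 0 := by rw [h3', mul_zero]



private lemma sum_inv_sq_zmod (p : ℕ) [hp : Fact p.Prime] (hp5 : 5 ≤ p)
    (r : ℕ) (hr : 0 < r) (l : ℕ) :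
    ∑ k ∈ (Finset.Ico (l * p ^ r) ((l + 1) * p ^ r)).filter (fun k => ¬ p ∣ (2 * k + 1)),
      (((2 * k + 1 : ℕ) : ZMod (p ^ r))⁻¹)^2
      = ∑ u : (ZMod (p ^ r))ˣ, (((u⁻¹ : (ZMod (p ^ r))ˣ) : ZMod (p ^ r)))^2 := by
  classical
  haveI : NeZero (p ^ r) := ⟨pow_ne_zero r hp.out.ne_zero⟩
  have hq1 : 1 ≤ p ^ r := Nat.one_le_pow r p hp.out.pos
  have hcop : ∀ k : ℕ, ¬ p ∣ (2 * k + 1) → Nat.Coprime (2 * k + 1) (p ^ r) := fun k h =>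
    Nat.Coprime.pow_right r (Nat.coprime_comm.mp ((hp.out.coprime_iff_not_dvd).mpr h))
  have h2 : IsUnit (2 : ZMod (p ^ r)) := by
    have : Nat.Coprime 2 (p ^ r) :=
      Nat.Coprime.pow_right r ((Nat.coprime_primes Nat.prime_two hp.out).mpr (by omega))
    simpa using (ZMod.unitOfCoprime 2 this).isUnit
  refine Finset.sum_bij (fun k hk => ZMod.unitOfCoprime (2 * k + 1)
      (hcop k (Finset.mem_filter.mp hk).2)) (fun k hk => Finset.mem_univ _) ?_ ?_ ?_
  · -- injective
    intro a ha b hb hab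
    have hca := congrArg (Units.val) hab
    simp only [ZMod.coe_unitOfCoprime] at hca
    have := (ZMod.natCast_eq_natCast_iff _ _ _).mp hca
    have h2c : Nat.Coprime 2 (p ^ r) :=
      Nat.Coprime.pow_right r ((Nat.coprime_primes Nat.prime_two hp.out).mpr (by omega))
    have hmod : a ≡ b [MOD p ^ r] := by
      have h1 : 2 * a ≡ 2 * b [MOD p ^ r] := by
        have := Nat.ModEq.add_right_cancel' 1 this
        simpa using this
      exact h1.cancel_left_of_coprime (Nat.coprime_comm.mp h2c)
    have ha' := Finset.mem_Ico.mp (Finset.mem_filter.mp ha).1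
    have hb' := Finset.mem_Ico.mp (Finset.mem_filter.mp hb).1
    have hda : a / p ^ r = l := Nat.div_eq_of_lt_le (by simpa using ha'.1) (by simpa using ha'.2)
    have hdb : b / p ^ r = l := Nat.div_eq_of_lt_le (by simpa using hb'.1) (by simpa using hb'.2)
    have hma : a % p ^ r = b % p ^ r := hmod
    have e1 := Nat.div_add_mod a (p ^ r)
    have e2 := Nat.div_add_mod b (p ^ r)
    rw [hda] at e1; rw [hdb] at e2
    omega
  · -- surjective
    intro u _
    set v : ZMod (p ^ r) := ((u : ZMod (p ^ r)) - 1) * (2 : ZMod (p ^ r))⁻¹ with hv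
    set a := v.val with hav
    set k := l * p ^ r + a with hk
    have hvlt : a < p ^ r := ZMod.val_lt v
    have hkmem : k ∈ Finset.Ico (l * p ^ r) ((l + 1) * p ^ r) := by
      refine Finset.mem_Ico.mpr ⟨by omega, ?_⟩
      have : (l + 1) * p ^ r = l * p ^ r + p ^ r := by ring
      omega
    have hcast : ((2 * k + 1 : ℕ) : ZMod (p ^ r)) = (u : ZMod (p ^ r)) := by
      push_cast
      have hp0 : ((p : ZMod (p ^ r)))^r = 0 := by rw [← Nat.cast_pow, ZMod.natCast_self]
      have hk0 : ((k : ℕ) : ZMod (p ^ r)) = v := by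
        rw [hk, Nat.cast_add, Nat.cast_mul, Nat.cast_pow, hp0, mul_zero, zero_add, hav,
          ZMod.natCast_zmod_val]
      rw [hk0, hv]
      have h22 : (2 : ZMod (p ^ r)) * (2 : ZMod (p ^ r))⁻¹ = 1 := ZMod.mul_inv_of_unit _ h2
      linear_combination ((u : ZMod (p ^ r)) - 1) * h22
    have hnd : ¬ p ∣ (2 * k + 1) := by
      intro hd
      have hu' : IsUnit ((2 * k + 1 : ℕ) : ZMod (p ^ r)) := by rw [hcast]; exact u.isUnit
      have hc := (ZMod.isUnit_iff_coprime _ _).mp hu'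
      have hdg : p ∣ Nat.gcd (2 * k + 1) (p ^ r) := Nat.dvd_gcd hd (dvd_pow_self p hr.ne')
      rw [hc.gcd_eq_one] at hdg
      have := Nat.le_of_dvd one_pos hdg
      omega
    refine ⟨k, Finset.mem_filter.mpr ⟨hkmem, hnd⟩, ?_⟩
    exact Units.ext (by simpa [ZMod.coe_unitOfCoprime] using hcast)
  · -- values
    intro k hk
    have hku : IsUnit ((2 * k + 1 : ℕ) : ZMod (p ^ r)) :=
      (ZMod.isUnit_iff_coprime _ _).mpr (hcop k (Finset.mem_filter.mp hk).2)
    congr 1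



private lemma unit_cancel {n : ℕ} {x : ZMod n} (h : IsUnit x) {y : ZMod n}
    (hy : x * y = 0) : y = 0 := by
  obtain ⟨t, ht⟩ := h
  calc y = ((t⁻¹ : (ZMod n)ˣ) : ZMod n) * (x * y) := by
        rw [← ht, ← mul_assoc]
        have hti : ((t⁻¹ : (ZMod n)ˣ) : ZMod n) * (t : ZMod n) = 1 := by
          exact_mod_cast t.inv_mul
        rw [hti, one_mul]
    _ = 0 := by rw [hy, mul_zero]

private lemma sum_inv_zmod (p : ℕ) [hp : Fact p.Prime] (hp5 : 5 ≤ p)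
    (r : ℕ) (hr : 0 < r) (l : ℕ) :
    ∑ k ∈ (Finset.Ico (l * p ^ r) ((l + 1) * p ^ r)).filter (fun k => ¬ p ∣ (2 * k + 1)),
      (((2 * k + 1 : ℕ) : ZMod (p ^ (2 * r))))⁻¹ = 0 := by
  classical
  haveI : NeZero (p ^ r) := ⟨pow_ne_zero r hp.out.ne_zero⟩
  haveI : NeZero (p ^ (2 * r)) := ⟨pow_ne_zero _ hp.out.ne_zero⟩
  have h2q : IsUnit (2 : ZMod (p ^ r)) := by
    have : Nat.Coprime 2 (p ^ r) :=
      Nat.Coprime.pow_right _ ((Nat.coprime_primes Nat.prime_two hp.out).mpr (by omega))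
    simpa using (ZMod.isUnit_iff_coprime 2 (p ^ r)).mpr this
  have h3q : IsUnit (3 : ZMod (p ^ r)) := by
    have : Nat.Coprime 3 (p ^ r) :=
      Nat.Coprime.pow_right _ ((Nat.coprime_primes Nat.prime_three hp.out).mpr (by omega))
    simpa using (ZMod.isUnit_iff_coprime 3 (p ^ r)).mpr this
  have hsq : ∑ k ∈ (Finset.Ico (l * p ^ r) ((l + 1) * p ^ r)).filter
      (fun k => ¬ p ∣ (2 * k + 1)), (((2 * k + 1 : ℕ) : ZMod (p ^ r))⁻¹)^2 = 0 := by
    rw [sum_inv_sq_zmod p hp5 r hr l]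
    have hinv : (∑ u : (ZMod (p ^ r))ˣ, (((u⁻¹ : (ZMod (p ^ r))ˣ) : ZMod (p ^ r)))^2)
        = ∑ u : (ZMod (p ^ r))ˣ, ((u : ZMod (p ^ r)))^2 :=
      Fintype.sum_equiv (Equiv.inv (ZMod (p ^ r))ˣ) _ _ (fun u => rfl)
    rw [hinv, sum_units_sq (p ^ r) h2q h3q]
  have hq1 : 1 ≤ p ^ r := Nat.one_le_pow r p hp.out.pos
  set s := (Finset.Ico (l * p ^ r) ((l + 1) * p ^ r)).filter (fun k => ¬ p ∣ (2 * k + 1)) with hs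
  set P : ZMod (p ^ (2 * r)) := ((p ^ r : ℕ) : ZMod (p ^ (2 * r))) with hPdef
  have hPP : P * P = 0 := by
    rw [hPdef, ← Nat.cast_mul, ← pow_add, show r + r = 2 * r by ring, ZMod.natCast_self]
  have hcop : ∀ k : ℕ, ¬ p ∣ (2 * k + 1) → ∀ m : ℕ, Nat.Coprime (2 * k + 1) (p ^ m) :=
    fun k h m => Nat.Coprime.pow_right m (Nat.coprime_comm.mp
      ((hp.out.coprime_iff_not_dvd).mpr h))
  have hunit : ∀ k ∈ s, IsUnit ((2 * k + 1 : ℕ) : ZMod (p ^ (2 * r))) := fun k hk =>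
    (ZMod.isUnit_iff_coprime _ _).mpr (hcop k (Finset.mem_filter.mp hk).2 _)
  have hprod1 : (l + 1) * p ^ r = l * p ^ r + p ^ r := by ring
  have hprod2 : (2 * l + 1) * p ^ r = 2 * (l * p ^ r) + p ^ r := by ring
  have hmem : ∀ k ∈ s, (2 * l + 1) * p ^ r - 1 - k ∈ s := by
    intro k hk
    obtain ⟨hk1, hk2⟩ := Finset.mem_filter.mp hk
    obtain ⟨hka, hkb⟩ := Finset.mem_Ico.mp hk1
    refine Finset.mem_filter.mpr ⟨Finset.mem_Ico.mpr ⟨by omega, by omega⟩, ?_⟩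
    intro hd
    apply hk2
    have he : 2 * k + 1 = 2 * ((2 * l + 1) * p ^ r) - (2 * ((2 * l + 1) * p ^ r - 1 - k) + 1) := by
      omega
    rw [he]
    exact Nat.dvd_sub (Dvd.dvd.mul_left (Dvd.dvd.mul_left (dvd_pow_self p hr.ne') _) 2) hd
  -- the pairing identity
  have hpair : ∀ k ∈ s,
      (((2 * k + 1 : ℕ) : ZMod (p ^ (2 * r))))⁻¹
        + (((2 * ((2 * l + 1) * p ^ r - 1 - k) + 1 : ℕ) : ZMod (p ^ (2 * r))))⁻¹
      = (-((2 * (2 * l + 1) : ℕ) : ZMod (p ^ (2 * r))) * P)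
          * ((((2 * k + 1 : ℕ) : ZMod (p ^ (2 * r))))⁻¹)^2 := by
    intro k hk
    obtain ⟨hk1, hk2⟩ := Finset.mem_filter.mp hk
    obtain ⟨hka, hkb⟩ := Finset.mem_Ico.mp hk1
    set a : ZMod (p ^ (2 * r)) := ((2 * k + 1 : ℕ) : ZMod (p ^ (2 * r))) with hadef
    set c : ZMod (p ^ (2 * r)) := ((2 * (2 * l + 1) : ℕ) : ZMod (p ^ (2 * r))) with hcdef
    have hbnat : (2 * ((2 * l + 1) * p ^ r - 1 - k) + 1 : ℕ)
        = 2 * ((2 * l + 1) * p ^ r) - (2 * k + 1) := by omega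
    have hble : (2 * k + 1) ≤ 2 * ((2 * l + 1) * p ^ r) := by omega
    have hbcast : ((2 * ((2 * l + 1) * p ^ r - 1 - k) + 1 : ℕ) : ZMod (p ^ (2 * r)))
        = c * P - a := by
      rw [hbnat, Nat.cast_sub hble, hadef, hcdef, hPdef]
      push_cast
      ring
    have hua : IsUnit a := hunit k hk
    have hub : IsUnit (c * P - a) := by rw [← hbcast]; exact hunit _ (hmem k hk)
    have ha1 : a * a⁻¹ = 1 := ZMod.mul_inv_of_unit a hua
    have hb1 : (c * P - a) * (c * P - a)⁻¹ = 1 := ZMod.mul_inv_of_unit _ hub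
    rw [hbcast]
    apply (hua.mul hub).mul_left_cancel
    linear_combination ((c * P - a) + c * P * a⁻¹ * (c * P - a) - c * P) * ha1 + a * hb1
      + (c ^ 2 * a⁻¹) * hPP
  have hres : ∑ k ∈ s, (((2 * ((2 * l + 1) * p ^ r - 1 - k) + 1 : ℕ)
      : ZMod (p ^ (2 * r))))⁻¹ = ∑ k ∈ s, (((2 * k + 1 : ℕ) : ZMod (p ^ (2 * r))))⁻¹ := by
    refine Finset.sum_bij' (fun k _ => (2 * l + 1) * p ^ r - 1 - k)
      (fun k _ => (2 * l + 1) * p ^ r - 1 - k) (fun k hk => hmem k hk)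
      (fun k hk => hmem k hk) ?_ ?_ (fun k hk => rfl)
    · intro k hk
      obtain ⟨hk1, _⟩ := Finset.mem_filter.mp hk
      obtain ⟨hka, hkb⟩ := Finset.mem_Ico.mp hk1
      show (2 * l + 1) * p ^ r - 1 - ((2 * l + 1) * p ^ r - 1 - k) = k
      omega
    · intro k hk
      obtain ⟨hk1, _⟩ := Finset.mem_filter.mp hk
      obtain ⟨hka, hkb⟩ := Finset.mem_Ico.mp hk1
      show (2 * l + 1) * p ^ r - 1 - ((2 * l + 1) * p ^ r - 1 - k) = k
      omega
  have h2S : (∑ k ∈ s, (((2 * k + 1 : ℕ) : ZMod (p ^ (2 * r))))⁻¹)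
        + (∑ k ∈ s, (((2 * k + 1 : ℕ) : ZMod (p ^ (2 * r))))⁻¹)
      = (-((2 * (2 * l + 1) : ℕ) : ZMod (p ^ (2 * r))) * P)
      * ∑ k ∈ s, ((((2 * k + 1 : ℕ) : ZMod (p ^ (2 * r))))⁻¹)^2 := by
    nth_rewrite 2 [← hres]
    rw [← Finset.sum_add_distrib, Finset.mul_sum]
    exact Finset.sum_congr rfl hpair
  -- kill P * (sum of inverse squares)
  have hdvd : p ^ r ∣ p ^ (2 * r) := pow_dvd_pow p (by omega)
  have hker : ∀ x : ZMod (p ^ (2 * r)), (ZMod.castHom hdvd (ZMod (p ^ r))) x = 0 →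
      P * x = 0 := by
    intro x hx
    rw [← ZMod.natCast_zmod_val x, map_natCast] at hx
    obtain ⟨t, ht⟩ := (ZMod.natCast_eq_zero_iff _ _).mp hx
    calc P * x = ((p ^ r * x.val : ℕ) : ZMod (p ^ (2 * r))) := by
          rw [Nat.cast_mul, ZMod.natCast_zmod_val, hPdef]
      _ = ((p ^ (2 * r) * t : ℕ) : ZMod (p ^ (2 * r))) := by
          rw [ht, ← mul_assoc, ← pow_add, show r + r = 2 * r by ring]
      _ = 0 := by rw [Nat.cast_mul, ZMod.natCast_self, zero_mul]
  have hsq0 : (ZMod.castHom hdvd (ZMod (p ^ r)))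
      (∑ k ∈ s, ((((2 * k + 1 : ℕ) : ZMod (p ^ (2 * r))))⁻¹)^2) = 0 := by
    rw [map_sum]
    rw [Finset.sum_congr rfl (fun k hk => ?_)]
    · exact hsq
    · show (ZMod.castHom hdvd (ZMod (p ^ r))) ((((2 * k + 1 : ℕ) : ZMod (p ^ (2 * r))))⁻¹^2)
        = (((2 * k + 1 : ℕ) : ZMod (p ^ r))⁻¹)^2
      rw [map_pow]
      congr 1
      have hqu : IsUnit ((2 * k + 1 : ℕ) : ZMod (p ^ r)) :=
        (ZMod.isUnit_iff_coprime _ _).mpr (hcop k (Finset.mem_filter.mp hk).2 _)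
      refine invUnique (a := ((2 * k + 1 : ℕ) : ZMod (p ^ r))) ?_ (ZMod.inv_mul_of_unit _ hqu)
      rw [← map_natCast (ZMod.castHom hdvd (ZMod (p ^ r))) (2 * k + 1), ← map_mul,
        ZMod.inv_mul_of_unit _ (hunit k hk), map_one]
  have hP0 : P * (∑ k ∈ s, ((((2 * k + 1 : ℕ) : ZMod (p ^ (2 * r))))⁻¹)^2) = 0 :=
    hker _ hsq0
  have hSS : (∑ k ∈ s, (((2 * k + 1 : ℕ) : ZMod (p ^ (2 * r))))⁻¹)
        + (∑ k ∈ s, (((2 * k + 1 : ℕ) : ZMod (p ^ (2 * r))))⁻¹) = 0 := by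
    rw [h2S]
    linear_combination (-((2 * (2 * l + 1) : ℕ) : ZMod (p ^ (2 * r)))) * hP0
  have h2u : IsUnit (2 : ZMod (p ^ (2 * r))) := by
    have : Nat.Coprime 2 (p ^ (2 * r)) :=
      Nat.Coprime.pow_right _ ((Nat.coprime_primes Nat.prime_two hp.out).mpr (by omega))
    simpa using (ZMod.isUnit_iff_coprime 2 (p ^ (2 * r))).mpr this
  exact unit_cancel h2u (by linear_combination hSS)


theorem sum_inv_two_k_add_one_congruence (p : ℕ) [Fact p.Prime] (hp5 : 5 ≤ p)
    (r : ℕ) (hr : 0 < r) (l : ℕ) :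
    ‖∑ k ∈ (Finset.Ico (l * p ^ r) ((l + 1) * p ^ r)).filter
        (fun k => ¬ p ∣ (2 * k + 1)), ((2 * (k : ℚ_[p]) + 1))⁻¹‖ ≤
      (p : ℝ) ^ (-(2 * (r : ℤ))) := by
  classical
  haveI hp : Fact p.Prime := inferInstance
  haveI : NeZero (p ^ (2 * r)) := ⟨pow_ne_zero _ hp.out.ne_zero⟩
  set s := (Finset.Ico (l * p ^ r) ((l + 1) * p ^ r)).filter (fun k => ¬ p ∣ (2 * k + 1))
    with hs
  have hcop : ∀ k : ℕ, ¬ p ∣ (2 * k + 1) → ∀ m : ℕ, Nat.Coprime (2 * k + 1) (p ^ m) :=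
    fun k h m => Nat.Coprime.pow_right m (Nat.coprime_comm.mp
      ((hp.out.coprime_iff_not_dvd).mpr h))
  have hunit : ∀ k ∈ s, IsUnit ((2 * k + 1 : ℕ) : ZMod (p ^ (2 * r))) := fun k hk =>
    (ZMod.isUnit_iff_coprime _ _).mpr (hcop k (Finset.mem_filter.mp hk).2 _)
  set N := ∏ k ∈ s, (2 * k + 1) with hN
  set A := ∑ k ∈ s, ∏ j ∈ s.erase k, (2 * j + 1) with hA
  have hne : ∀ k : ℕ, ((2 * k + 1 : ℕ) : ℚ_[p]) ≠ 0 := fun k =>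
    Nat.cast_ne_zero.mpr (by omega)
  have hNF : ((N : ℕ) : ℚ_[p]) * ∑ k ∈ s, (((2 * k + 1 : ℕ)) : ℚ_[p])⁻¹
      = ((A : ℕ) : ℚ_[p]) := by
    rw [hA, Nat.cast_sum, Finset.mul_sum]
    refine Finset.sum_congr rfl fun k hk => ?_
    calc ((N : ℕ) : ℚ_[p]) * (((2 * k + 1 : ℕ)) : ℚ_[p])⁻¹
        = (((2 * k + 1 : ℕ) : ℚ_[p]) * ((∏ j ∈ s.erase k, (2 * j + 1) : ℕ) : ℚ_[p]))
            * (((2 * k + 1 : ℕ)) : ℚ_[p])⁻¹ := by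
          rw [hN, ← Finset.mul_prod_erase _ _ hk, Nat.cast_mul]
      _ = ((∏ j ∈ s.erase k, (2 * j + 1) : ℕ) : ℚ_[p]) := by
          rw [mul_comm ((2 * k + 1 : ℕ) : ℚ_[p]) _, mul_assoc,
            mul_inv_cancel₀ (hne k), mul_one]
  have hNd : ¬ (p : ℤ) ∣ (N : ℤ) := by
    rw [Int.natCast_dvd_natCast]
    intro hd
    rw [hN] at hd
    obtain ⟨k, hk, hdk⟩ := (Nat.Prime.prime hp.out).dvd_finset_prod_iff _ |>.mp hd
    exact (Finset.mem_filter.mp hk).2 hdk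
  have hNnorm : ‖((N : ℕ) : ℚ_[p])‖ = 1 := by
    have hcast : ((N : ℕ) : ℚ_[p]) = (((N : ℤ)) : ℚ_[p]) := by push_cast; ring
    rw [hcast]
    refine le_antisymm (Padic.norm_int_le_one _) ?_
    by_contra hlt
    push_neg at hlt
    exact hNd ((Padic.norm_intCast_lt_one_iff).mp hlt)
  have hAz : ((A : ℕ) : ZMod (p ^ (2 * r))) = 0 := by
    rw [hA, Nat.cast_sum]
    have hterm : ∀ k ∈ s, ((∏ j ∈ s.erase k, (2 * j + 1) : ℕ) : ZMod (p ^ (2 * r)))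
        = ((N : ℕ) : ZMod (p ^ (2 * r))) * (((2 * k + 1 : ℕ)) : ZMod (p ^ (2 * r)))⁻¹ := by
      intro k hk
      rw [hN, ← Finset.mul_prod_erase _ _ hk, Nat.cast_mul,
        mul_comm (((2 * k + 1 : ℕ)) : ZMod (p ^ (2 * r))) _, mul_assoc,
        ZMod.mul_inv_of_unit _ (hunit k hk), mul_one]
    rw [Finset.sum_congr rfl hterm, ← Finset.mul_sum, hs, sum_inv_zmod p hp5 r hr l,
      mul_zero]
  have hdvdA : p ^ (2 * r) ∣ A := (ZMod.natCast_eq_zero_iff _ _).mp hAz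
  obtain ⟨B, hB⟩ := hdvdA
  have hsum : ∑ k ∈ s, (2 * (k : ℚ_[p]) + 1)⁻¹
      = ∑ k ∈ s, (((2 * k + 1 : ℕ)) : ℚ_[p])⁻¹ :=
    Finset.sum_congr rfl fun k _ => by congr 1; push_cast; ring
  rw [hsum]
  have hNne : ((N : ℕ) : ℚ_[p]) ≠ 0 := fun h => by simp [h] at hNnorm
  have hform : ∑ k ∈ s, (((2 * k + 1 : ℕ)) : ℚ_[p])⁻¹
      = ((A : ℕ) : ℚ_[p]) * (((N : ℕ) : ℚ_[p]))⁻¹ :=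
    (eq_mul_inv_iff_mul_eq₀ hNne).mpr (by linear_combination hNF)
  rw [hform, norm_mul, norm_inv, hNnorm, inv_one, mul_one, hB]
  have hsplit : ((p ^ (2 * r) * B : ℕ) : ℚ_[p]) = ((p : ℚ_[p])) ^ (2 * r) * ((B : ℕ) : ℚ_[p]) := by
    push_cast; ring
  rw [hsplit, norm_mul, norm_pow, Padic.norm_p]
  have hBle : ‖((B : ℕ) : ℚ_[p])‖ ≤ 1 := by
    have : ((B : ℕ) : ℚ_[p]) = (((B : ℤ)) : ℚ_[p]) := by push_cast; ring
    rw [this]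
    exact Padic.norm_int_le_one _
  have hrhs : (p : ℝ) ^ (-(2 * (r : ℤ))) = ((p : ℝ)⁻¹) ^ (2 * r) := by
    rw [show (-(2 * (r : ℤ))) = -((2 * r : ℕ) : ℤ) by push_cast; ring, zpow_neg,
      zpow_natCast, inv_pow]
  rw [hrhs]
  calc ((p : ℝ)⁻¹) ^ (2 * r) * ‖((B : ℕ) : ℚ_[p])‖
      ≤ ((p : ℝ)⁻¹) ^ (2 * r) * 1 := by
        refine mul_le_mul_of_nonneg_left hBle (by positivity)
    _ = ((p : ℝ)⁻¹) ^ (2 * r) := mul_one _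
end

section
/- Let p ≥ 5 be a prime, r a positive integer, and l a nonnegative integer. Then \sum_{k : \lfloor k/p^r \rfloor = l, \ p \nmid (k+1)} \frac{1}{k+1} \equiv 0 \pmod{p^{2r}}. -/
open Finset



lemma cop_pow {p m s : ℕ} (hp : p.Prime) (h : ¬ p ∣ m) : Nat.Coprime m (p ^ s) :=
  ((Nat.Prime.coprime_iff_not_dvd hp).mpr h).symm.pow_right s

lemma sum_filter_eq_sum_units (p r : ℕ) (hp : p.Prime) (hr : 0 < r) [NeZero (p ^ r)]
    (f : ZMod (p ^ r) → ZMod (p ^ r)) :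
    ∑ j ∈ (Finset.range (p ^ r)).filter (fun j => ¬ p ∣ j), f (j : ZMod (p ^ r))
      = ∑ u : (ZMod (p ^ r))ˣ, f u := by
  refine Finset.sum_nbij' (i := fun j => if h : Nat.Coprime j (p ^ r) then ZMod.unitOfCoprime j h else 1)
    (j := fun u => (u : ZMod (p ^ r)).val) ?_ ?_ ?_ ?_ ?_
  · intro a _; exact Finset.mem_univ _
  · intro u _
    simp only [Finset.mem_filter, Finset.mem_range]
    refine ⟨ZMod.val_lt _, fun hdvd => ?_⟩
    have hcop : Nat.Coprime ((u : ZMod (p ^ r)).val) (p ^ r) := by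
      apply (ZMod.isUnit_iff_coprime _ _).mp
      rw [ZMod.natCast_val, ZMod.cast_id]
      exact u.isUnit
    have hpd : p ∣ p ^ r := dvd_pow_self p hr.ne'
    have hone : p ∣ Nat.gcd ((u : ZMod (p ^ r)).val) (p ^ r) := Nat.dvd_gcd hdvd hpd
    rw [hcop] at hone
    exact hp.one_lt.ne' (Nat.dvd_one.mp hone)
  · intro a ha
    simp only [Finset.mem_filter, Finset.mem_range] at ha
    have hcop : Nat.Coprime a (p ^ r) := cop_pow hp ha.2
    simp only [dif_pos hcop]
    rw [ZMod.coe_unitOfCoprime, ZMod.val_natCast_of_lt ha.1]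
  · intro u _
    have hcop : Nat.Coprime ((u : ZMod (p ^ r)).val) (p ^ r) := by
      apply (ZMod.isUnit_iff_coprime _ _).mp
      rw [ZMod.natCast_val, ZMod.cast_id]
      exact u.isUnit
    simp only [dif_pos hcop]
    apply Units.ext
    rw [ZMod.coe_unitOfCoprime, ZMod.natCast_val, ZMod.cast_id]
  · intro a ha
    simp only [Finset.mem_filter, Finset.mem_range] at ha
    have hcop : Nat.Coprime a (p ^ r) := cop_pow hp ha.2
    simp only [dif_pos hcop, ZMod.coe_unitOfCoprime]

lemma sum_units_inv_sq (p r : ℕ) (hp : p.Prime) (hp5 : 5 ≤ p) (hr : 0 < r) [NeZero (p ^ r)] :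
    ∑ u : (ZMod (p ^ r))ˣ, ((u : ZMod (p ^ r))⁻¹) ^ 2 = 0 := by
  set S := ∑ u : (ZMod (p ^ r))ˣ, ((u : ZMod (p ^ r))⁻¹) ^ 2 with hS
  have h2 : ¬ p ∣ 2 := fun h => by have := Nat.le_of_dvd (by norm_num) h; omega
  have h3 : ¬ p ∣ 3 := fun h => by have := Nat.le_of_dvd (by norm_num) h; omega
  set g : (ZMod (p ^ r))ˣ := ZMod.unitOfCoprime 2 (cop_pow hp h2) with hg
  have key : S = ((g⁻¹ : (ZMod (p ^ r))ˣ) : ZMod (p ^ r)) ^ 2 * S := by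
    calc S = ∑ u : (ZMod (p ^ r))ˣ, (((g * u : (ZMod (p ^ r))ˣ) : ZMod (p ^ r))⁻¹) ^ 2 := by
          rw [hS]
          exact (Fintype.sum_equiv (Equiv.mulLeft g) _ _ (fun u => by simp)).symm
    _ = ((g⁻¹ : (ZMod (p ^ r))ˣ) : ZMod (p ^ r)) ^ 2 * S := by
          rw [hS, Finset.mul_sum]
          refine Finset.sum_congr rfl fun u _ => ?_
          rw [ZMod.inv_coe_unit, ZMod.inv_coe_unit, mul_inv_rev]
          push_cast
          ring
  have h4S : (4 : ZMod (p ^ r)) * S = S := by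
    have hgg : ((g : ZMod (p ^ r))) ^ 2 * ((g⁻¹ : (ZMod (p ^ r))ˣ) : ZMod (p ^ r)) ^ 2 = 1 := by
      rw [← mul_pow, ← Units.val_mul]; simp
    have hg2 : ((g : ZMod (p ^ r))) ^ 2 = 4 := by
      rw [hg, ZMod.coe_unitOfCoprime]
      norm_num
    calc (4 : ZMod (p ^ r)) * S = (g : ZMod (p ^ r)) ^ 2 * (((g⁻¹ : (ZMod (p ^ r))ˣ) : ZMod (p ^ r)) ^ 2 * S) := by
          rw [← key, hg2]
    _ = S := by rw [← mul_assoc, hgg, one_mul]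
  have h3S : (3 : ZMod (p ^ r)) * S = 0 := by
    have : (4 : ZMod (p ^ r)) * S - S = 0 := by rw [h4S]; ring
    calc (3 : ZMod (p ^ r)) * S = (4 : ZMod (p ^ r)) * S - S := by ring
    _ = 0 := this
  have hu3 : IsUnit (3 : ZMod (p ^ r)) := by
    have := (ZMod.isUnit_iff_coprime 3 (p ^ r)).mpr (cop_pow hp h3)
    simpa using this
  exact (hu3.mul_right_eq_zero).mp h3S

lemma sum_inv_sq_eq_zero (p : ℕ) (hp : p.Prime) (hp5 : 5 ≤ p) (r : ℕ) (hr : 0 < r) :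
    ∑ j ∈ (Finset.range (p ^ r)).filter (fun j => ¬ p ∣ j),
      ((j : ZMod (p ^ r))⁻¹) ^ 2 = 0 := by
  haveI : NeZero (p ^ r) := ⟨pow_ne_zero _ hp.ne_zero⟩
  rw [sum_filter_eq_sum_units p r hp hr (fun x => (x⁻¹) ^ 2)]
  exact sum_units_inv_sq p r hp hp5 hr


-- inverse of product, unit facts
lemma zmod_inv_mul {n : ℕ} (a b : ZMod n) (ha : IsUnit a) (hb : IsUnit b) :
    (a * b)⁻¹ = a⁻¹ * b⁻¹ := by
  apply ZMod.inv_eq_of_mul_eq_one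
  calc a * b * (a⁻¹ * b⁻¹) = (a * a⁻¹) * (b * b⁻¹) := by ring
  _ = 1 := by rw [ZMod.mul_inv_of_unit a ha, ZMod.mul_inv_of_unit b hb, one_mul]

lemma zmod_inv_add {n : ℕ} (a b : ZMod n) (ha : IsUnit a) (hb : IsUnit b) :
    a⁻¹ + b⁻¹ = (a + b) * (a * b)⁻¹ := by
  rw [zmod_inv_mul a b ha hb]
  calc a⁻¹ + b⁻¹ = b * b⁻¹ * a⁻¹ + a * a⁻¹ * b⁻¹ := by
        rw [ZMod.mul_inv_of_unit a ha, ZMod.mul_inv_of_unit b hb, one_mul, one_mul]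
  _ = (a + b) * (a⁻¹ * b⁻¹) := by ring

lemma ringhom_zmod_inv {n m : ℕ} (f : ZMod n →+* ZMod m) (a : ZMod n) (ha : IsUnit a) :
    f a⁻¹ = (f a)⁻¹ := by
  symm
  apply ZMod.inv_eq_of_mul_eq_one
  rw [← map_mul, ZMod.mul_inv_of_unit a ha, map_one]

lemma zmod_inv_neg {n : ℕ} (a : ZMod n) (ha : IsUnit a) : (-a)⁻¹ = -a⁻¹ := by
  apply ZMod.inv_eq_of_mul_eq_one
  rw [neg_mul_neg, ZMod.mul_inv_of_unit a ha]

lemma zmod_inv_sq {n : ℕ} (a : ZMod n) (ha : IsUnit a) : (a ^ 2)⁻¹ = (a⁻¹) ^ 2 := by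
  apply ZMod.inv_eq_of_mul_eq_one
  rw [← mul_pow, ZMod.mul_inv_of_unit a ha, one_pow]

-- interval sum of inverse squares mod p^r
lemma interval_inv_sq (p : ℕ) (hp : p.Prime) (hp5 : 5 ≤ p) (r : ℕ) (hr : 0 < r) (l : ℕ) :
    ∑ k ∈ (Finset.Ico (l * p ^ r) ((l + 1) * p ^ r)).filter (fun k => ¬ p ∣ (k + 1)),
      (((k + 1 : ℕ) : ZMod (p ^ r))⁻¹) ^ 2 = 0 := by
  have hppr : p ∣ p ^ r := dvd_pow_self p hr.ne'
  have hplp : p ∣ l * p ^ r := Dvd.dvd.mul_left hppr l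
  rw [← sum_inv_sq_eq_zero p hp hp5 r hr]
  refine Finset.sum_nbij' (i := fun k => k + 1 - l * p ^ r) (j := fun j => l * p ^ r + j - 1)
    ?_ ?_ ?_ ?_ ?_
  · intro k hk
    simp only [Finset.mem_filter, Finset.mem_Ico, Finset.mem_range] at hk ⊢
    obtain ⟨⟨h1, h2⟩, h3⟩ := hk
    constructor
    · -- k + 1 - l * p ^ r < p ^ r
      rcases Nat.lt_or_ge (k + 1) ((l + 1) * p ^ r) with h | h
      · have : (l+1) * p ^ r = l * p ^ r + p ^ r := by ring
        omega
      · exfalso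
        have hk1 : k + 1 = (l + 1) * p ^ r := by omega
        exact h3 (hk1 ▸ Dvd.dvd.mul_left hppr (l+1))
    · intro hd
      apply h3
      have : k + 1 = l * p ^ r + (k + 1 - l * p ^ r) := by omega
      rw [this]
      exact Nat.dvd_add hplp hd
  · intro j hj
    simp only [Finset.mem_filter, Finset.mem_Ico, Finset.mem_range] at hj ⊢
    obtain ⟨h1, h2⟩ := hj
    have hj1 : 1 ≤ j := by
      rcases Nat.eq_zero_or_pos j with h | h
      · exact absurd (h ▸ dvd_zero p) h2
      · exact h
    have hsplit : (l + 1) * p ^ r = l * p ^ r + p ^ r := by ring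
    refine ⟨⟨by omega, by omega⟩, fun hd => h2 ?_⟩
    have : j = (l * p ^ r + j - 1) + 1 - l * p ^ r := by omega
    rw [this]
    exact (Nat.dvd_sub hd hplp)
  · intro k hk
    simp only [Finset.mem_filter, Finset.mem_Ico] at hk
    show l * p ^ r + (k + 1 - l * p ^ r) - 1 = k
    omega
  · intro j hj
    simp only [Finset.mem_filter, Finset.mem_range] at hj
    have hj1 : 1 ≤ j := by
      rcases Nat.eq_zero_or_pos j with h | h
      · exact absurd (h ▸ dvd_zero p) hj.2
      · exact h
    show (l * p ^ r + j - 1) + 1 - l * p ^ r = j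
    omega
  · intro k hk
    simp only [Finset.mem_filter, Finset.mem_Ico] at hk
    have hrw : k + 1 = l * p ^ r + (k + 1 - l * p ^ r) := by omega
    show (((k + 1 : ℕ) : ZMod (p ^ r))⁻¹) ^ 2 = (((k + 1 - l * p ^ r : ℕ) : ZMod (p ^ r))⁻¹) ^ 2
    congr 2
    conv_lhs => rw [hrw]
    rw [Nat.cast_add, Nat.cast_mul, ZMod.natCast_self, mul_zero, zero_add]


lemma main_zmod (p : ℕ) (hp : p.Prime) (hp5 : 5 ≤ p) (r : ℕ) (hr : 0 < r) (l : ℕ) :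
    ∑ k ∈ (Finset.Ico (l * p ^ r) ((l + 1) * p ^ r)).filter (fun k => ¬ p ∣ (k + 1)),
      ((k + 1 : ℕ) : ZMod (p ^ (2 * r)))⁻¹ = 0 := by
  haveI : NeZero (p ^ (2 * r)) := ⟨pow_ne_zero _ hp.ne_zero⟩
  set B := (Finset.Ico (l * p ^ r) ((l + 1) * p ^ r)).filter (fun k => ¬ p ∣ (k + 1)) with hB
  set N := (2 * l + 1) * p ^ r with hN
  have hppr : p ∣ p ^ r := dvd_pow_self p hr.ne'
  have hpN : p ∣ N := Dvd.dvd.mul_left hppr _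
  have hpl1 : p ∣ (l + 1) * p ^ r := Dvd.dvd.mul_left hppr _
  have hsplit : (l + 1) * p ^ r = l * p ^ r + p ^ r := by ring
  have hNsplit : N = 2 * (l * p ^ r) + p ^ r := by rw [hN]; ring
  have hprpos : 0 < p ^ r := Nat.pow_pos hp.pos
  -- basic bounds for k ∈ B
  have hmem : ∀ k ∈ B, l * p ^ r ≤ k ∧ k < (l + 1) * p ^ r ∧ ¬ p ∣ (k + 1) ∧ k + 1 < (l+1) * p ^ r := by
    intro k hk
    rw [hB, Finset.mem_filter, Finset.mem_Ico] at hk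
    refine ⟨hk.1.1, hk.1.2, hk.2, ?_⟩
    rcases Nat.lt_or_ge (k + 1) ((l + 1) * p ^ r) with h | h
    · exact h
    · exfalso
      have heq : k + 1 = (l + 1) * p ^ r := by omega
      exact hk.2 (heq ▸ hpl1)
  -- σ is an involution on B
  have hrefl : ∑ k ∈ B, ((k + 1 : ℕ) : ZMod (p ^ (2 * r)))⁻¹
      = ∑ k ∈ B, ((N - (k + 1) : ℕ) : ZMod (p ^ (2 * r)))⁻¹ := by
    refine Finset.sum_nbij' (i := fun k => N - k - 2) (j := fun k => N - k - 2) ?_ ?_ ?_ ?_ ?_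
    · intro k hk
      obtain ⟨h1, h2, h3, h4⟩ := hmem k hk
      have hk1 : N - k - 2 + 1 = N - (k + 1) := by omega
      simp only [hB, Finset.mem_filter, Finset.mem_Ico]
      refine ⟨⟨by omega, by omega⟩, fun hd => h3 ?_⟩
      rw [hk1] at hd
      have : k + 1 = N - (N - (k + 1)) := by omega
      rw [this]
      exact Nat.dvd_sub hpN hd
    · intro k hk
      obtain ⟨h1, h2, h3, h4⟩ := hmem k hk
      have hk1 : N - k - 2 + 1 = N - (k + 1) := by omega
      simp only [hB, Finset.mem_filter, Finset.mem_Ico]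
      refine ⟨⟨by omega, by omega⟩, fun hd => h3 ?_⟩
      rw [hk1] at hd
      have : k + 1 = N - (N - (k + 1)) := by omega
      rw [this]
      exact Nat.dvd_sub hpN hd
    · intro k hk
      obtain ⟨h1, h2, h3, h4⟩ := hmem k hk
      show N - (N - k - 2) - 2 = k
      omega
    · intro k hk
      obtain ⟨h1, h2, h3, h4⟩ := hmem k hk
      show N - (N - k - 2) - 2 = k
      omega
    · intro k hk
      obtain ⟨h1, h2, h3, h4⟩ := hmem k hk
      show ((k + 1 : ℕ) : ZMod (p ^ (2 * r)))⁻¹ = ((N - ((N - k - 2) + 1) : ℕ) : ZMod (p ^ (2 * r)))⁻¹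
      have heq : N - ((N - k - 2) + 1) = k + 1 := by omega
      rw [heq]
  -- unit facts
  have hunit1 : ∀ k ∈ B, IsUnit ((k + 1 : ℕ) : ZMod (p ^ (2 * r))) := by
    intro k hk
    exact (ZMod.isUnit_iff_coprime _ _).mpr (cop_pow hp (hmem k hk).2.2.1)
  have hk1N : ∀ k ∈ B, k + 1 ≤ N := by
    intro k hk
    obtain ⟨h1, h2, h3, h4⟩ := hmem k hk
    omega
  have hndvd2 : ∀ k ∈ B, ¬ p ∣ (N - (k + 1)) := by
    intro k hk hd
    obtain ⟨h1, h2, h3, h4⟩ := hmem k hk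
    apply h3
    have heq : k + 1 = N - (N - (k + 1)) := by omega
    rw [heq]
    exact Nat.dvd_sub hpN hd
  have hunit2 : ∀ k ∈ B, IsUnit ((N - (k + 1) : ℕ) : ZMod (p ^ (2 * r))) := by
    intro k hk
    exact (ZMod.isUnit_iff_coprime _ _).mpr (cop_pow hp (hndvd2 k hk))
  set T := ∑ k ∈ B, (((k + 1 : ℕ) : ZMod (p ^ (2 * r))) * ((N - (k + 1) : ℕ) : ZMod (p ^ (2 * r))))⁻¹
    with hT
  set S := ∑ k ∈ B, ((k + 1 : ℕ) : ZMod (p ^ (2 * r)))⁻¹ with hS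
  -- 2 S = N * T
  have h2S : (2 : ZMod (p ^ (2 * r))) * S = ((N : ℕ) : ZMod (p ^ (2 * r))) * T := by
    have : (2 : ZMod (p ^ (2 * r))) * S = S + S := by ring
    rw [this]
    nth_rewrite 2 [hS]
    rw [hrefl, hT, ← Finset.sum_add_distrib, Finset.mul_sum]
    refine Finset.sum_congr rfl fun k hk => ?_
    rw [add_comm, zmod_inv_add _ _ (hunit1 k hk) (hunit2 k hk)]
    congr 1
    rw [← Nat.cast_add]
    congr 1
    have := hk1N k hk
    omega
  -- T is divisible by p ^ r
  have hdvd : (p : ℕ) ^ r ∣ p ^ (2 * r) := pow_dvd_pow p (by omega)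
  set ψ : ZMod (p ^ (2 * r)) →+* ZMod (p ^ r) := ZMod.castHom hdvd (ZMod (p ^ r)) with hψ
  have hψT : ψ T = 0 := by
    rw [hT, map_sum]
    have hstep : ∀ k ∈ B, ψ ((((k + 1 : ℕ) : ZMod (p ^ (2 * r))) *
        ((N - (k + 1) : ℕ) : ZMod (p ^ (2 * r))))⁻¹)
        = -((((k + 1 : ℕ) : ZMod (p ^ r))⁻¹) ^ 2) := by
      intro k hk
      rw [ringhom_zmod_inv ψ _ ((hunit1 k hk).mul (hunit2 k hk))]
      have hcast : ψ (((k + 1 : ℕ) : ZMod (p ^ (2 * r))) *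
          ((N - (k + 1) : ℕ) : ZMod (p ^ (2 * r))))
          = -(((k + 1 : ℕ) : ZMod (p ^ r)) ^ 2) := by
        rw [map_mul, map_natCast, map_natCast]
        have hNzero : ((N : ℕ) : ZMod (p ^ r)) = 0 := by
          rw [hN, Nat.cast_mul, ZMod.natCast_self, mul_zero]
        rw [Nat.cast_sub (hk1N k hk), hNzero, zero_sub]
        ring
      rw [hcast]
      have hu : IsUnit (((k + 1 : ℕ) : ZMod (p ^ r)) ^ 2) := by
        exact ((ZMod.isUnit_iff_coprime _ _).mpr (cop_pow hp (hmem k hk).2.2.1)).pow 2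
      rw [zmod_inv_neg _ hu, zmod_inv_sq _ ((ZMod.isUnit_iff_coprime _ _).mpr
        (cop_pow hp (hmem k hk).2.2.1))]
    rw [Finset.sum_congr rfl hstep, Finset.sum_neg_distrib]
    rw [hB, interval_inv_sq p hp hp5 r hr l, neg_zero]
  obtain ⟨c, hc⟩ : ∃ c : ZMod (p ^ (2 * r)), T = ((p ^ r : ℕ) : ZMod (p ^ (2 * r))) * c := by
    have hval : ((T.val : ℕ) : ZMod (p ^ (2 * r))) = T := by
      rw [ZMod.natCast_val, ZMod.cast_id]
    have h0 : ((T.val : ℕ) : ZMod (p ^ r)) = 0 := by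
      have := map_natCast ψ T.val
      rw [hval] at this
      rw [← this, hψT]
    obtain ⟨c, hc⟩ := (ZMod.natCast_eq_zero_iff _ _).mp h0
    exact ⟨(c : ZMod (p ^ (2 * r))), by rw [← hval, hc, Nat.cast_mul]⟩
  have hNp : ((N : ℕ) : ZMod (p ^ (2 * r))) * ((p ^ r : ℕ) : ZMod (p ^ (2 * r))) = 0 := by
    rw [← Nat.cast_mul]
    have : N * p ^ r = (2 * l + 1) * p ^ (2 * r) := by
      rw [hN, show 2 * r = r + r from two_mul r, pow_add]; ring
    rw [this, Nat.cast_mul, ZMod.natCast_self, mul_zero]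
  have h2S0 : (2 : ZMod (p ^ (2 * r))) * S = 0 := by
    rw [h2S, hc, ← mul_assoc, hNp, zero_mul]
  have hu2 : IsUnit (2 : ZMod (p ^ (2 * r))) := by
    have h2 : ¬ p ∣ 2 := fun h => by have := Nat.le_of_dvd (by norm_num) h; omega
    have := (ZMod.isUnit_iff_coprime 2 (p ^ (2 * r))).mpr (cop_pow hp h2)
    simpa using this
  exact (hu2.mul_right_eq_zero).mp h2S0


theorem sum_inv_k_add_one_congruence (p : ℕ) [Fact p.Prime] (hp5 : 5 ≤ p)
    (r : ℕ) (hr : 0 < r) (l : ℕ) :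
    ‖∑ k ∈ (Finset.Ico (l * p ^ r) ((l + 1) * p ^ r)).filter
        (fun k => ¬ p ∣ (k + 1)), (((k : ℚ_[p]) + 1))⁻¹‖ ≤
      (p : ℝ) ^ (-(2 * (r : ℤ))) := by
  have hp : p.Prime := Fact.out
  set B := (Finset.Ico (l * p ^ r) ((l + 1) * p ^ r)).filter (fun k => ¬ p ∣ (k + 1)) with hB
  have hmem : ∀ k ∈ B, ¬ p ∣ (k + 1) := by
    intro k hk
    rw [hB, Finset.mem_filter] at hk
    exact hk.2
  have hunit : ∀ k ∈ B, IsUnit ((k + 1 : ℕ) : ℤ_[p]) := by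
    intro k hk
    rw [PadicInt.isUnit_iff]
    refine le_antisymm (PadicInt.norm_le_one _) ?_
    by_contra hlt
    push_neg at hlt
    have : ‖((k + 1 : ℤ) : ℤ_[p])‖ < 1 := by push_cast; push_cast at hlt; exact hlt
    rw [PadicInt.norm_int_lt_one_iff_dvd] at this
    exact hmem k hk (by exact_mod_cast this)
  set SZ : ℤ_[p] := ∑ k ∈ B, Ring.inverse ((k + 1 : ℕ) : ℤ_[p]) with hSZ
  have hcast : ((SZ : ℤ_[p]) : ℚ_[p]) = ∑ k ∈ B, (((k : ℚ_[p]) + 1))⁻¹ := by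
    rw [hSZ]
    have hco : ((∑ k ∈ B, Ring.inverse ((k + 1 : ℕ) : ℤ_[p]) : ℤ_[p]) : ℚ_[p])
        = PadicInt.Coe.ringHom (∑ k ∈ B, Ring.inverse ((k + 1 : ℕ) : ℤ_[p])) := rfl
    rw [hco, map_sum (PadicInt.Coe.ringHom) _ B]
    refine Finset.sum_congr rfl fun k hk => ?_
    have h1 : (PadicInt.Coe.ringHom (Ring.inverse ((k + 1 : ℕ) : ℤ_[p])) : ℚ_[p])
        = (((k + 1 : ℕ) : ℚ_[p]))⁻¹ := by
      symm
      apply inv_eq_of_mul_eq_one_right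
      have := Ring.mul_inverse_cancel _ (hunit k hk)
      calc ((k + 1 : ℕ) : ℚ_[p]) * PadicInt.Coe.ringHom (Ring.inverse ((k + 1 : ℕ) : ℤ_[p]))
          = PadicInt.Coe.ringHom (((k + 1 : ℕ) : ℤ_[p]) * Ring.inverse ((k + 1 : ℕ) : ℤ_[p])) := by
            rw [map_mul, map_natCast]
      _ = 1 := by rw [this, map_one]
    rw [h1]
    norm_num
  rw [← hcast, ← PadicInt.norm_def]
  have hexp : (-(2 * (r : ℤ))) = -((2 * r : ℕ) : ℤ) := by push_cast; ring
  rw [hexp, PadicInt.norm_le_pow_iff_mem_span_pow, ← PadicInt.ker_toZModPow, RingHom.mem_ker]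
  rw [hSZ, map_sum]
  have hstep : ∀ k ∈ B, (PadicInt.toZModPow (2 * r)) (Ring.inverse ((k + 1 : ℕ) : ℤ_[p]))
      = ((k + 1 : ℕ) : ZMod (p ^ (2 * r)))⁻¹ := by
    intro k hk
    symm
    apply ZMod.inv_eq_of_mul_eq_one
    calc ((k + 1 : ℕ) : ZMod (p ^ (2 * r))) * (PadicInt.toZModPow (2 * r)) (Ring.inverse ((k + 1 : ℕ) : ℤ_[p]))
        = (PadicInt.toZModPow (2 * r)) (((k + 1 : ℕ) : ℤ_[p]) * Ring.inverse ((k + 1 : ℕ) : ℤ_[p])) := by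
          rw [map_mul, map_natCast]
    _ = 1 := by rw [Ring.mul_inverse_cancel _ (hunit k hk), map_one]
  rw [Finset.sum_congr rfl hstep, hB]
  exact main_zmod p hp hp5 r hr l
end

section
/- Let p ≥ 5 be a prime, r a positive integer, and l a nonnegative integer. Then \sum_{k : \lfloor k/p^r \rfloor = l} \sum_{j=1, p \nmid j}^{k} \frac{1}{j^2} \equiv 0 \pmod{p^{2r}}. -/
open Finset
variable {p : ℕ} [hp : Fact p.Prime]

lemma norm_nat_eq_one {j : ℕ} (h : ¬ p ∣ j) : ‖(j : ℚ_[p])‖ = 1 := by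
  refine le_antisymm (by exact_mod_cast Padic.norm_int_le_one (j : ℤ)) ?_
  by_contra hlt
  push_neg at hlt
  have : ‖((j : ℤ) : ℚ_[p])‖ < 1 := by push_cast; linarith
  rw [Padic.norm_intCast_lt_one_iff] at this
  exact h (by exact_mod_cast this)

lemma norm_nat_le_pow {a r : ℕ} (h : p ^ r ∣ a) : ‖(a : ℚ_[p])‖ ≤ (p : ℝ) ^ (-(r : ℤ)) := by
  obtain ⟨b, rfl⟩ := h
  push_cast
  rw [norm_mul, Padic.norm_p_pow]
  calc (p:ℝ) ^ (-(r:ℤ)) * ‖(b : ℚ_[p])‖ ≤ (p:ℝ) ^ (-(r:ℤ)) * 1 := by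
        apply mul_le_mul_of_nonneg_left _ (by positivity)
        exact_mod_cast Padic.norm_int_le_one (b : ℤ)
    _ = _ := mul_one _

lemma norm_cast_sub_le {a b r : ℕ} (hab : a ≤ b) (h : p ^ r ∣ (b - a)) :
    ‖(b : ℚ_[p]) - a‖ ≤ (p : ℝ) ^ (-(r : ℤ)) := by
  rw [← Nat.cast_sub hab]; exact norm_nat_le_pow h

lemma norm_sum_le_ofC {α : Type*} {s : Finset α} {f : α → ℚ_[p]} {C : ℝ} (hC : 0 ≤ C)
    (h : ∀ a ∈ s, ‖f a‖ ≤ C) : ‖∑ a ∈ s, f a‖ ≤ C := by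
  classical
  induction s using Finset.cons_induction with
  | empty => simpa
  | cons a s hx ih =>
    rw [Finset.sum_cons]
    refine le_trans (Padic.nonarchimedean _ _)
      (max_le (h a (by simp)) (ih fun b hb => h b (by simp [hb])))

lemma norm_inv_sub_inv {a b : ℚ_[p]} (ha : ‖a‖ = 1) (hb : ‖b‖ = 1) :
    ‖a⁻¹ - b⁻¹‖ = ‖a - b‖ := by
  have ha0 : a ≠ 0 := by intro h; rw [h] at ha; simp at ha
  have hb0 : b ≠ 0 := by intro h; rw [h] at hb; simp at hb
  have : a⁻¹ - b⁻¹ = (b - a) * (a * b)⁻¹ := by field_simp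
  rw [this, norm_mul, norm_inv, norm_mul, ha, hb, ← norm_neg (b - a), neg_sub]
  simp

lemma norm_invsq_sub_invsq {a b : ℚ_[p]} (ha : ‖a‖ = 1) (hb : ‖b‖ = 1) :
    ‖(a ^ 2)⁻¹ - (b ^ 2)⁻¹‖ ≤ ‖a - b‖ := by
  have h1 : ‖(a^2)⁻¹ - (b^2)⁻¹‖ = ‖a^2 - b^2‖ := by
    apply norm_inv_sub_inv <;> simp [norm_pow, ha, hb]
  rw [h1]
  have : a^2 - b^2 = (a - b) * (a + b) := by ring
  rw [this, norm_mul]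
  calc ‖a - b‖ * ‖a + b‖ ≤ ‖a - b‖ * 1 := by
        refine mul_le_mul_of_nonneg_left ?_ (norm_nonneg _)
        exact le_trans (Padic.nonarchimedean _ _) (by simp [ha, hb])
    _ = _ := mul_one _

lemma sumsq_bound (hp5 : 5 ≤ p) {r : ℕ} (hr : 0 < r) :
    ‖∑ i ∈ (range (p ^ r)).filter (fun i => ¬ p ∣ i), ((i : ℚ_[p]) ^ 2)⁻¹‖ ≤
      (p : ℝ) ^ (-(r : ℤ)) := by
  classical
  have hp2 : 2 ≤ p := le_trans (by norm_num) hp5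
  have hpprime := hp.out
  set P := p ^ r with hPdef
  have hP0 : 0 < P := pow_pos (by omega) r
  have hdvdP : p ∣ P := dvd_pow_self p hr.ne'
  have hpodd : Odd p := hpprime.odd_of_ne_two (by omega)
  have hPodd : Odd P := hpodd.pow
  have h2P1 : 2 ∣ P + 1 := by rcases hPodd with ⟨m, hm⟩; exact ⟨m + 1, by omega⟩
  set c := (P + 1) / 2 with hcdef
  have h2c : 2 * c = P + 1 := Nat.mul_div_cancel' h2P1
  have hp2' : ¬ p ∣ 2 := fun h => by have := Nat.le_of_dvd (by norm_num) h; omega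
  have hpc : ¬ p ∣ c := by
    intro h
    have h1 : p ∣ P + 1 := by rw [← h2c]; exact Dvd.dvd.mul_left h 2
    have h2 : p ∣ 1 := by simpa using Nat.dvd_sub h1 hdvdP
    have := Nat.le_of_dvd one_pos h2; omega
  set s : Finset ℕ := (range P).filter (fun i => ¬ p ∣ i) with hsdef
  set f : ℕ → ℚ_[p] := fun i => ((i : ℚ_[p]) ^ 2)⁻¹ with hfdef
  have hmem : ∀ i, i ∈ s ↔ i < P ∧ ¬ p ∣ i := by
    intro i; simp [hsdef, Finset.mem_filter, Finset.mem_range]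
  set σ : ℕ → ℕ := fun i => 2 * i % P with hσdef
  set τ : ℕ → ℕ := fun i => c * i % P with hτdef
  have hσmem : ∀ i ∈ s, σ i ∈ s := by
    intro i hi
    rw [hmem] at hi ⊢
    refine ⟨Nat.mod_lt _ hP0, ?_⟩
    rw [Nat.dvd_mod_iff hdvdP]
    intro h
    rcases hpprime.dvd_mul.mp h with h | h
    · exact hp2' h
    · exact hi.2 h
  have hτmem : ∀ i ∈ s, τ i ∈ s := by
    intro i hi
    rw [hmem] at hi ⊢
    refine ⟨Nat.mod_lt _ hP0, ?_⟩
    rw [Nat.dvd_mod_iff hdvdP]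
    intro h
    rcases hpprime.dvd_mul.mp h with h | h
    · exact hpc h
    · exact hi.2 h
  have key : ∀ i < P, c * (2 * i) % P = i := by
    intro i hiP
    have : c * (2 * i) = i + i * P := by
      calc c * (2 * i) = (2 * c) * i := by ring
        _ = i + i * P := by rw [h2c]; ring
    rw [this, Nat.add_mul_mod_self_right, Nat.mod_eq_of_lt hiP]
  have hτσ : ∀ i ∈ s, τ (σ i) = i := by
    intro i hi
    rw [hmem] at hi
    show c * (2 * i % P) % P = i
    rw [Nat.mul_mod_mod, key i hi.1]
  have hστ : ∀ i ∈ s, σ (τ i) = i := by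
    intro i hi
    rw [hmem] at hi
    show 2 * (c * i % P) % P = i
    rw [Nat.mul_mod_mod]
    have : 2 * (c * i) = c * (2 * i) := by ring
    rw [this, key i hi.1]
  -- the sum is invariant under σ
  have hbij : ∑ i ∈ s, f i = ∑ i ∈ s, f (σ i) :=
    Finset.sum_nbij' τ σ hτmem hσmem hστ hτσ (fun i hi => by rw [hστ i hi])
  -- error terms
  set e : ℕ → ℚ_[p] := fun i => f (σ i) - f (2 * i) with hedef
  have herr : ∀ i ∈ s, ‖e i‖ ≤ (p : ℝ) ^ (-(r : ℤ)) := by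
    intro i hi
    rw [hmem] at hi
    have h2i : ¬ p ∣ 2 * i := fun h => by
      rcases hpprime.dvd_mul.mp h with h | h
      · exact hp2' h
      · exact hi.2 h
    have hσi : ¬ p ∣ σ i := by
      have := hσmem i (by rw [hmem]; exact hi)
      rw [hmem] at this; exact this.2
    have hb1 : ‖((σ i : ℕ) : ℚ_[p])‖ = 1 := norm_nat_eq_one hσi
    have hb2 : ‖((2 * i : ℕ) : ℚ_[p])‖ = 1 := norm_nat_eq_one h2i
    refine le_trans (norm_invsq_sub_invsq hb1 hb2) ?_
    rw [norm_sub_rev]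
    refine norm_cast_sub_le (Nat.mod_le _ _) ?_
    have hexp : σ i = 2 * i % P := rfl
    rw [hexp]
    exact ⟨2 * i / P, Nat.sub_eq_of_eq_add (Nat.div_add_mod (2 * i) P).symm⟩
  -- f (2 i) = 4⁻¹ * f i
  have hf2 : ∀ i : ℕ, f (2 * i) = (4 : ℚ_[p])⁻¹ * f i := by
    intro i
    show (((2 * i : ℕ) : ℚ_[p]) ^ 2)⁻¹ = (4 : ℚ_[p])⁻¹ * ((i : ℚ_[p]) ^ 2)⁻¹
    push_cast
    rw [mul_pow, mul_inv]
    norm_num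
  have hS : ∑ i ∈ s, f i = (4 : ℚ_[p])⁻¹ * (∑ i ∈ s, f i) + ∑ i ∈ s, e i := by
    nth_rewrite 1 [hbij]
    rw [Finset.mul_sum, ← Finset.sum_add_distrib]
    refine Finset.sum_congr rfl fun i hi => ?_
    show f (σ i) = 4⁻¹ * f i + (f (σ i) - f (2 * i))
    rw [hf2 i]
    ring
  have hE : ‖∑ i ∈ s, e i‖ ≤ (p : ℝ) ^ (-(r : ℤ)) := norm_sum_le_ofC (by positivity) herr
  -- conclude
  have h4 : ‖(4 : ℚ_[p])‖ = 1 := by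
    have : ¬ p ∣ 4 := fun h => by have := Nat.le_of_dvd (by norm_num) h; omega
    have := norm_nat_eq_one (p := p) this
    simpa using this
  have h3 : ‖(3 : ℚ_[p])‖ = 1 := by
    have : ¬ p ∣ 3 := fun h => by have := Nat.le_of_dvd (by norm_num) h; omega
    have := norm_nat_eq_one (p := p) this
    simpa using this
  have h40 : (4 : ℚ_[p]) ≠ 0 := fun h => by rw [h] at h4; simp at h4
  have hfac : (1 - (4 : ℚ_[p])⁻¹) * (∑ i ∈ s, f i) = ∑ i ∈ s, e i := by
    rw [sub_mul, one_mul]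
    nth_rewrite 1 [hS]
    ring
  have hnorm34 : ‖(1 - (4 : ℚ_[p])⁻¹)‖ = 1 := by
    have : (1 - (4 : ℚ_[p])⁻¹) = 3 * 4⁻¹ := by field_simp; norm_num
    rw [this, norm_mul, norm_inv, h3, h4]
    norm_num
  calc ‖∑ i ∈ s, f i‖ = ‖(1 - (4 : ℚ_[p])⁻¹)‖ * ‖∑ i ∈ s, f i‖ := by rw [hnorm34, one_mul]
    _ = ‖(1 - (4 : ℚ_[p])⁻¹) * (∑ i ∈ s, f i)‖ := (norm_mul _ _).symm
    _ = ‖∑ i ∈ s, e i‖ := by rw [hfac]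
    _ ≤ _ := hE

lemma block_bound (hp5 : 5 ≤ p) {r : ℕ} (hr : 0 < r) (l : ℕ) :
    ‖∑ j ∈ (Ioc (l * p ^ r) ((l + 1) * p ^ r)).filter (fun j => ¬ p ∣ j),
        ((j : ℚ_[p]) ^ 2)⁻¹‖ ≤ (p : ℝ) ^ (-(r : ℤ)) := by
  classical
  have hpprime := hp.out
  set P := p ^ r with hPdef
  have hP0 : 0 < P := pow_pos (by omega) r
  have hdvdP : p ∣ P := dvd_pow_self p hr.ne'
  have hdvdlP : p ∣ l * P := Dvd.dvd.mul_left hdvdP l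
  have hPdvdlP : P ∣ l * P := Dvd.dvd.mul_left dvd_rfl l
  set s : Finset ℕ := (range P).filter (fun i => ¬ p ∣ i) with hsdef
  set s' : Finset ℕ := (Ioc (l * P) ((l + 1) * P)).filter (fun j => ¬ p ∣ j) with hs'def
  set f : ℕ → ℚ_[p] := fun i => ((i : ℚ_[p]) ^ 2)⁻¹ with hfdef
  have hmem : ∀ i, i ∈ s ↔ i < P ∧ ¬ p ∣ i := by
    intro i; simp [hsdef, Finset.mem_filter, Finset.mem_range]
  have hmem' : ∀ j, j ∈ s' ↔ (l * P < j ∧ j ≤ (l + 1) * P) ∧ ¬ p ∣ j := by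
    intro j; simp [hs'def, Finset.mem_filter, Finset.mem_Ioc]
  have hlP1 : (l + 1) * P = l * P + P := by ring
  have hre : ∑ j ∈ s', f j = ∑ i ∈ s, f (l * P + i) := by
    refine Finset.sum_nbij' (fun j => j - l * P) (fun i => l * P + i) ?_ ?_ ?_ ?_ ?_
    · intro j hj
      show j - l * P ∈ s
      rw [hmem'] at hj
      rw [hmem]
      obtain ⟨⟨h1, h2⟩, h3⟩ := hj
      have hne : j ≠ (l + 1) * P := fun h => h3 (h ▸ Dvd.dvd.mul_left hdvdP (l + 1))
      refine ⟨by omega, ?_⟩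
      intro h
      exact h3 (by have := Nat.dvd_add h hdvdlP; rwa [Nat.sub_add_cancel (by omega)] at this)
    · intro i hi
      show l * P + i ∈ s'
      rw [hmem] at hi
      rw [hmem']
      have hi0 : 0 < i := by
        rcases Nat.eq_zero_or_pos i with h | h
        · exfalso; exact hi.2 (h ▸ dvd_zero p)
        · exact h
      have hi1 := hi.1
      refine ⟨⟨by omega, by omega⟩, ?_⟩
      intro h
      exact hi.2 (by have := Nat.dvd_sub h hdvdlP; simpa using this)
    · intro j hj
      show l * P + (j - l * P) = j
      rw [hmem'] at hj; omega
    · intro i _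
      show (l * P + i) - l * P = i
      omega
    · intro j hj
      show f j = f (l * P + (j - l * P))
      rw [hmem'] at hj
      rw [Nat.add_sub_cancel' (by omega : l * P ≤ j)]
  have herr : ∀ i ∈ s, ‖f (l * P + i) - f i‖ ≤ (p : ℝ) ^ (-(r : ℤ)) := by
    intro i hi
    rw [hmem] at hi
    have h1 : ¬ p ∣ l * P + i := fun h => hi.2 (by have := Nat.dvd_sub h hdvdlP; simpa using this)
    refine le_trans (norm_invsq_sub_invsq (norm_nat_eq_one h1) (norm_nat_eq_one hi.2)) ?_
    refine norm_cast_sub_le (by omega) ?_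
    rw [Nat.add_sub_cancel]; exact hPdvdlP
  have hsum : ∑ j ∈ s', f j = (∑ i ∈ s, f i) + ∑ i ∈ s, (f (l * P + i) - f i) := by
    rw [hre, ← Finset.sum_add_distrib]
    exact Finset.sum_congr rfl fun i _ => by ring
  rw [hsum]
  refine le_trans (Padic.nonarchimedean _ _) (max_le ?_ ?_)
  · exact sumsq_bound hp5 hr
  · exact norm_sum_le_ofC (by positivity) herr

lemma hblock_bound (hp5 : 5 ≤ p) {r : ℕ} (hr : 0 < r) (l : ℕ) :
    ‖∑ j ∈ (Ioc (l * p ^ r) ((l + 1) * p ^ r)).filter (fun j => ¬ p ∣ j),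
        ((j : ℚ_[p]))⁻¹‖ ≤ (p : ℝ) ^ (-(2 * (r : ℤ))) := by
  classical
  have hpprime := hp.out
  have hp0R : (p : ℝ) ≠ 0 := by positivity
  set P := p ^ r with hPdef
  have hP0 : 0 < P := pow_pos (by omega) r
  have hdvdP : p ∣ P := dvd_pow_self p hr.ne'
  set Q := (2 * l + 1) * P with hQdef
  have hpQ : p ∣ Q := Dvd.dvd.mul_left hdvdP _
  have hPQ : P ∣ Q := Dvd.dvd.mul_left dvd_rfl _
  set s' : Finset ℕ := (Ioc (l * P) ((l + 1) * P)).filter (fun j => ¬ p ∣ j) with hs'def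
  set u : ℕ → ℚ_[p] := fun j => ((j : ℚ_[p]))⁻¹ with hudef
  have hmem' : ∀ j, j ∈ s' ↔ (l * P < j ∧ j ≤ (l + 1) * P) ∧ ¬ p ∣ j := by
    intro j; simp [hs'def, Finset.mem_filter, Finset.mem_Ioc]
  have hlP1 : (l + 1) * P = l * P + P := by ring
  have hQl : Q = l * P + P + l * P := by rw [hQdef]; ring
  have hsjlt : ∀ j ∈ s', l * P < j ∧ j < (l + 1) * P ∧ ¬ p ∣ j := by
    intro j hj
    rw [hmem'] at hj
    obtain ⟨⟨h1, h2⟩, h3⟩ := hj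
    have hne : j ≠ (l + 1) * P := fun h => h3 (h ▸ Dvd.dvd.mul_left hdvdP (l + 1))
    exact ⟨h1, by omega, h3⟩
  have hτmem : ∀ j ∈ s', Q - j ∈ s' := by
    intro j hj
    obtain ⟨h1, h2, h3⟩ := hsjlt j hj
    rw [hmem']
    refine ⟨⟨by omega, by omega⟩, ?_⟩
    intro h
    have hjQ : j ≤ Q := by omega
    have := Nat.dvd_sub hpQ h
    rw [Nat.sub_sub_self hjQ] at this
    exact h3 this
  have hbij : ∑ j ∈ s', u j = ∑ j ∈ s', u (Q - j) := by
    refine Finset.sum_nbij' (fun j => Q - j) (fun j => Q - j) hτmem hτmem ?_ ?_ ?_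
    · intro j hj
      obtain ⟨h1, h2, _⟩ := hsjlt j hj
      show Q - (Q - j) = j
      omega
    · intro j hj
      obtain ⟨h1, h2, _⟩ := hsjlt j hj
      show Q - (Q - j) = j
      omega
    · intro j hj
      obtain ⟨h1, h2, _⟩ := hsjlt j hj
      show u j = u (Q - (Q - j))
      rw [(by omega : Q - (Q - j) = j)]
  -- pointwise identity
  have hpt : ∀ j ∈ s', u j + u (Q - j) =
      (Q : ℚ_[p]) * (-(((j : ℚ_[p]) ^ 2)⁻¹) + ((((j : ℚ_[p]) * ((Q : ℚ_[p]) - j))⁻¹) + ((j : ℚ_[p]) ^ 2)⁻¹)) := by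
    intro j hj
    obtain ⟨h1, h2, h3⟩ := hsjlt j hj
    have hτj := hτmem j hj
    rw [hmem'] at hτj
    have hjQ : j ≤ Q := by omega
    have hcast : ((Q - j : ℕ) : ℚ_[p]) = (Q : ℚ_[p]) - j := by
      rw [Nat.cast_sub hjQ]
    have hj1 : ‖(j : ℚ_[p])‖ = 1 := norm_nat_eq_one h3
    have hQj1 : ‖(Q : ℚ_[p]) - j‖ = 1 := by
      rw [← hcast]; exact norm_nat_eq_one hτj.2
    have hj0 : (j : ℚ_[p]) ≠ 0 := fun h => by rw [h] at hj1; simp at hj1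
    have hQj0 : (Q : ℚ_[p]) - j ≠ 0 := fun h => by rw [h] at hQj1; simp at hQj1
    show u j + u (Q - j) = _
    rw [hudef]
    simp only []
    rw [hcast]
    field_simp
    ring
  -- norms of error terms
  have herr : ∀ j ∈ s', ‖(((j : ℚ_[p]) * ((Q : ℚ_[p]) - j))⁻¹) + ((j : ℚ_[p]) ^ 2)⁻¹‖ ≤
      (p : ℝ) ^ (-(r : ℤ)) := by
    intro j hj
    obtain ⟨h1, h2, h3⟩ := hsjlt j hj
    have hτj := hτmem j hj
    rw [hmem'] at hτj
    have hjQ : j ≤ Q := by omega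
    have hcast : ((Q - j : ℕ) : ℚ_[p]) = (Q : ℚ_[p]) - j := Nat.cast_sub hjQ
    have hj1 : ‖(j : ℚ_[p])‖ = 1 := norm_nat_eq_one h3
    have hQj1 : ‖(Q : ℚ_[p]) - j‖ = 1 := by rw [← hcast]; exact norm_nat_eq_one hτj.2
    have ha : ‖(j : ℚ_[p]) * ((Q : ℚ_[p]) - j)‖ = 1 := by rw [norm_mul, hj1, hQj1]; norm_num
    have hb : ‖-((j : ℚ_[p]) ^ 2)‖ = 1 := by rw [norm_neg, norm_pow, hj1]; norm_num
    have hkey := norm_inv_sub_inv (p := p) ha hb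
    rw [inv_neg] at hkey
    have : (j : ℚ_[p]) * ((Q : ℚ_[p]) - j) - -((j : ℚ_[p]) ^ 2) = (j : ℚ_[p]) * Q := by ring
    rw [this] at hkey
    have : ((j : ℚ_[p]) * ((Q : ℚ_[p]) - j))⁻¹ + ((j : ℚ_[p]) ^ 2)⁻¹ =
        ((j : ℚ_[p]) * ((Q : ℚ_[p]) - j))⁻¹ - -(((j : ℚ_[p]) ^ 2)⁻¹) := by ring
    rw [this, hkey, norm_mul, hj1, one_mul]
    exact norm_nat_le_pow hPQ
  -- assemble
  have h2H : (2 : ℚ_[p]) * (∑ j ∈ s', u j) =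
      (Q : ℚ_[p]) * ((∑ j ∈ s', -(((j : ℚ_[p]) ^ 2)⁻¹)) +
        ∑ j ∈ s', ((((j : ℚ_[p]) * ((Q : ℚ_[p]) - j))⁻¹) + ((j : ℚ_[p]) ^ 2)⁻¹)) := by
    have : (2 : ℚ_[p]) * (∑ j ∈ s', u j) = (∑ j ∈ s', u j) + ∑ j ∈ s', u (Q - j) := by
      rw [← hbij]; ring
    rw [this, ← Finset.sum_add_distrib, ← Finset.sum_add_distrib, Finset.mul_sum]
    exact Finset.sum_congr rfl hpt
  have hpow : (p : ℝ) ^ (-(r : ℤ)) * (p : ℝ) ^ (-(r : ℤ)) = (p : ℝ) ^ (-(2 * (r : ℤ))) := by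
    rw [← zpow_add₀ hp0R]; ring_nf
  have h2n : ‖(2 : ℚ_[p])‖ = 1 := by
    have : ¬ p ∣ 2 := fun h => by have := Nat.le_of_dvd (by norm_num) h; omega
    have := norm_nat_eq_one (p := p) this
    simpa using this
  have hfinal : ‖(2 : ℚ_[p]) * (∑ j ∈ s', u j)‖ ≤ (p : ℝ) ^ (-(2 * (r : ℤ))) := by
    rw [h2H, norm_mul, ← hpow]
    refine mul_le_mul (norm_nat_le_pow hPQ) ?_ (norm_nonneg _) (by positivity)
    refine le_trans (Padic.nonarchimedean _ _) (max_le ?_ ?_)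
    · have : ∑ j ∈ s', -(((j : ℚ_[p]) ^ 2)⁻¹) = -∑ j ∈ s', ((j : ℚ_[p]) ^ 2)⁻¹ :=
        Finset.sum_neg_distrib _
      rw [this, norm_neg]
      exact block_bound hp5 hr l
    · exact norm_sum_le_ofC (by positivity) herr
  rwa [norm_mul, h2n, one_mul] at hfinal

lemma gprefix_bound (hp5 : 5 ≤ p) {r : ℕ} (hr : 0 < r) (l : ℕ) :
    ‖∑ j ∈ Ioc 0 (l * p ^ r), (if ¬ p ∣ j then ((j : ℚ_[p]) ^ 2)⁻¹ else 0)‖ ≤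
      (p : ℝ) ^ (-(r : ℤ)) := by
  induction l with
  | zero =>
    rw [Nat.zero_mul]
    simp only [Finset.Ioc_self, Finset.sum_empty, norm_zero]
    positivity
  | succ l ih =>
    have hsplit := Finset.sum_Ioc_consecutive (fun j => (if ¬ p ∣ j then ((j : ℚ_[p]) ^ 2)⁻¹ else 0))
      (Nat.zero_le (l * p ^ r)) (by nlinarith [pow_pos (by omega : 0 < p) r] : l * p ^ r ≤ (l + 1) * p ^ r)
    rw [← hsplit]
    refine le_trans (Padic.nonarchimedean _ _) (max_le ih ?_)
    rw [← Finset.sum_filter]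
    exact block_bound hp5 hr l

theorem double_sum_inv_sq_congruence (p : ℕ) [Fact p.Prime] (hp5 : 5 ≤ p)
    (r : ℕ) (hr : 0 < r) (l : ℕ) :
    ‖∑ k ∈ Finset.Ico (l * p ^ r) ((l + 1) * p ^ r),
        ∑ j ∈ (Finset.Icc 1 k).filter (fun j => ¬ p ∣ j), ((j : ℚ_[p]) ^ 2)⁻¹‖ ≤
      (p : ℝ) ^ (-(2 * (r : ℤ))) := by
  classical
  have hp0R : (p : ℝ) ≠ 0 := Nat.cast_ne_zero.mpr (by omega)
  set P := p ^ r with hPdef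
  have hP0 : 0 < P := pow_pos (by omega) r
  set D := (l + 1) * P with hDdef
  have hlP1 : D = l * P + P := by rw [hDdef]; ring
  have hPD : P ∣ D := Dvd.dvd.mul_left dvd_rfl _
  set g : ℕ → ℚ_[p] := fun j => (if ¬ p ∣ j then ((j : ℚ_[p]) ^ 2)⁻¹ else 0) with hgdef
  set g1 : ℕ → ℚ_[p] := fun j => (if ¬ p ∣ j then ((j : ℚ_[p]))⁻¹ else 0) with hg1def
  have hjg : ∀ j : ℕ, (j : ℚ_[p]) * g j = g1 j := by
    intro j
    rw [hgdef, hg1def]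
    simp only []
    by_cases h : p ∣ j
    · simp [h]
    · have hj1 : ‖(j : ℚ_[p])‖ = 1 := norm_nat_eq_one h
      have hj0 : (j : ℚ_[p]) ≠ 0 := fun hh => by rw [hh] at hj1; simp at hj1
      simp only [h, not_false_iff, if_true]
      rw [sq, mul_inv, ← mul_assoc, mul_inv_cancel₀ hj0, one_mul]
  -- rewrite inner sums
  have hstep1 : ∀ k : ℕ, ∑ j ∈ (Finset.Icc 1 k).filter (fun j => ¬ p ∣ j), ((j : ℚ_[p]) ^ 2)⁻¹
      = ∑ j ∈ Ioc 0 k, g j := by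
    intro k
    rw [Finset.sum_filter, ← Finset.Icc_add_one_left_eq_Ioc]; rfl
  have hstep2 : ∀ k ∈ Finset.Ico (l * P) D, ∑ j ∈ Ioc 0 k, g j =
      (∑ j ∈ Ioc 0 (l * P), g j) + ∑ j ∈ Ioc (l * P) k, g j := by
    intro k hk
    rw [Finset.mem_Ico] at hk
    rw [Finset.sum_Ioc_consecutive _ (Nat.zero_le _) hk.1]
  have hmain : ∑ k ∈ Finset.Ico (l * P) D, ∑ j ∈ (Finset.Icc 1 k).filter (fun j => ¬ p ∣ j),
      ((j : ℚ_[p]) ^ 2)⁻¹ =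
      P • (∑ j ∈ Ioc 0 (l * P), g j) +
        ((D : ℚ_[p]) * (∑ j ∈ Ioc (l * P) D, g j) - ∑ j ∈ Ioc (l * P) D, g1 j) := by
    calc ∑ k ∈ Finset.Ico (l * P) D, ∑ j ∈ (Finset.Icc 1 k).filter (fun j => ¬ p ∣ j),
          ((j : ℚ_[p]) ^ 2)⁻¹
        = ∑ k ∈ Finset.Ico (l * P) D,
            ((∑ j ∈ Ioc 0 (l * P), g j) + ∑ j ∈ Ioc (l * P) k, g j) := by
          refine Finset.sum_congr rfl fun k hk => ?_
          rw [hstep1 k, hstep2 k hk]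
      _ = (Finset.Ico (l * P) D).card • (∑ j ∈ Ioc 0 (l * P), g j) +
            ∑ k ∈ Finset.Ico (l * P) D, ∑ j ∈ Ioc (l * P) k, g j := by
          rw [Finset.sum_add_distrib, Finset.sum_const]
      _ = P • (∑ j ∈ Ioc 0 (l * P), g j) +
            ∑ k ∈ Finset.Ico (l * P) D, ∑ j ∈ Ioc (l * P) k, g j := by
          rw [Nat.card_Ico]
          congr 1
          rw [hlP1, Nat.add_sub_cancel_left]
      _ = P • (∑ j ∈ Ioc 0 (l * P), g j) +
            ((D : ℚ_[p]) * (∑ j ∈ Ioc (l * P) D, g j) - ∑ j ∈ Ioc (l * P) D, g1 j) := by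
          congr 1
          -- swap the double sum
          have hswap : ∑ k ∈ Finset.Ico (l * P) D, ∑ j ∈ Ioc (l * P) k, g j =
              ∑ j ∈ Ioc (l * P) D, ∑ k ∈ Finset.Ico (l * P) D, (if j ≤ k then g j else 0) := by
            rw [← Finset.sum_comm]
            refine Finset.sum_congr rfl fun k hk => ?_
            rw [Finset.mem_Ico] at hk
            have : Ioc (l * P) k = (Ioc (l * P) D).filter (fun j => j ≤ k) := by
              ext j
              simp only [Finset.mem_Ioc, Finset.mem_filter]
              omega
            rw [this, Finset.sum_filter]
          rw [hswap]
          have hcount : ∀ j ∈ Ioc (l * P) D,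
              ∑ k ∈ Finset.Ico (l * P) D, (if j ≤ k then g j else 0) = (D - j) • g j := by
            intro j hj
            rw [Finset.mem_Ioc] at hj
            rw [← Finset.sum_filter]
            have : (Finset.Ico (l * P) D).filter (fun k => j ≤ k) = Finset.Ico j D := by
              ext k
              simp only [Finset.mem_Ico, Finset.mem_filter]
              omega
            rw [this, Finset.sum_const, Nat.card_Ico]
          rw [Finset.sum_congr rfl hcount]
          have hptw : ∑ x ∈ Ioc (l * P) D, (D - x) • g x =
              ∑ x ∈ Ioc (l * P) D, ((D : ℚ_[p]) * g x - g1 x) := by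
            refine Finset.sum_congr rfl fun j hj => ?_
            rw [Finset.mem_Ioc] at hj
            rw [nsmul_eq_mul, Nat.cast_sub hj.2, sub_mul, hjg j]
          rw [hptw, Finset.sum_sub_distrib, ← Finset.mul_sum]
  rw [hmain]
  -- norm estimates
  have hpow : (p : ℝ) ^ (-(r : ℤ)) * (p : ℝ) ^ (-(r : ℤ)) = (p : ℝ) ^ (-(2 * (r : ℤ))) := by
    rw [← zpow_add₀ hp0R]; ring_nf
  have h1 : ‖(P • (∑ j ∈ Ioc 0 (l * P), g j) : ℚ_[p])‖ ≤ (p : ℝ) ^ (-(2 * (r : ℤ))) := by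
    rw [nsmul_eq_mul, norm_mul, ← hpow]
    exact mul_le_mul (norm_nat_le_pow dvd_rfl) (gprefix_bound hp5 hr l) (norm_nonneg _)
      (by positivity)
  have h2 : ‖(D : ℚ_[p]) * (∑ j ∈ Ioc (l * P) D, g j)‖ ≤ (p : ℝ) ^ (-(2 * (r : ℤ))) := by
    rw [norm_mul, ← hpow]
    refine mul_le_mul (norm_nat_le_pow hPD) ?_ (norm_nonneg _) (by positivity)
    rw [← Finset.sum_filter]
    exact block_bound hp5 hr l
  have h3 : ‖∑ j ∈ Ioc (l * P) D, g1 j‖ ≤ (p : ℝ) ^ (-(2 * (r : ℤ))) := by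
    rw [← Finset.sum_filter]
    exact hblock_bound hp5 hr l
  refine le_trans (Padic.nonarchimedean _ _) (max_le h1 ?_)
  rw [sub_eq_add_neg]
  refine le_trans (Padic.nonarchimedean _ _) (max_le h2 ?_)
  rw [norm_neg]
  exact h3
end

section
/- Let p ≥ 5 be a prime and r a positive integer. Then \sum_{k=1, p \nmid k}^{p^r - 1} \frac{1}{k^2} \equiv 0 \pmod{p^r} and \sum_{k=1, p \nmid k}^{(p^r-1)/2} \frac{1}{k^2} \equiv 0 \pmod{p^r}. -/
open Finset

section Aux

variable {n : ℕ}

lemma aux_sum_units_sq [NeZero n] (h2 : IsUnit (2 : ZMod n)) (h3 : IsUnit (3 : ZMod n)) :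
    ∑ u : (ZMod n)ˣ, ((u : ZMod n)) ^ 2 = 0 := by
  set S := ∑ u : (ZMod n)ˣ, ((u : ZMod n)) ^ 2 with hS
  have key : (2 : ZMod n) ^ 2 * S = S := by
    rw [hS, Finset.mul_sum]
    refine Fintype.sum_equiv (Equiv.mulLeft h2.unit) _ _ fun u => ?_
    simp [mul_pow, h2.unit_spec]
  have h3S : (3 : ZMod n) * S = 0 := by linear_combination key
  exact (h3.mul_right_eq_zero).mp h3S

lemma aux_sum_units_sq_inv [NeZero n] (h2 : IsUnit (2 : ZMod n)) (h3 : IsUnit (3 : ZMod n)) :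
    ∑ u : (ZMod n)ˣ, (((u : ZMod n)) ^ 2)⁻¹ = 0 := by
  have key : ∀ u : (ZMod n)ˣ, (((u : ZMod n)) ^ 2)⁻¹ = ((u⁻¹ : (ZMod n)ˣ) : ZMod n) ^ 2 := by
    intro u
    rw [← Units.val_pow_eq_pow_val, ZMod.inv_coe_unit, ← Units.val_pow_eq_pow_val, ← inv_pow]
  calc ∑ u : (ZMod n)ˣ, (((u : ZMod n)) ^ 2)⁻¹
      = ∑ u : (ZMod n)ˣ, ((u⁻¹ : (ZMod n)ˣ) : ZMod n) ^ 2 := by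
        exact Finset.sum_congr rfl fun u _ => key u
    _ = ∑ u : (ZMod n)ˣ, ((u : ZMod n)) ^ 2 := by
        exact Fintype.sum_equiv (Equiv.inv (ZMod n)ˣ) _ _ fun u => rfl
    _ = 0 := aux_sum_units_sq h2 h3

end Aux

lemma aux_filter_sum_eq_units (p : ℕ) [hp : Fact p.Prime] (r : ℕ) (hr : 0 < r) :
    ∑ k ∈ (Finset.Icc 1 (p ^ r - 1)).filter (fun k => ¬ p ∣ k),
        (((k : ZMod (p ^ r))) ^ 2)⁻¹
      = ∑ u : (ZMod (p ^ r))ˣ, (((u : ZMod (p ^ r))) ^ 2)⁻¹ := by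
  haveI : NeZero (p ^ r) := ⟨pow_ne_zero r hp.out.pos.ne'⟩
  have hn1 : 1 < p ^ r := Nat.one_lt_pow hr.ne' hp.out.one_lt
  haveI : Fact (1 < p ^ r) := ⟨hn1⟩
  have cop : ∀ k, ¬ p ∣ k → Nat.Coprime k (p ^ r) := fun k hk =>
    ((hp.out.coprime_iff_not_dvd).mpr hk).symm.pow_right r
  refine Finset.sum_bij (fun k hk => ZMod.unitOfCoprime k (cop k (Finset.mem_filter.mp hk).2))
    (fun a ha => Finset.mem_univ _) ?_ ?_ ?_
  · intro a ha b hb hab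
    have h1 := Finset.mem_filter.mp ha
    have h2 := Finset.mem_filter.mp hb
    have ha' : a < p ^ r := by
      have := (Finset.mem_Icc.mp h1.1).2; omega
    have hb' : b < p ^ r := by
      have := (Finset.mem_Icc.mp h2.1).2; omega
    have : ((a : ZMod (p ^ r))) = (b : ZMod (p ^ r)) := by
      have := congrArg (Units.val) hab
      simpa [ZMod.coe_unitOfCoprime] using this
    calc a = ((a : ZMod (p ^ r))).val := (ZMod.val_cast_of_lt ha').symm
      _ = ((b : ZMod (p ^ r))).val := by rw [this]
      _ = b := ZMod.val_cast_of_lt hb'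
  · intro u _
    set a := ((u : ZMod (p ^ r))).val with hav
    have haval : ((a : ZMod (p ^ r))) = (u : ZMod (p ^ r)) := ZMod.natCast_zmod_val _
    have hunit : IsUnit ((a : ZMod (p ^ r))) := haval ▸ u.isUnit
    have hcop : Nat.Coprime a (p ^ r) := (ZMod.isUnit_iff_coprime a (p ^ r)).mp hunit
    have ha0 : a ≠ 0 := by
      intro h
      rw [h] at hcop
      rw [Nat.coprime_zero_left] at hcop
      omega
    have hlt : a < p ^ r := ZMod.val_lt _
    have hnd : ¬ p ∣ a := by
      intro hdvd
      have : p ∣ Nat.gcd a (p ^ r) := Nat.dvd_gcd hdvd (dvd_pow_self p hr.ne')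
      rw [hcop] at this
      have h1 := Nat.dvd_one.mp this
      have := hp.out.two_le
      omega
    refine ⟨a, ?_, ?_⟩
    · exact Finset.mem_filter.mpr ⟨Finset.mem_Icc.mpr ⟨by omega, by omega⟩, hnd⟩
    · exact Units.ext (by simp [ZMod.coe_unitOfCoprime, haval])
  · intro a ha
    simp [ZMod.coe_unitOfCoprime]

lemma aux_dvd_iff (p n k : ℕ) (hpn : p ∣ n) (hk : k ≤ n) : p ∣ (n - k) ↔ p ∣ k := by
  constructor
  · intro h
    have := Nat.dvd_sub hpn h
    rwa [Nat.sub_sub_self hk] at this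
  · intro h
    exact Nat.dvd_sub hpn h

lemma aux_half_sum (p : ℕ) [hp : Fact p.Prime] (hp5 : 5 ≤ p) (r : ℕ) (hr : 0 < r) :
    ∑ k ∈ (Finset.Icc 1 (p ^ r - 1)).filter (fun k => ¬ p ∣ k),
        (((k : ZMod (p ^ r))) ^ 2)⁻¹
      = 2 * ∑ k ∈ (Finset.Icc 1 ((p ^ r - 1) / 2)).filter (fun k => ¬ p ∣ k),
        (((k : ZMod (p ^ r))) ^ 2)⁻¹ := by
  set n := p ^ r with hn
  have hodd : Odd n := (hp.out.odd_of_ne_two (by omega)).pow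
  have hn1 : 1 < n := Nat.one_lt_pow hr.ne' hp.out.one_lt
  have hpn : p ∣ n := dvd_pow_self p hr.ne'
  clear_value n
  set M := (n - 1) / 2 with hM
  have h2M : n - 1 = 2 * M := by
    obtain ⟨m, hm⟩ := hodd
    omega
  have hsplit : (Finset.Icc 1 (n - 1)).filter (fun k => ¬ p ∣ k)
      = (Finset.Icc 1 M).filter (fun k => ¬ p ∣ k)
        ∪ (Finset.Icc (M + 1) (n - 1)).filter (fun k => ¬ p ∣ k) := by
    rw [← Finset.filter_union]
    congr 1
    ext x
    simp only [Finset.mem_Icc, Finset.mem_union]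
    omega
  have hdisj : Disjoint ((Finset.Icc 1 M).filter (fun k => ¬ p ∣ k))
      ((Finset.Icc (M + 1) (n - 1)).filter (fun k => ¬ p ∣ k)) := by
    simp only [Finset.disjoint_left, Finset.mem_filter, Finset.mem_Icc]
    rintro a ⟨⟨_, h2⟩, _⟩ ⟨⟨h3, _⟩, _⟩
    omega
  rw [hsplit, Finset.sum_union hdisj]
  have hre : ∑ k ∈ (Finset.Icc (M + 1) (n - 1)).filter (fun k => ¬ p ∣ k),
      (((k : ZMod n)) ^ 2)⁻¹
      = ∑ k ∈ (Finset.Icc 1 M).filter (fun k => ¬ p ∣ k), (((k : ZMod n)) ^ 2)⁻¹ := by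
    refine Finset.sum_nbij' (fun k => n - k) (fun k => n - k) ?_ ?_ ?_ ?_ ?_
    · intro a ha
      obtain ⟨ha1, ha2⟩ := Finset.mem_filter.mp ha
      obtain ⟨hl, hu⟩ := Finset.mem_Icc.mp ha1
      refine Finset.mem_filter.mpr ⟨Finset.mem_Icc.mpr ⟨by omega, by omega⟩, ?_⟩
      rw [aux_dvd_iff p n a hpn (by omega)]
      exact ha2
    · intro a ha
      obtain ⟨ha1, ha2⟩ := Finset.mem_filter.mp ha
      obtain ⟨hl, hu⟩ := Finset.mem_Icc.mp ha1
      have hM1 : M < n := by omega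
      refine Finset.mem_filter.mpr ⟨Finset.mem_Icc.mpr ⟨by omega, by omega⟩, ?_⟩
      rw [aux_dvd_iff p n a hpn (by omega)]
      exact ha2
    · intro a ha
      obtain ⟨ha1, _⟩ := Finset.mem_filter.mp ha
      obtain ⟨hl, hu⟩ := Finset.mem_Icc.mp ha1
      omega
    · intro a ha
      obtain ⟨ha1, _⟩ := Finset.mem_filter.mp ha
      obtain ⟨hl, hu⟩ := Finset.mem_Icc.mp ha1
      omega
    · intro a ha
      obtain ⟨ha1, _⟩ := Finset.mem_filter.mp ha
      obtain ⟨hl, hu⟩ := Finset.mem_Icc.mp ha1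
      have hcast : ((n - a : ℕ) : ZMod n) = -(a : ZMod n) := by
        have : a ≤ n := by omega
        push_cast [Nat.cast_sub this]
        simp [ZMod.natCast_self]
      rw [hcast]
      ring_nf
  rw [hre, two_mul]

lemma aux_bridge (p : ℕ) [hp : Fact p.Prime] (r : ℕ) (hr : 0 < r) (s : Finset ℕ)
    (hs : ∀ k ∈ s, ¬ p ∣ k)
    (h0 : ∑ k ∈ s, (((k : ZMod (p ^ r))) ^ 2)⁻¹ = 0) :
    ‖∑ k ∈ s, ((k : ℚ_[p]) ^ 2)⁻¹‖ ≤ (p : ℝ) ^ (-(r : ℤ)) := by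
  have hnorm : ∀ k ∈ s, ‖((k : ℤ_[p]) ^ 2)‖ = 1 := by
    intro k hk
    have h1 : ‖((k : ℤ_[p]))‖ = 1 := by
      refine le_antisymm (PadicInt.norm_le_one _) ?_
      by_contra h
      push_neg at h
      have : ((k : ℤ_[p])) = (((k : ℤ) : ℤ_[p])) := by push_cast; ring
      rw [this] at h
      have := (PadicInt.norm_int_lt_one_iff_dvd (k : ℤ)).mp h
      exact hs k hk (Int.natCast_dvd_natCast.mp this)
    rw [norm_pow, h1, one_pow]
  set z : ℕ → ℤ_[p] := fun k => ((k : ℤ_[p]) ^ 2).inv with hz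
  have key1 : ∀ k ∈ s, z k * (k : ℤ_[p]) ^ 2 = 1 := fun k hk =>
    PadicInt.inv_mul (hnorm k hk)
  have coe_z : ∀ k ∈ s, ((z k : ℚ_[p])) = ((k : ℚ_[p]) ^ 2)⁻¹ := by
    intro k hk
    have := congrArg (fun x : ℤ_[p] => (x : ℚ_[p])) (key1 k hk)
    push_cast at this
    exact eq_inv_of_mul_eq_one_left this
  have hsum : ((∑ k ∈ s, z k : ℤ_[p]) : ℚ_[p]) = ∑ k ∈ s, ((k : ℚ_[p]) ^ 2)⁻¹ := by
    rw [show ((∑ k ∈ s, z k : ℤ_[p]) : ℚ_[p]) = ∑ k ∈ s, ((z k : ℚ_[p])) from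
      map_sum PadicInt.Coe.ringHom _ _]
    exact Finset.sum_congr rfl coe_z
  rw [← hsum, PadicInt.padic_norm_e_of_padicInt]
  rw [PadicInt.norm_le_pow_iff_mem_span_pow]
  rw [← PadicInt.ker_toZModPow, RingHom.mem_ker, map_sum]
  have hterm : ∀ k ∈ s, PadicInt.toZModPow r (z k) = (((k : ZMod (p ^ r))) ^ 2)⁻¹ := by
    intro k hk
    have e1 : ((k : ZMod (p ^ r))) ^ 2 * PadicInt.toZModPow r (z k) = 1 := by
      have := congrArg (PadicInt.toZModPow r) (key1 k hk)
      rw [map_mul, map_pow, map_natCast, map_one] at this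
      linear_combination this
    exact (ZMod.inv_eq_of_mul_eq_one _ _ _ e1).symm
  rw [Finset.sum_congr rfl hterm]
  exact h0

theorem sum_inv_sq_congruences (p : ℕ) [Fact p.Prime] (hp5 : 5 ≤ p)
    (r : ℕ) (hr : 0 < r) :
    ‖∑ k ∈ (Finset.Icc 1 (p ^ r - 1)).filter (fun k => ¬ p ∣ k),
        ((k : ℚ_[p]) ^ 2)⁻¹‖ ≤ (p : ℝ) ^ (-(r : ℤ)) ∧
    ‖∑ k ∈ (Finset.Icc 1 ((p ^ r - 1) / 2)).filter (fun k => ¬ p ∣ k),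
        ((k : ℚ_[p]) ^ 2)⁻¹‖ ≤ (p : ℝ) ^ (-(r : ℤ)) := by
  have hp := (Fact.out : p.Prime)
  haveI : NeZero (p ^ r) := ⟨pow_ne_zero r hp.pos.ne'⟩
  have h2 : IsUnit (2 : ZMod (p ^ r)) := by
    have : ((2 : ℕ) : ZMod (p ^ r)) = 2 := by norm_cast
    rw [← this, ZMod.isUnit_iff_coprime]
    exact (Nat.coprime_primes Nat.prime_two hp |>.mpr (by omega)).pow_right r
  have h3 : IsUnit (3 : ZMod (p ^ r)) := by
    have : ((3 : ℕ) : ZMod (p ^ r)) = 3 := by norm_cast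
    rw [← this, ZMod.isUnit_iff_coprime]
    exact (Nat.coprime_primes Nat.prime_three hp |>.mpr (by omega)).pow_right r
  have hfull : ∑ k ∈ (Finset.Icc 1 (p ^ r - 1)).filter (fun k => ¬ p ∣ k),
      (((k : ZMod (p ^ r))) ^ 2)⁻¹ = 0 := by
    rw [aux_filter_sum_eq_units p r hr]
    exact aux_sum_units_sq_inv h2 h3
  have hhalf : ∑ k ∈ (Finset.Icc 1 ((p ^ r - 1) / 2)).filter (fun k => ¬ p ∣ k),
      (((k : ZMod (p ^ r))) ^ 2)⁻¹ = 0 := by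
    have := aux_half_sum p hp5 r hr
    rw [hfull] at this
    exact (h2.mul_right_eq_zero).mp this.symm
  constructor
  · exact aux_bridge p r hr _ (fun k hk => (Finset.mem_filter.mp hk).2) hfull
  · exact aux_bridge p r hr _ (fun k hk => (Finset.mem_filter.mp hk).2) hhalf
end

section
/- Let p ≥ 5 be a prime, s a positive integer, and l a nonnegative integer. Then \sum_{j=1, p \nmid j}^{l p^s + (p^s - 1)/2} \frac{1}{j^2} \equiv 0 \pmod{p^s}. -/
open Finset

namespace SumInvSqAux

/-- The basic summand in `ZMod q`. -/
def ff (p q : ℕ) (j : ℕ) : ZMod q :=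
  if p ∣ j then 0 else ((j : ZMod q) ^ 2)⁻¹

variable {p s q : ℕ}

lemma ff_periodic (hpq : p ∣ q) (j : ℕ) : ff p q (j + q) = ff p q j := by
  have hcast : ((j + q : ℕ) : ZMod q) = (j : ZMod q) := by
    rw [Nat.cast_add, ZMod.natCast_self, add_zero]
  have hiff : (p ∣ j + q) ↔ p ∣ j := by
    constructor
    · intro hd
      have := Nat.dvd_sub hd hpq
      simpa using this
    · exact fun hd => hd.add hpq
  unfold ff
  rw [hcast]
  by_cases hj : p ∣ j
  · rw [if_pos hj, if_pos (hiff.mpr hj)]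
  · rw [if_neg hj, if_neg (fun hc => hj (hiff.mp hc))]

lemma sum_period {M : Type*} [AddCommGroup M] (g : ℕ → M) (n : ℕ)
    (hg : ∀ j, g (j + n) = g j) (a : ℕ) :
    ∑ j ∈ Ico a (a + n), g j = ∑ j ∈ range n, g j := by
  induction a with
  | zero => rw [Nat.zero_add, Finset.range_eq_Ico]
  | succ a ih =>
    have h1 : ∑ j ∈ Ico a (a + n + 1), g j = (∑ j ∈ Ico a (a + n), g j) + g (a + n) :=
      Finset.sum_Ico_succ_top (Nat.le_add_right _ _) g
    have h2 : ∑ j ∈ Ico a (a + n + 1), g j = g a + ∑ j ∈ Ico (a + 1) (a + n + 1), g j :=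
      Finset.sum_eq_sum_Ico_succ_bot (by omega) g
    have key : g a + ∑ j ∈ Ico (a + 1) (a + n + 1), g j = g a + ∑ j ∈ range n, g j := by
      rw [← h2, h1, ih, hg, add_comm]
    have harr : a + 1 + n = a + n + 1 := by omega
    rw [harr]
    exact add_left_cancel key

lemma isUnit_cast (hp : p.Prime) (hs : 0 < s) (hq : q = p ^ s) {j : ℕ} (hj : ¬ p ∣ j) :
    IsUnit (j : ZMod q) := by
  haveI : NeZero q := ⟨hq ▸ pow_ne_zero _ hp.pos.ne'⟩
  rw [ZMod.isUnit_iff_coprime, hq]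
  exact Nat.Coprime.pow_right _ ((Nat.Prime.coprime_iff_not_dvd hp).mpr hj).symm

lemma not_dvd_two (hp : p.Prime) (hp5 : 5 ≤ p) : ¬ p ∣ 2 := by
  intro h
  have := Nat.le_of_dvd (by norm_num) h
  omega

lemma not_dvd_three (hp : p.Prime) (hp5 : 5 ≤ p) : ¬ p ∣ 3 := by
  intro h
  have := Nat.le_of_dvd (by norm_num) h
  omega

open scoped Classical in
lemma sum_sq_units [NeZero q] (hp : p.Prime) (hs : 0 < s) (hq : q = p ^ s) (hp5 : 5 ≤ p) :
    ∑ x : ZMod q, (if IsUnit x then x ^ 2 else 0) = 0 := by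
  obtain ⟨u, hu0⟩ := isUnit_cast hp hs hq (not_dvd_two hp hp5) (j := 2)
  have hu : (u : ZMod q) = 2 := by exact_mod_cast hu0
  set S := ∑ x : ZMod q, (if IsUnit x then x ^ 2 else 0) with hS
  have hre : S = ∑ x : ZMod q, (if IsUnit ((2 : ZMod q) * x) then
      ((2 : ZMod q) * x) ^ 2 else 0) := by
    rw [hS]
    exact (Equiv.sum_comp (Units.mulLeft u)
      (fun x => if IsUnit x then x ^ 2 else 0)).symm.trans (by simp [hu])
  have hre2 : (∑ x : ZMod q, (if IsUnit ((2 : ZMod q) * x) then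
      ((2 : ZMod q) * x) ^ 2 else 0)) = 4 * S := by
    rw [hS, Finset.mul_sum]
    refine Finset.sum_congr rfl fun x _ => ?_
    by_cases hx : IsUnit x
    · rw [if_pos (by exact (hu ▸ u.isUnit).mul hx), if_pos hx]
      ring
    · rw [if_neg (fun hc => hx (IsUnit.mul_iff.mp hc).2), if_neg hx]
      ring
  have h4 : S = 4 * S := hre.trans hre2
  have h3 : (3 : ZMod q) * S = 0 := by linear_combination -h4
  obtain ⟨v, hv0⟩ := isUnit_cast hp hs hq (not_dvd_three hp hp5) (j := 3)
  have hv : (v : ZMod q) = 3 := by exact_mod_cast hv0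
  calc S = ((v⁻¹ : (ZMod q)ˣ) : ZMod q) * (3 * S) := by
        rw [← hv, ← mul_assoc, Units.inv_mul, one_mul]
    _ = 0 := by rw [h3, mul_zero]

open scoped Classical in
lemma sum_inv_sq_units [NeZero q] (hp : p.Prime) (hs : 0 < s) (hq : q = p ^ s) (hp5 : 5 ≤ p) :
    ∑ x : ZMod q, (if IsUnit x then (x ^ 2)⁻¹ else 0) = 0 := by
  have hIU : ∀ x : ZMod q, IsUnit x → IsUnit x⁻¹ := fun x hx =>
    IsUnit.of_mul_eq_one _ (ZMod.inv_mul_of_unit x hx)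
  have hinv2 : ∀ x : ZMod q, IsUnit x → (x⁻¹)⁻¹ = x := fun x hx =>
    ZMod.inv_eq_of_mul_eq_one _ _ _ (ZMod.inv_mul_of_unit x hx)
  set g : ZMod q → ZMod q := fun x => if IsUnit x then x⁻¹ else x with hg
  have hinvol : Function.Involutive g := by
    intro x
    by_cases hx : IsUnit x
    · simp only [hg, if_pos hx, if_pos (hIU x hx), hinv2 x hx]
    · simp only [hg, if_neg hx, if_neg hx]
  have := (Equiv.sum_comp (Function.Involutive.toPerm g hinvol)
    (fun x => if IsUnit x then (x ^ 2)⁻¹ else 0)).symm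
  rw [this]
  have heq : ∀ x : ZMod q,
      (if IsUnit ((Function.Involutive.toPerm g hinvol) x)
          then (((Function.Involutive.toPerm g hinvol) x) ^ 2)⁻¹ else 0)
        = (if IsUnit x then x ^ 2 else 0) := by
    intro x
    have hperm : (Function.Involutive.toPerm g hinvol) x = g x := rfl
    by_cases hx : IsUnit x
    · have hgx : g x = x⁻¹ := by simp [hg, hx]
      rw [hperm, hgx, if_pos (hIU x hx), if_pos hx]
      refine ZMod.inv_eq_of_mul_eq_one _ _ _ ?_
      rw [← mul_pow, ZMod.inv_mul_of_unit x hx, one_pow]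
    · have hgx : g x = x := by simp [hg, hx]
      rw [hperm, hgx, if_neg hx, if_neg hx]
  rw [Finset.sum_congr rfl (fun x _ => heq x)]
  exact sum_sq_units hp hs hq hp5

open scoped Classical in
lemma sum_range_ff (hp : p.Prime) (hs : 0 < s) (hq : q = p ^ s) (hp5 : 5 ≤ p) :
    ∑ j ∈ range q, ff p q j = 0 := by
  haveI : NeZero q := ⟨hq ▸ pow_ne_zero _ hp.pos.ne'⟩
  have : ∑ j ∈ range q, ff p q j
      = ∑ x : ZMod q, (if IsUnit x then (x ^ 2)⁻¹ else 0) := by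
    refine Finset.sum_nbij' (fun j => (j : ZMod q)) (fun x => x.val) ?_ ?_ ?_ ?_ ?_
    · intro a _; exact Finset.mem_univ _
    · intro x _; exact Finset.mem_range.mpr (ZMod.val_lt x)
    · intro a ha
      exact ZMod.val_cast_of_lt (Finset.mem_range.mp ha)
    · intro x _
      exact ZMod.natCast_rightInverse x
    · intro a _
      unfold ff
      by_cases ha : p ∣ a
      · rw [if_pos ha, if_neg]
        intro hc
        rw [ZMod.isUnit_iff_coprime, hq, Nat.coprime_pow_right_iff hs,
          Nat.coprime_comm, hp.coprime_iff_not_dvd] at hc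
        exact hc ha
      · rw [if_neg ha, if_pos (isUnit_cast hp hs hq ha)]
  rw [this]
  exact sum_inv_sq_units hp hs hq hp5

lemma ff_reflect (hpq : p ∣ q) {j : ℕ} (h2 : j ≤ q) :
    ff p q (q - j) = ff p q j := by
  have hiff : (p ∣ q - j) ↔ p ∣ j := by
    constructor
    · intro hd
      have := Nat.dvd_sub hpq hd
      rwa [Nat.sub_sub_self h2] at this
    · exact fun hd => Nat.dvd_sub hpq hd
  have hcast : ((q - j : ℕ) : ZMod q) = -(j : ZMod q) := by
    rw [Nat.cast_sub h2, ZMod.natCast_self, zero_sub]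
  unfold ff
  by_cases hj : p ∣ j
  · rw [if_pos hj, if_pos (hiff.mpr hj)]
  · rw [if_neg hj, if_neg (fun hc => hj (hiff.mp hc)), hcast, neg_sq]

lemma half_sum (hp : p.Prime) (hs : 0 < s) (hq : q = p ^ s) (hp5 : 5 ≤ p) :
    ∑ j ∈ Icc 1 ((q - 1) / 2), ff p q j = 0 := by
  have hpq : p ∣ q := hq ▸ dvd_pow_self p hs.ne'
  have hodd : Odd q := hq ▸ (hp.odd_of_ne_two (by omega)).pow
  obtain ⟨h, hh⟩ := hodd
  have hqs : 5 ≤ q := hq ▸ le_trans hp5 (Nat.le_self_pow hs.ne' p)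
  have hdef : (q - 1) / 2 = h := by omega
  rw [hdef]
  have hpair : ∑ j ∈ Ioc h (2 * h), ff p q j = ∑ j ∈ Ioc 0 h, ff p q j := by
    refine Finset.sum_nbij' (fun j => q - j) (fun j => q - j) ?_ ?_ ?_ ?_ ?_
    · intro a ha
      simp only [Finset.mem_Ioc] at ha ⊢
      omega
    · intro a ha
      simp only [Finset.mem_Ioc] at ha ⊢
      omega
    · intro a ha; simp only [Finset.mem_Ioc] at ha; omega
    · intro a ha; simp only [Finset.mem_Ioc] at ha; omega
    · intro a ha
      simp only [Finset.mem_Ioc] at ha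
      exact (ff_reflect hpq (by omega)).symm
  have hsplit : (∑ j ∈ Ioc 0 h, ff p q j) + ∑ j ∈ Ioc h (2 * h), ff p q j
      = ∑ j ∈ Ioc 0 (2 * h), ff p q j :=
    Finset.sum_Ioc_consecutive _ (by omega) (by omega)
  have hfull : ∑ j ∈ Ioc 0 (2 * h), ff p q j = 0 := by
    have hr : ∑ j ∈ range q, ff p q j
        = ff p q 0 + ∑ j ∈ Ioc 0 (2 * h), ff p q j := by
      rw [Finset.range_eq_Ico, Finset.sum_eq_sum_Ico_succ_bot (by omega)]
      congr 1
      apply Finset.sum_congr _ (fun _ _ => rfl)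
      ext x
      simp only [Finset.mem_Ico, Finset.mem_Ioc]
      omega
    have h0 : ff p q 0 = 0 := by unfold ff; rw [if_pos (dvd_zero p)]
    have := sum_range_ff hp hs hq hp5
    rw [hr, h0, zero_add] at this
    exact this
  have hXX : (∑ j ∈ Ioc 0 h, ff p q j) + ∑ j ∈ Ioc 0 h, ff p q j = 0 := by
    calc (∑ j ∈ Ioc 0 h, ff p q j) + ∑ j ∈ Ioc 0 h, ff p q j
        = (∑ j ∈ Ioc 0 h, ff p q j) + ∑ j ∈ Ioc h (2 * h), ff p q j := by rw [hpair]
      _ = ∑ j ∈ Ioc 0 (2 * h), ff p q j := hsplit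
      _ = 0 := hfull
  obtain ⟨v, hv0⟩ := isUnit_cast hp hs hq (not_dvd_two hp hp5) (j := 2)
  have hv : (v : ZMod q) = 2 := by exact_mod_cast hv0
  have h2H : (2 : ZMod q) * ∑ j ∈ Ioc 0 h, ff p q j = 0 := by
    rw [two_mul]; exact hXX
  have hIcc : Icc 1 h = Ioc 0 h := by ext x; simp [Nat.lt_iff_add_one_le]
  rw [hIcc]
  calc (∑ j ∈ Ioc 0 h, ff p q j)
      = ((v⁻¹ : (ZMod q)ˣ) : ZMod q) * ((2 : ZMod q) * ∑ j ∈ Ioc 0 h, ff p q j) := by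
        rw [← hv, ← mul_assoc, Units.inv_mul, one_mul]
    _ = 0 := by rw [h2H, mul_zero]

lemma total_sum (hp : p.Prime) (hs : 0 < s) (hq : q = p ^ s) (hp5 : 5 ≤ p) (l : ℕ) :
    ∑ j ∈ Icc 1 (l * q + (q - 1) / 2), ff p q j = 0 := by
  have hpq : p ∣ q := hq ▸ dvd_pow_self p hs.ne'
  induction l with
  | zero => simpa using half_sum hp hs hq hp5
  | succ l ih =>
    have hsplit : (∑ j ∈ Ioc 0 (l * q + (q - 1) / 2), ff p q j)
        + ∑ j ∈ Ioc (l * q + (q - 1) / 2) ((l + 1) * q + (q - 1) / 2), ff p q j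
        = ∑ j ∈ Ioc 0 ((l + 1) * q + (q - 1) / 2), ff p q j :=
      Finset.sum_Ioc_consecutive _ (by omega) (by nlinarith [Nat.le_refl q])
    have hIoc : Ioc (l * q + (q - 1) / 2) ((l + 1) * q + (q - 1) / 2)
        = Ico (l * q + (q - 1) / 2 + 1) (l * q + (q - 1) / 2 + 1 + q) := by
      ext x
      simp only [Finset.mem_Ioc, Finset.mem_Ico, add_mul, one_mul]
      omega
    have hblock : ∑ j ∈ Ioc (l * q + (q - 1) / 2) ((l + 1) * q + (q - 1) / 2), ff p q j = 0 := by
      rw [hIoc, sum_period (ff p q) q (ff_periodic hpq) _]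
      exact sum_range_ff hp hs hq hp5
    have hIcc : ∀ n : ℕ, Icc 1 n = Ioc 0 n := by
      intro n; ext x; simp [Nat.lt_iff_add_one_le]
    rw [hIcc] at ih ⊢
    rw [← hsplit, ih, hblock, add_zero]

lemma term_close [Fact p.Prime] (hp : p.Prime) (hs : 0 < s) (hq : q = p ^ s) {j : ℕ}
    (hj : ¬ p ∣ j) :
    ‖((j : ℚ_[p]) ^ 2)⁻¹ - (((ff p q j).val : ℕ) : ℚ_[p])‖ ≤ (p : ℝ) ^ (-(s : ℤ)) := by
  haveI : NeZero q := ⟨hq ▸ pow_ne_zero _ hp.pos.ne'⟩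
  have hu : IsUnit ((j : ZMod q) ^ 2) := (isUnit_cast hp hs hq hj).pow 2
  have hff : ff p q j = ((j : ZMod q) ^ 2)⁻¹ := if_neg hj
  have hone : ((j : ZMod q)) ^ 2 * ((j : ZMod q) ^ 2)⁻¹ = 1 := ZMod.mul_inv_of_unit _ hu
  set m := (ff p q j).val with hm
  have hmc : ((m : ℕ) : ZMod q) = ((j : ZMod q) ^ 2)⁻¹ := by
    rw [hm, ZMod.natCast_val, ZMod.cast_id, hff]
  have hdvd : (q : ℤ) ∣ (1 - (j : ℤ) ^ 2 * (m : ℤ)) := by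
    rw [← ZMod.intCast_zmod_eq_zero_iff_dvd]
    push_cast
    rw [hmc, hone, sub_self]
  have hnj : ‖(j : ℚ_[p])‖ = 1 := by
    have h1 : ‖((j : ℤ) : ℚ_[p])‖ ≤ 1 := Padic.norm_int_le_one _
    have h2 : ¬ (‖((j : ℤ) : ℚ_[p])‖ < 1) := by
      rw [Padic.norm_intCast_lt_one_iff]
      exact fun hc => hj (Int.natCast_dvd_natCast.mp hc)
    have hc : ((j : ℤ) : ℚ_[p]) = (j : ℚ_[p]) := by push_cast; ring
    rw [hc] at h1 h2
    exact le_antisymm h1 (not_lt.mp h2)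
  have hjne : (j : ℚ_[p]) ≠ 0 := by
    intro hc
    rw [hc, norm_zero] at hnj
    norm_num at hnj
  have key : ((j : ℚ_[p]) ^ 2)⁻¹ - (m : ℚ_[p])
      = ((j : ℚ_[p]) ^ 2)⁻¹ * (1 - (j : ℚ_[p]) ^ 2 * (m : ℚ_[p])) := by
    field_simp
  have hcast2 : (1 - (j : ℚ_[p]) ^ 2 * (m : ℚ_[p]))
      = (((1 - (j : ℤ) ^ 2 * (m : ℤ)) : ℤ) : ℚ_[p]) := by push_cast; ring
  calc ‖((j : ℚ_[p]) ^ 2)⁻¹ - (m : ℚ_[p])‖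
      = ‖((j : ℚ_[p]) ^ 2)⁻¹‖ * ‖1 - (j : ℚ_[p]) ^ 2 * (m : ℚ_[p])‖ := by
        rw [key, norm_mul]
    _ = ‖1 - (j : ℚ_[p]) ^ 2 * (m : ℚ_[p])‖ := by
        rw [norm_inv, norm_pow, hnj]; norm_num
    _ ≤ (p : ℝ) ^ (-(s : ℤ)) := by
        rw [hcast2]
        refine (Padic.norm_int_le_pow_iff_dvd _ s).mpr ?_
        have hq' : (q : ℤ) = (p : ℤ) ^ s := by exact_mod_cast hq
        rw [hq'] at hdvd
        exact_mod_cast hdvd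

end SumInvSqAux

theorem sum_inv_sq_up_to_half_congruence (p : ℕ) [Fact p.Prime] (hp5 : 5 ≤ p)
    (s : ℕ) (hs : 0 < s) (l : ℕ) :
    ‖∑ j ∈ (Finset.Icc 1 (l * p ^ s + (p ^ s - 1) / 2)).filter (fun j => ¬ p ∣ j),
        ((j : ℚ_[p]) ^ 2)⁻¹‖ ≤ (p : ℝ) ^ (-(s : ℤ)) := by
  have hp : p.Prime := Fact.out
  haveI : NeZero (p ^ s) := ⟨pow_ne_zero _ hp.pos.ne'⟩
  set F := (Finset.Icc 1 (l * p ^ s + (p ^ s - 1) / 2)).filter (fun j => ¬ p ∣ j) with hF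
  set M : ℕ := ∑ j ∈ F, (SumInvSqAux.ff p (p ^ s) j).val with hM
  have hMzero : ((M : ℕ) : ZMod (p ^ s)) = 0 := by
    rw [hM, Nat.cast_sum]
    have h1 : ∀ j ∈ F, (((SumInvSqAux.ff p (p ^ s) j).val : ℕ) : ZMod (p ^ s)) = SumInvSqAux.ff p (p ^ s) j :=
      fun j _ => by rw [ZMod.natCast_val, ZMod.cast_id]
    rw [Finset.sum_congr rfl h1, hF, Finset.sum_filter]
    have h2 : ∀ j, (if ¬ p ∣ j then SumInvSqAux.ff p (p ^ s) j else 0) = SumInvSqAux.ff p (p ^ s) j := by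
      intro j
      by_cases hj : p ∣ j
      · rw [if_neg (not_not_intro hj)]
        unfold SumInvSqAux.ff
        rw [if_pos hj]
      · rw [if_pos hj]
    simp_rw [h2]
    exact SumInvSqAux.total_sum hp hs rfl hp5 l
  have hMnorm : ‖((M : ℕ) : ℚ_[p])‖ ≤ (p : ℝ) ^ (-(s : ℤ)) := by
    have hdvd : (p ^ s : ℤ) ∣ (M : ℤ) := by
      exact_mod_cast (ZMod.natCast_eq_zero_iff M (p ^ s)).mp hMzero
    have := (Padic.norm_int_le_pow_iff_dvd (M : ℤ) s).mpr hdvd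
    have hc : ((M : ℤ) : ℚ_[p]) = ((M : ℕ) : ℚ_[p]) := by push_cast; ring
    rwa [hc] at this
  have hdiff : ‖(∑ j ∈ F, ((j : ℚ_[p]) ^ 2)⁻¹) - ((M : ℕ) : ℚ_[p])‖ ≤ (p : ℝ) ^ (-(s : ℤ)) := by
    rw [hM, Nat.cast_sum, ← Finset.sum_sub_distrib]
    refine IsUltrametricDist.norm_sum_le_of_forall_le_of_nonneg (by positivity) ?_
    intro j hjF
    have hj : ¬ p ∣ j := (Finset.mem_filter.mp hjF).2
    exact SumInvSqAux.term_close hp hs rfl hj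
  calc ‖∑ j ∈ F, ((j : ℚ_[p]) ^ 2)⁻¹‖
      = ‖((∑ j ∈ F, ((j : ℚ_[p]) ^ 2)⁻¹) - ((M : ℕ) : ℚ_[p])) + ((M : ℕ) : ℚ_[p])‖ := by
        congr 1
        ring
    _ ≤ max ‖(∑ j ∈ F, ((j : ℚ_[p]) ^ 2)⁻¹) - ((M : ℕ) : ℚ_[p])‖ ‖((M : ℕ) : ℚ_[p])‖ :=
        IsUltrametricDist.norm_add_le_max _ _
    _ ≤ (p : ℝ) ^ (-(s : ℤ)) := max_le hdiff hMnorm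
end

section
/- Let p ≥ 5 be a prime, s a positive integer, and l a nonnegative integer. Then \sum_{j=1, p \nmid j}^{p^s l + p^s - 1} \frac{1}{j^2} \equiv 0 \pmod{p^s}. -/
open Finset

section aux

private lemma ringHom_map_ring_inverse {R S : Type*} [CommRing R] [CommRing S]
    (f : R →+* S) {x : R} (hx : IsUnit x) :
    f (Ring.inverse x) = Ring.inverse (f x) := by
  obtain ⟨u, rfl⟩ := hx
  calc f (Ring.inverse ↑u) = f ↑u⁻¹ := by rw [Ring.inverse_unit]
    _ = ↑(Units.map (f : R →* S) u⁻¹) := (Units.coe_map _ _).symm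
    _ = ↑(Units.map (f : R →* S) u)⁻¹ := by rw [map_inv]
    _ = Ring.inverse ↑(Units.map (f : R →* S) u) := (Ring.inverse_unit _).symm
    _ = Ring.inverse (f ↑u) := by rw [Units.coe_map]; rfl

variable (p : ℕ) [Fact p.Prime] (s : ℕ)

private lemma not_dvd_isUnit_zmod (hs : 0 < s) {j : ℕ} (hj : ¬ p ∣ j) :
    IsUnit ((j : ZMod (p ^ s))) := by
  rw [ZMod.isUnit_iff_coprime]
  exact Nat.Coprime.pow_right _
    (Nat.coprime_comm.mp ((Nat.Prime.coprime_iff_not_dvd Fact.out).mpr hj))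

private lemma isUnit_zmod_not_dvd (hs : 0 < s) {j : ℕ}
    (hj : IsUnit ((j : ZMod (p ^ s)))) : ¬ p ∣ j := by
  rw [ZMod.isUnit_iff_coprime] at hj
  intro hdvd
  have h1 : p ∣ p ^ s := dvd_pow_self p hs.ne'
  have hp2 : 2 ≤ p := (Fact.out : p.Prime).two_le
  have hg : p ∣ Nat.gcd j (p ^ s) := Nat.dvd_gcd hdvd h1
  rw [Nat.Coprime] at hj
  rw [hj] at hg
  have := Nat.le_of_dvd one_pos hg
  omega

private lemma sum_units_sq_s12 (hp5 : 5 ≤ p) (hs : 0 < s) :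
    ∑ u : (ZMod (p ^ s))ˣ, ((u : ZMod (p ^ s))) ^ 2 = 0 := by
  haveI : NeZero (p ^ s) := ⟨pow_ne_zero s (Fact.out : p.Prime).ne_zero⟩
  have hp : p.Prime := Fact.out
  have hnd : ∀ q : ℕ, q.Prime → q ≠ p → ¬ q ∣ p ^ s := by
    intro q hq hqp hdvd
    exact hqp ((Nat.prime_dvd_prime_iff_eq hq hp).mp (hq.dvd_of_dvd_pow hdvd))
  have h2 : IsUnit ((2 : ℕ) : ZMod (p ^ s)) := by
    rw [ZMod.isUnit_iff_coprime]
    exact (Nat.Prime.coprime_iff_not_dvd Nat.prime_two).mpr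
      (hnd 2 Nat.prime_two (by omega))
  have h3 : IsUnit ((3 : ℕ) : ZMod (p ^ s)) := by
    rw [ZMod.isUnit_iff_coprime]
    exact (Nat.Prime.coprime_iff_not_dvd Nat.prime_three).mpr
      (hnd 3 Nat.prime_three (by omega))
  obtain ⟨t, ht⟩ := h2
  obtain ⟨w, hw⟩ := h3
  set S : ZMod (p ^ s) := ∑ u : (ZMod (p ^ s))ˣ, ((u : ZMod (p ^ s))) ^ 2 with hS
  have hre : ∑ u : (ZMod (p ^ s))ˣ, (((t * u : (ZMod (p ^ s))ˣ) : ZMod (p ^ s))) ^ 2 = S :=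
    Fintype.sum_equiv (Equiv.mulLeft t) _ _ (fun u => rfl)
  have hexp : ∀ u : (ZMod (p ^ s))ˣ,
      (((t * u : (ZMod (p ^ s))ˣ) : ZMod (p ^ s))) ^ 2
        = ((2 : ℕ) : ZMod (p ^ s)) ^ 2 * ((u : ZMod (p ^ s))) ^ 2 := by
    intro u
    rw [Units.val_mul, mul_pow, ht]
  rw [Finset.sum_congr rfl (fun u _ => hexp u), ← Finset.mul_sum, ← hS] at hre
  have h4 : ((2 : ℕ) : ZMod (p ^ s)) ^ 2 * S - S = 0 := by rw [hre]; ring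
  have h3S : ((3 : ℕ) : ZMod (p ^ s)) * S = 0 := by
    have : ((2 : ℕ) : ZMod (p ^ s)) ^ 2 * S - S = ((3 : ℕ) : ZMod (p ^ s)) * S := by
      push_cast
      ring
    rwa [this] at h4
  rw [← hw] at h3S
  exact (Units.mul_right_eq_zero w).mp h3S

private lemma sum_units_inv_sq_s12 (hp5 : 5 ≤ p) (hs : 0 < s) :
    ∑ u : (ZMod (p ^ s))ˣ, Ring.inverse (((u : ZMod (p ^ s))) ^ 2) = 0 := by
  haveI : NeZero (p ^ s) := ⟨pow_ne_zero s (Fact.out : p.Prime).ne_zero⟩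
  have hterm : ∀ u : (ZMod (p ^ s))ˣ,
      Ring.inverse (((u : ZMod (p ^ s))) ^ 2) = (((u⁻¹ : (ZMod (p ^ s))ˣ) : ZMod (p ^ s))) ^ 2 := by
    intro u
    have : ((u : ZMod (p ^ s))) ^ 2 = ((u ^ 2 : (ZMod (p ^ s))ˣ) : ZMod (p ^ s)) := by
      rw [Units.val_pow_eq_pow_val]
    rw [this, Ring.inverse_unit, ← inv_pow, Units.val_pow_eq_pow_val]
  rw [Finset.sum_congr rfl (fun u _ => hterm u)]
  have := sum_units_sq_s12 p s hp5 hs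
  calc ∑ u : (ZMod (p ^ s))ˣ, (((u⁻¹ : (ZMod (p ^ s))ˣ) : ZMod (p ^ s))) ^ 2
      = ∑ u : (ZMod (p ^ s))ˣ, ((u : ZMod (p ^ s))) ^ 2 :=
        Fintype.sum_equiv (Equiv.inv _) _ _ (by intro u; simp)
    _ = 0 := this

/-- the summand, as a function on `ℕ` with values in `ZMod (p ^ s)`. -/
private noncomputable def hfun (j : ℕ) : ZMod (p ^ s) :=
  if p ∣ j then 0 else Ring.inverse (((j : ZMod (p ^ s))) ^ 2)

private lemma sum_range_hfun (hp5 : 5 ≤ p) (hs : 0 < s) :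
    ∑ j ∈ Finset.range (p ^ s), hfun p s j = 0 := by
  haveI : NeZero (p ^ s) := ⟨pow_ne_zero s (Fact.out : p.Prime).ne_zero⟩
  have step1 : ∑ j ∈ Finset.range (p ^ s), hfun p s j
      = ∑ x : ZMod (p ^ s), (if IsUnit x then Ring.inverse (x ^ 2) else 0) := by
    apply Finset.sum_nbij' (fun (j : ℕ) => (j : ZMod (p ^ s)))
      (fun (x : ZMod (p ^ s)) => x.val)
    · intro a _; exact Finset.mem_univ _
    · intro x _; exact Finset.mem_range.mpr (ZMod.val_lt x)
    · intro a ha; exact ZMod.val_natCast_of_lt (Finset.mem_range.mp ha)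
    · intro x _; exact ZMod.natCast_zmod_val x
    · intro a _
      unfold hfun
      by_cases hd : p ∣ a
      · have : ¬ IsUnit ((a : ZMod (p ^ s))) := fun hu => (isUnit_zmod_not_dvd p s hs hu) hd
        simp [hd, this]
      · have : IsUnit ((a : ZMod (p ^ s))) := not_dvd_isUnit_zmod p s hs hd
        simp [hd, this]
  rw [step1, ← Finset.sum_filter]
  have himg : Finset.univ.image (fun u : (ZMod (p ^ s))ˣ => (u : ZMod (p ^ s)))
      = Finset.univ.filter (fun x : ZMod (p ^ s) => IsUnit x) := by
    ext x
    simp only [Finset.mem_image, Finset.mem_filter, Finset.mem_univ, true_and]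
    constructor
    · rintro ⟨u, _, rfl⟩; exact u.isUnit
    · rintro ⟨u, rfl⟩; exact ⟨u, rfl⟩
  rw [← himg, Finset.sum_image (fun x _ y _ h => Units.ext h)]
  exact sum_units_inv_sq_s12 p s hp5 hs

private lemma sum_Ioc_hfun (hp5 : 5 ≤ p) (hs : 0 < s) (l : ℕ) :
    ∑ j ∈ Finset.Ioc 0 (p ^ s * (l + 1) - 1), hfun p s j = 0 := by
  have hps : 1 ≤ p ^ s := Nat.one_le_pow _ _ (Fact.out : p.Prime).pos
  have hIoc_range : ∀ n : ℕ, 1 ≤ n →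
      ∑ j ∈ Finset.Ioc 0 (n - 1), hfun p s j = ∑ j ∈ Finset.range n, hfun p s j := by
    intro n hn
    have : Finset.range n = insert 0 (Finset.Ioc 0 (n - 1)) := by
      ext x
      simp only [Finset.mem_range, Finset.mem_insert, Finset.mem_Ioc]
      omega
    rw [this, Finset.sum_insert (by simp)]
    have h0 : hfun p s 0 = 0 := by simp [hfun]
    rw [h0, zero_add]
  induction l with
  | zero =>
    have h01 : p ^ s * (0 + 1) = p ^ s := by ring
    rw [h01, hIoc_range _ hps]
    exact sum_range_hfun p s hp5 hs
  | succ l ih =>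
    have h1 : (0 : ℕ) ≤ p ^ s * (l + 1) - 1 := Nat.zero_le _
    have h2 : p ^ s * (l + 1) - 1 ≤ p ^ s * (l + 1 + 1) - 1 := by
      have : p ^ s * (l + 1) ≤ p ^ s * (l + 1 + 1) := Nat.mul_le_mul_left _ (by omega)
      omega
    rw [← Finset.sum_Ioc_consecutive _ h1 h2, ih, zero_add]
    set c := p ^ s * (l + 1) with hc
    have hc1 : 1 ≤ c := le_trans hps (Nat.le_mul_of_pos_right _ (by omega))
    have hend : p ^ s * (l + 1 + 1) - 1 = c + p ^ s - 1 := by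
      have : p ^ s * (l + 1 + 1) = p ^ s * (l + 1) + p ^ s := by ring
      omega
    have hIccIco : Finset.Ioc (c - 1) (c + p ^ s - 1) = Finset.Ico c (c + p ^ s) := by
      ext x
      simp only [Finset.mem_Ioc, Finset.mem_Ico]
      omega
    have hc' : c - 1 = p ^ s * (l + 1) - 1 := rfl
    rw [hend, ← hc', hIccIco, Finset.sum_Ico_eq_sum_range]
    have hlen : c + p ^ s - c = p ^ s := by omega
    rw [hlen]
    have hpc : p ∣ c := dvd_mul_of_dvd_left (dvd_pow_self p hs.ne') _
    have hccast : ((c : ℕ) : ZMod (p ^ s)) = 0 := by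
      rw [hc, Nat.cast_mul, ZMod.natCast_self, zero_mul]
    have hshift : ∀ r : ℕ, hfun p s (c + r) = hfun p s r := by
      intro r
      unfold hfun
      have hdvd : p ∣ c + r ↔ p ∣ r := ⟨fun h => (Nat.dvd_add_right hpc).mp h,
        fun h => Dvd.dvd.add hpc h⟩
      have hcast : ((c + r : ℕ) : ZMod (p ^ s)) = ((r : ℕ) : ZMod (p ^ s)) := by
        push_cast [hccast]
        ring
      by_cases hr : p ∣ r
      · simp [hdvd.mpr hr, hr]
      · simp only [hcast]
        rw [if_neg (fun h => hr (hdvd.mp h)), if_neg hr]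
    rw [Finset.sum_congr rfl (fun r _ => hshift r)]
    exact sum_range_hfun p s hp5 hs

private lemma zmod_sum_eq_zero (hp5 : 5 ≤ p) (hs : 0 < s) (l : ℕ) :
    ∑ j ∈ (Finset.Icc 1 (p ^ s * l + p ^ s - 1)).filter (fun j => ¬ p ∣ j),
      Ring.inverse (((j : ZMod (p ^ s))) ^ 2) = 0 := by
  have hN : p ^ s * l + p ^ s - 1 = p ^ s * (l + 1) - 1 := by
    have : p ^ s * (l + 1) = p ^ s * l + p ^ s := by ring
    omega
  rw [hN, Finset.sum_filter]
  have hIcc : Finset.Icc 1 (p ^ s * (l + 1) - 1) = Finset.Ioc 0 (p ^ s * (l + 1) - 1) := by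
    ext x
    simp only [Finset.mem_Icc, Finset.mem_Ioc]
    omega
  rw [hIcc]
  have : ∀ j : ℕ, (if ¬ p ∣ j then Ring.inverse (((j : ZMod (p ^ s))) ^ 2) else 0)
      = hfun p s j := by
    intro j
    unfold hfun
    by_cases hd : p ∣ j <;> simp [hd]
  rw [Finset.sum_congr rfl (fun j _ => this j)]
  exact sum_Ioc_hfun p s hp5 hs l

end aux

theorem sum_inv_sq_up_to_mul_congruence (p : ℕ) [Fact p.Prime] (hp5 : 5 ≤ p)
    (s : ℕ) (hs : 0 < s) (l : ℕ) :
    ‖∑ j ∈ (Finset.Icc 1 (p ^ s * l + p ^ s - 1)).filter (fun j => ¬ p ∣ j),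
        ((j : ℚ_[p]) ^ 2)⁻¹‖ ≤ (p : ℝ) ^ (-(s : ℤ)) := by
  set A := (Finset.Icc 1 (p ^ s * l + p ^ s - 1)).filter (fun j => ¬ p ∣ j) with hA
  have hunit : ∀ j ∈ A, IsUnit ((j : ℤ_[p]) ^ 2) := by
    intro j hj
    have hjd : ¬ p ∣ j := (Finset.mem_filter.mp hj).2
    have h1 : ‖((j : ℤ) : ℤ_[p])‖ = 1 := by
      by_contra h
      have hle : ‖((j : ℤ) : ℤ_[p])‖ ≤ 1 := PadicInt.norm_le_one _
      have hlt : ‖((j : ℤ) : ℤ_[p])‖ < 1 := lt_of_le_of_ne hle h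
      rw [PadicInt.norm_int_lt_one_iff_dvd] at hlt
      exact hjd (Int.ofNat_dvd.mp hlt)
    have : IsUnit ((j : ℤ_[p])) := by
      rw [PadicInt.isUnit_iff]
      rw [show ((j : ℤ_[p])) = (((j : ℤ)) : ℤ_[p]) by push_cast; ring]
      exact h1
    exact this.pow 2
  have hterm : ∀ j ∈ A, ((j : ℚ_[p]) ^ 2)⁻¹
      = ((Ring.inverse ((j : ℤ_[p]) ^ 2) : ℤ_[p]) : ℚ_[p]) := by
    intro j hj
    obtain ⟨u, hu⟩ := hunit j hj
    rw [← hu, Ring.inverse_unit]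
    have hval : ((j : ℚ_[p]) ^ 2) = (((u : ℤ_[p]) : ℚ_[p])) := by
      rw [hu]; push_cast; ring
    rw [hval]
    symm
    apply eq_inv_of_mul_eq_one_left
    rw [← PadicInt.coe_mul, Units.inv_mul]
    simp
  rw [Finset.sum_congr rfl hterm]
  set T : ℤ_[p] := ∑ j ∈ A, Ring.inverse ((j : ℤ_[p]) ^ 2) with hT
  have hsum : ∑ j ∈ A, ((Ring.inverse ((j : ℤ_[p]) ^ 2) : ℤ_[p]) : ℚ_[p]) = ((T : ℤ_[p]) : ℚ_[p]) := by
    rw [hT]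
    exact (map_sum (PadicInt.Coe.ringHom) _ _).symm
  rw [hsum, PadicInt.padic_norm_e_of_padicInt]
  rw [PadicInt.norm_le_pow_iff_mem_span_pow]
  have hker : T ∈ RingHom.ker (PadicInt.toZModPow s : ℤ_[p] →+* ZMod (p ^ s)) := by
    rw [RingHom.mem_ker, hT, map_sum]
    have hmap : ∀ j ∈ A, (PadicInt.toZModPow s) (Ring.inverse ((j : ℤ_[p]) ^ 2))
        = Ring.inverse (((j : ZMod (p ^ s))) ^ 2) := by
      intro j hj
      rw [ringHom_map_ring_inverse _ (hunit j hj)]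
      congr 1
      rw [map_pow, map_natCast]
    rw [Finset.sum_congr rfl hmap]
    exact zmod_sum_eq_zero p s hp5 hs l
  rw [PadicInt.ker_toZModPow] at hker
  exact hker
end
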